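/- arXiv:1606.03872 — 6 statements merged into one kernel-verified Lean document; each statement's English description precedes it below -/
import Mathlib

section
/- For every integer n with 2 ≤ k ≤ n, the generalized k-connectivity of the complete graph K_n equals n − ⌈k/2⌉. -/
open SimpleGraph

/-- `T` is an `S`-tree in `G`: a subtree of `G` containing all vertices of `S`. -/
def IsSTree {V : Type*} (G : SimpleGraph V) (S : Set V) (T : G.Subgraph) : Prop :=
  T.coe.IsTree ∧ S ⊆ T.verts

/-- A family of subgraphs is internally disjoint with respect to `S`:
pairwise edge-disjoint, and pairwise vertex intersection exactly `S`. -/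
def InternallyDisjoint {V ι : Type*} {G : SimpleGraph V} (S : Set V)
    (T : ι → G.Subgraph) : Prop :=
  ∀ i j, i ≠ j → (T i).edgeSet ∩ (T j).edgeSet = ∅ ∧ (T i).verts ∩ (T j).verts = S

/-- `G` has `ℓ` internally disjoint `S`-trees. -/
def HasSTrees {V : Type*} (G : SimpleGraph V) (S : Set V) (ℓ : ℕ) : Prop :=
  ∃ T : Fin ℓ → G.Subgraph, (∀ i, IsSTree G S (T i)) ∧ InternallyDisjoint S T

lemma acyclic_of_unique_parent {V : Type*} (G : SimpleGraph V) (ht : V → ℕ)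
    (hne : ∀ a b, G.Adj a b → ht a ≠ ht b)
    (huniq : ∀ a b c, G.Adj a b → G.Adj a c → ht b < ht a → ht c < ht a → b = c) :
    G.IsAcyclic := by
  classical
  intro u c hc
  have hsupp : c.support ≠ [] := by simp [SimpleGraph.Walk.support_ne_nil]
  obtain ⟨M, hM⟩ : ∃ M, M ∈ c.support.argmax ht := by
    cases h : c.support.argmax ht with
    | none => exact absurd (List.argmax_eq_none.mp h) hsupp
    | some m => exact ⟨m, rfl⟩
  have hMmem : M ∈ c.support := List.argmax_mem hM
  have hMmax : ∀ a ∈ c.support, ht a ≤ ht M := fun a ha => List.le_of_mem_argmax ha hM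
  set c' := c.rotate M hMmem with hc'
  have hc'cyc : c'.IsCycle := hc.rotate hMmem
  have hsub : ∀ a ∈ c'.support, a ∈ c.support := by
    intro a ha
    rw [SimpleGraph.Walk.support_eq_cons] at ha
    rcases List.mem_cons.mp ha with rfl | ha
    · exact hMmem
    · have := (SimpleGraph.Walk.support_rotate c M hMmem).mem_iff.mp ha
      rw [SimpleGraph.Walk.support_eq_cons]
      exact List.mem_cons_of_mem _ this
  clear_value c'
  clear hc hc'
  cases c' with
  | nil => exact hc'cyc.not_of_nil
  | cons hadj p =>
    rename_i v
    rw [SimpleGraph.Walk.cons_isCycle_iff] at hc'cyc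
    obtain ⟨hpath, hnotmem⟩ := hc'cyc
    have hvM : v ≠ M := fun h => G.irrefl (h ▸ hadj)
    cases hrev : p.reverse with
    | nil =>
      have hlen : p.length = 0 := by
        have := congrArg SimpleGraph.Walk.length hrev
        simpa using this
      cases p with
      | nil => exact hvM rfl
      | cons _ _ => simp at hlen
    | cons hadj2 q =>
      rename_i w
      have hwmem : w ∈ p.support := by
        have : w ∈ p.reverse.support := by
          rw [hrev]; simp [SimpleGraph.Walk.support_cons]
        rwa [SimpleGraph.Walk.support_reverse, List.mem_reverse] at this
      have hedge : s(M, w) ∈ p.edges := by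
        have : s(M, w) ∈ p.reverse.edges := by
          rw [hrev]; simp
        rwa [SimpleGraph.Walk.edges_reverse, List.mem_reverse] at this
      have hvw : v ≠ w := by
        rintro rfl
        exact hnotmem hedge
      have hvsupp : v ∈ c.support := hsub v (by simp [SimpleGraph.Walk.support_cons])
      have hwsupp : w ∈ c.support := hsub w (by
        rw [SimpleGraph.Walk.support_cons]
        exact List.mem_cons_of_mem _ hwmem)
      have h1 : ht v < ht M := lt_of_le_of_ne (hMmax v hvsupp) (hne M v hadj).symm
      have h2 : ht w < ht M := lt_of_le_of_ne (hMmax w hwsupp) (hne M w hadj2).symm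
      exact hvw (huniq M v w hadj hadj2 h1 h2)


section PSub
variable {V : Type*}

/-- Subgraph of `⊤` built from vertices `f 0, …, f (m-1)` where vertex `f j` (for `j ≥ 1`)
is attached to its parent `f (p j)` with `p j < j`. -/
def psub (f : ℕ → V) (p : ℕ → ℕ) (m : ℕ) (hf : Set.InjOn f (Set.Iio m))
    (hp : ∀ j, 0 < j → j < m → p j < j) : (⊤ : SimpleGraph V).Subgraph where
  verts := f '' Set.Iio m
  Adj a b := ∃ j, 0 < j ∧ j < m ∧ ((a = f (p j) ∧ b = f j) ∨ (b = f (p j) ∧ a = f j))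
  adj_sub := by
    rintro a b ⟨j, hj0, hjm, (⟨rfl, rfl⟩ | ⟨rfl, rfl⟩)⟩ <;>
      simp only [SimpleGraph.top_adj, ne_eq] <;> intro h
    · have := hf (Set.mem_Iio.mpr (lt_trans (hp j hj0 hjm) hjm)) (Set.mem_Iio.mpr hjm) h
      have h2 := hp j hj0 hjm; omega
    · have := hf (Set.mem_Iio.mpr hjm) (Set.mem_Iio.mpr (lt_trans (hp j hj0 hjm) hjm)) h
      have h2 := hp j hj0 hjm; omega

  edge_vert := by
    rintro a b ⟨j, hj0, hjm, (⟨rfl, _⟩ | ⟨_, rfl⟩)⟩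
    · exact ⟨p j, lt_trans (hp j hj0 hjm) hjm, rfl⟩
    · exact ⟨j, hjm, rfl⟩
  symm := by
    refine ⟨?_⟩
    rintro a b ⟨j, hj0, hjm, h⟩
    exact ⟨j, hj0, hjm, h.symm⟩

variable {f : ℕ → V} {p : ℕ → ℕ} {m : ℕ} {hf : Set.InjOn f (Set.Iio m)}
    {hp : ∀ j, 0 < j → j < m → p j < j}

lemma psub_isTree (hm : 0 < m) : (psub f p m hf hp).coe.IsTree := by
  classical
  set H := psub f p m hf hp with hH
  have hex : ∀ x : H.verts, ∃ j, j < m ∧ f j = ↑x := by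
    rintro ⟨x, ⟨j, hj, rfl⟩⟩
    exact ⟨j, hj, rfl⟩
  choose idx hidx1 hidx2 using hex
  have huq : ∀ (x : H.verts) (j : ℕ), j < m → f j = ↑x → idx x = j := by
    intro x j hj hx
    exact hf (Set.mem_Iio.mpr (hidx1 x)) (Set.mem_Iio.mpr hj) (by rw [hidx2 x, hx])
  have hadj_iff : ∀ a b : H.verts, H.coe.Adj a b ↔ H.Adj ↑a ↑b := fun a b => Iff.rfl
  refine ⟨?_, ?_⟩
  · -- connected
    have hmem : ∀ j, j < m → f j ∈ H.verts := fun j hj => ⟨j, hj, rfl⟩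
    have key : ∀ j (hj : j < m),
        H.coe.Reachable ⟨f j, hmem j hj⟩ ⟨f 0, hmem 0 hm⟩ := by
      intro j
      induction j using Nat.strong_induction_on with
      | _ j ih =>
        intro hj
        rcases Nat.eq_zero_or_pos j with rfl | hj0
        · exact Reachable.refl _
        · have hpj : p j < j := hp j hj0 hj
          have hadj : H.coe.Adj ⟨f j, hmem j hj⟩ ⟨f (p j), hmem (p j) (lt_trans hpj hj)⟩ := by
            rw [hadj_iff]
            exact ⟨j, hj0, hj, Or.inr ⟨rfl, rfl⟩⟩
          exact (hadj.reachable).trans (ih (p j) hpj (lt_trans hpj hj))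
    haveI : Nonempty H.verts := ⟨⟨f 0, hmem 0 hm⟩⟩
    refine Connected.mk ?_
    intro u v
    have hu : u = ⟨f (idx u), hmem _ (hidx1 u)⟩ := Subtype.ext (hidx2 u).symm
    have hv : v = ⟨f (idx v), hmem _ (hidx1 v)⟩ := Subtype.ext (hidx2 v).symm
    rw [hu, hv]
    exact (key _ (hidx1 u)).trans (key _ (hidx1 v)).symm
  · -- acyclic
    apply acyclic_of_unique_parent _ idx
    · intro a b hab
      rw [hadj_iff] at hab
      have hab' := hab
      obtain ⟨j, hj0, hjm, (⟨ha, hb⟩ | ⟨hb, ha⟩)⟩ := hab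
      · rw [huq a _ (lt_trans (hp j hj0 hjm) hjm) ha.symm, huq b _ hjm hb.symm]
        have := hp j hj0 hjm; omega
      · rw [huq a _ hjm ha.symm, huq b _ (lt_trans (hp j hj0 hjm) hjm) hb.symm]
        have := hp j hj0 hjm; omega
    · intro a b c hab hac hba hca
      rw [hadj_iff] at hab hac
      obtain ⟨j, hj0, hjm, (⟨ha, hb⟩ | ⟨hb, ha⟩)⟩ := hab
      · rw [huq a _ (lt_trans (hp j hj0 hjm) hjm) ha.symm, huq b _ hjm hb.symm] at hba
        exact absurd hba (by have := hp j hj0 hjm; omega)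
      · obtain ⟨j', hj0', hjm', (⟨ha', hc⟩ | ⟨hc, ha'⟩)⟩ := hac
        · rw [huq a _ (lt_trans (hp j' hj0' hjm') hjm') ha'.symm, huq c _ hjm' hc.symm] at hca
          exact absurd hca (by have := hp j' hj0' hjm'; omega)
        · have hjj : j = j' := hf (Set.mem_Iio.mpr hjm) (Set.mem_Iio.mpr hjm')
            (by rw [← ha, ← ha'])
          subst hjj
          exact Subtype.ext (by rw [hb, hc])

lemma psub_edge {e : Sym2 V} (he : e ∈ (psub f p m hf hp).edgeSet) :
    ∃ j, 0 < j ∧ j < m ∧ e = s(f (p j), f j) := by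
  induction e with
  | _ a b =>
    rw [Subgraph.mem_edgeSet] at he
    obtain ⟨j, hj0, hjm, (⟨rfl, rfl⟩ | ⟨rfl, rfl⟩)⟩ := he
    · exact ⟨j, hj0, hjm, rfl⟩
    · exact ⟨j, hj0, hjm, Sym2.eq_swap⟩

end PSub

lemma tree_edge_ncard {W : Type*} [Fintype W] {G : SimpleGraph W} (T : Subgraph G)
    (h : T.coe.IsTree) : T.edgeSet.ncard + 1 = T.verts.ncard := by
  classical
  haveI : Fintype ↥T.verts := (Set.toFinite _).fintype
  haveI : Fintype ↥T.coe.edgeSet := (Set.toFinite _).fintype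
  have hcard := h.card_edgeFinset
  have h1 : T.edgeSet.ncard = T.coe.edgeSet.ncard := by
    rw [← Subgraph.image_coe_edgeSet_coe]
    exact Set.ncard_image_of_injective _ (Sym2.map.injective Subtype.val_injective)
  have h2 : T.coe.edgeSet.ncard = T.coe.edgeFinset.card := by
    rw [SimpleGraph.edgeFinset, Set.toFinset_card, Set.ncard_eq_toFinset_card']
    simp
  have h3 : T.verts.ncard = Fintype.card ↥T.verts := by
    rw [Set.ncard_eq_toFinset_card']
    simp [Set.toFinset_card]
  omega

section Zig

/-- Zigzag offset: 0, 1, -1, 2, -2, … -/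
def zig (k : ℕ) (j : ℕ) : ZMod k :=
  if Even j then -((j / 2 : ℕ) : ZMod k) else ((j + 1) / 2 : ℕ)

lemma natCast_inj_of_lt {k a b : ℕ} [NeZero k] (ha : a < k) (hb : b < k)
    (h : (a : ZMod k) = b) : a = b := by
  have := congrArg ZMod.val h
  rwa [ZMod.val_cast_of_lt ha, ZMod.val_cast_of_lt hb] at this

lemma zig_injOn {k : ℕ} [NeZero k] (hk : 1 ≤ k) : Set.InjOn (zig k) (Set.Iio k) := by
  intro a ha b hb hab
  simp only [Set.mem_Iio] at ha hb
  unfold zig at hab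
  by_cases hae : Even a <;> by_cases hbe : Even b <;> simp [hae, hbe] at hab
  · have := natCast_inj_of_lt (by omega : a / 2 < k) (by omega : b / 2 < k) hab
    rcases hae with ⟨x, hx⟩; rcases hbe with ⟨y, hy⟩; omega
  · exfalso
    have hz : (((a / 2) + ((b + 1) / 2) : ℕ) : ZMod k) = 0 := by
      push_cast
      rw [← hab]; ring
    have hdvd := (ZMod.natCast_eq_zero_iff _ _).mp hz
    have hlt : (a / 2) + ((b + 1) / 2) < k := by omega
    have hs := Nat.eq_zero_of_dvd_of_lt hdvd hlt
    have hb1 : b % 2 = 1 := Nat.not_even_iff.mp hbe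
    omega
  · exfalso
    have hz : (((b / 2) + ((a + 1) / 2) : ℕ) : ZMod k) = 0 := by
      push_cast
      rw [hab]; ring
    have hdvd := (ZMod.natCast_eq_zero_iff _ _).mp hz
    have hlt : (b / 2) + ((a + 1) / 2) < k := by omega
    have hs := Nat.eq_zero_of_dvd_of_lt hdvd hlt
    have ha1 : a % 2 = 1 := Nat.not_even_iff.mp hae
    omega
  · have := natCast_inj_of_lt (by omega : (a + 1) / 2 < k) (by omega : (b + 1) / 2 < k) hab
    have ha1 : a % 2 = 1 := Nat.not_even_iff.mp hae
    have hb1 : b % 2 = 1 := Nat.not_even_iff.mp hbe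
    omega

lemma zig_add {k : ℕ} (j : ℕ) (hj : 0 < j) :
    zig k (j - 1) + zig k j = ((j % 2 : ℕ) : ZMod k) := by
  unfold zig
  by_cases hje : Even j
  · have hj2 : j % 2 = 0 := Nat.even_iff.mp hje
    have h1 : ¬ Even (j - 1) := by rw [Nat.even_iff]; omega
    simp only [if_neg h1, if_pos hje]
    have e1 : (j - 1 + 1) / 2 = j / 2 := by omega
    rw [e1, hj2]
    push_cast
    ring
  · have hj2 : j % 2 = 1 := Nat.not_even_iff.mp hje
    have h1 : Even (j - 1) := by rw [Nat.even_iff]; omega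
    simp only [if_pos h1, if_neg hje]
    have h2 : (j + 1) / 2 = (j - 1) / 2 + 1 := by omega
    rw [h2, hj2]
    push_cast
    ring

end Zig

lemma upper_bound (n k : ℕ) (hk2 : 2 ≤ k) (hkn : k ≤ n) (S : Finset (Fin n))
    (hS : S.card = k) : ¬ HasSTrees (⊤ : SimpleGraph (Fin n)) (S : Set (Fin n))
      (n - (k + 1) / 2 + 1) := by
  classical
  rintro ⟨T, hTree, hDisj⟩
  obtain ⟨m, rfl⟩ : ∃ m, k = m + 2 := ⟨k - 2, by omega⟩
  set I : Finset (Fin (n - (m + 2 + 1) / 2 + 1)) :=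
    Finset.univ.filter (fun i => (T i).verts = ↑S) with hI
  have houtsub : ∀ i ∈ Iᶜ, ∃ v, v ∈ (T i).verts ∧ v ∉ (S : Set (Fin n)) := by
    intro i hi
    rw [Finset.mem_compl, hI, Finset.mem_filter] at hi
    have hne : (T i).verts ≠ ↑S := fun h => hi ⟨Finset.mem_univ _, h⟩
    have hsub : (S : Set (Fin n)) ⊆ (T i).verts := (hTree i).2
    by_contra hcon
    push_neg at hcon
    exact hne (Set.Subset.antisymm (fun v hv => by
      by_contra hvs
      exact hvs (hcon v hv)) hsub)
  choose g hg1 hg2 using houtsub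
  have hIc : Iᶜ.card ≤ n - (m + 2) := by
    have hSc : Sᶜ.card = n - (m + 2) := by
      rw [Finset.card_compl, Fintype.card_fin, hS]
    have hle : Iᶜ.card ≤ Sᶜ.card := by
      apply Finset.card_le_card_of_injOn
        (fun i => if h : i ∈ Iᶜ then g i h else ⟨0, by omega⟩)
      · intro i hi
        have hi' : i ∈ Iᶜ := hi
        simp only [Finset.mem_coe]
        rw [dif_pos hi', Finset.mem_compl]
        intro hmem
        exact hg2 i hi' (by exact_mod_cast hmem)
      · intro i hi j hj hij
        have hi' : i ∈ Iᶜ := hi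
        have hj' : j ∈ Iᶜ := hj
        simp only [dif_pos hi', dif_pos hj'] at hij
        by_contra hne
        have hd := (hDisj i j hne).2
        have hmm : g i hi' ∈ (T i).verts ∩ (T j).verts := ⟨hg1 i hi', hij ▸ hg1 j hj'⟩
        rw [hd] at hmm
        exact hg2 i hi' hmm
    omega
  -- inside trees: at most (m+2)/2 of them
  have hIcard : I.card ≤ (m + 2) / 2 := by
    set E : Fin (n - (m + 2 + 1) / 2 + 1) → Finset (Sym2 (Fin n)) :=
      fun i => ((T i).edgeSet.toFinite).toFinset with hE
    have hcardE : ∀ i ∈ I, (E i).card = m + 1 := by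
      intro i hi
      rw [hI, Finset.mem_filter] at hi
      have htr := tree_edge_ncard (T i) (hTree i).1
      rw [hi.2, Set.ncard_coe_finset, hS] at htr
      have hEi : (E i).card = (T i).edgeSet.ncard :=
        (Set.ncard_eq_toFinset_card _ ((T i).edgeSet.toFinite)).symm
      omega
    set A : Finset (Sym2 (Fin n)) :=
      S.sym2.filter (fun e => ¬ e.IsDiag) with hA
    have hsubA : ∀ i ∈ I, E i ⊆ A := by
      intro i hi e he
      rw [hI, Finset.mem_filter] at hi
      rw [hE, Set.Finite.mem_toFinset] at he
      rw [hA, Finset.mem_filter, Finset.mem_sym2_iff]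
      induction e with
      | _ a b =>
        rw [Subgraph.mem_edgeSet] at he
        refine ⟨?_, ?_⟩
        · intro y hy
          rw [Sym2.mem_iff] at hy
          rcases hy with rfl | rfl
          · have := (T i).edge_vert he
            rw [hi.2] at this; exact_mod_cast this
          · have := (T i).edge_vert he.symm
            rw [hi.2] at this; exact_mod_cast this
        · have := (T i).adj_sub he
          simp only [SimpleGraph.top_adj] at this
          simpa using this
    have hdisjE : ∀ i ∈ I, ∀ j ∈ I, i ≠ j → Disjoint (E i) (E j) := by
      intro i _ j _ hij
      rw [Finset.disjoint_left]
      intro e hei hej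
      rw [hE, Set.Finite.mem_toFinset] at hei hej
      have hmm : e ∈ (T i).edgeSet ∩ (T j).edgeSet := ⟨hei, hej⟩
      rw [(hDisj i j hij).1] at hmm
      exact hmm
    have hbiU : (I.biUnion E).card = I.card * (m + 1) := by
      rw [Finset.card_biUnion hdisjE]
      rw [Finset.sum_congr rfl hcardE, Finset.sum_const, smul_eq_mul]
    have hAcard : A.card + (m + 2) ≤ (m + 3) * (m + 2) / 2 := by
      have hD : (S.image (fun x => s(x, x))).card = m + 2 := by
        rw [Finset.card_image_of_injective _ (fun a b hab => by
          simpa using (Sym2.eq_iff.mp hab).elim (fun h => h.1) (fun h => h.1)), hS]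
      have hDsub : S.image (fun x => s(x, x)) ⊆ S.sym2 := by
        intro e he
        rw [Finset.mem_image] at he
        obtain ⟨x, hx, rfl⟩ := he
        rw [Finset.mem_sym2_iff]
        intro y hy
        rw [Sym2.mem_iff] at hy
        rcases hy with rfl | rfl <;> exact hx
      have hdisj : Disjoint A (S.image (fun x => s(x, x))) := by
        rw [Finset.disjoint_left]
        intro e heA heD
        rw [hA, Finset.mem_filter] at heA
        rw [Finset.mem_image] at heD
        obtain ⟨x, _, rfl⟩ := heD
        exact heA.2 (Sym2.mk_isDiag_iff.mpr rfl)
      have hunion : A ∪ S.image (fun x => s(x, x)) ⊆ S.sym2 :=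
        Finset.union_subset (by rw [hA]; exact Finset.filter_subset _ _) hDsub
      have hcu := Finset.card_le_card hunion
      rw [Finset.card_union_of_disjoint hdisj, hD, Finset.card_sym2, hS] at hcu
      have hch : (m + 2 + 1).choose 2 = (m + 3) * (m + 2) / 2 := by
        rw [Nat.choose_two_right]
        congr 1
      omega
    have hAcard2 : A.card ≤ (m + 2) * (m + 1) / 2 := by
      have hq : (m + 3) * (m + 2) = (m + 2) * (m + 1) + 2 * (m + 2) := by ring
      omega
    have hkey : I.card * (m + 1) ≤ (m + 2) * (m + 1) / 2 := by
      have h1 : (I.biUnion E).card ≤ A.card := Finset.card_le_card (by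
        intro e he
        rw [Finset.mem_biUnion] at he
        obtain ⟨i, hi, hei⟩ := he
        exact hsubA i hi hei)
      omega
    have heven : 2 ∣ (m + 2) * (m + 1) := by
      have := Nat.even_mul_succ_self (m + 1)
      have h2 : (m + 1) * (m + 1 + 1) = (m + 2) * (m + 1) := by ring
      rw [h2] at this
      exact this.two_dvd
    have h5 : (m + 2) * (m + 1) / 2 * 2 = (m + 2) * (m + 1) :=
      Nat.div_mul_cancel heven
    have h6 : 2 * I.card * (m + 1) ≤ (m + 2) * (m + 1) := by
      calc 2 * I.card * (m + 1) = 2 * (I.card * (m + 1)) := by ring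
        _ ≤ 2 * ((m + 2) * (m + 1) / 2) := by omega
        _ ≤ (m + 2) * (m + 1) := by omega
    have h7 : 2 * I.card ≤ m + 2 := Nat.le_of_mul_le_mul_right h6 (by omega)
    omega
  have htotal : I.card + Iᶜ.card = n - (m + 2 + 1) / 2 + 1 := by
    rw [Finset.card_add_card_compl, Fintype.card_fin]
  omega

lemma lower_bound (n k : ℕ) (hk2 : 2 ≤ k) (hkn : k ≤ n) (S : Finset (Fin n))
    (hS : S.card = k) :
    HasSTrees (⊤ : SimpleGraph (Fin n)) (S : Set (Fin n)) (n - (k + 1) / 2) := by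
  classical
  haveI : NeZero k := ⟨by omega⟩
  have hn0 : 0 < n := by omega
  set eS := S.orderEmbOfFin hS with heSdef
  have heS : ∀ i, eS i ∈ S := fun i => Finset.orderEmbOfFin_mem S hS i
  have heSrange : ∀ x ∈ S, ∃ a : Fin k, eS a = x := by
    intro x hx
    have : x ∈ Set.range eS := by
      rw [heSdef, Finset.range_orderEmbOfFin]
      exact_mod_cast hx
    exact this
  have hSc : Sᶜ.card = n - k := by rw [Finset.card_compl, Fintype.card_fin, hS]
  set out := Sᶜ.orderEmbOfFin hSc with houtdef
  have hout : ∀ i, out i ∉ S := fun i => by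
    have := Finset.orderEmbOfFin_mem Sᶜ hSc i
    rwa [Finset.mem_compl] at this
  -- ## stars
  set fStar : Fin (n - k) → ℕ → Fin n := fun i j =>
    if j = 0 then out i else eS ⟨(j - 1) % k, Nat.mod_lt _ (by omega)⟩ with hfStar
  have hfStarInj : ∀ i, Set.InjOn (fStar i) (Set.Iio (k + 1)) := by
    intro i a ha b hb hab
    simp only [Set.mem_Iio] at ha hb
    by_cases ha0 : a = 0 <;> by_cases hb0 : b = 0
    · omega
    · subst ha0
      have h := hab
      simp only [hfStar, if_neg hb0, if_pos rfl] at h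
      exact absurd (by rw [h]; exact heS _) (hout i)
    · subst hb0
      have h := hab.symm
      simp only [hfStar, if_neg ha0, if_pos rfl] at h
      exact absurd (by rw [h]; exact heS _) (hout i)
    · have h := hab
      simp only [hfStar, if_neg ha0, if_neg hb0] at h
      have h2 : (a - 1) % k = (b - 1) % k := congrArg Fin.val (eS.injective h)
      rw [Nat.mod_eq_of_lt (by omega), Nat.mod_eq_of_lt (by omega)] at h2
      omega
  set star : Fin (n - k) → (⊤ : SimpleGraph (Fin n)).Subgraph := fun i =>
    psub (fStar i) (fun _ => 0) (k + 1) (hfStarInj i) (fun j hj _ => hj) with hstar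
  have hstarVerts : ∀ i, (star i).verts = insert (out i) (S : Set (Fin n)) := by
    intro i
    apply Set.Subset.antisymm
    · rintro x ⟨j, _, rfl⟩
      by_cases hj0 : j = 0
      · simp [hfStar, hj0]
      · right
        simp only [hfStar, if_neg hj0]
        exact_mod_cast heS _
    · rintro x (rfl | hx)
      · exact ⟨0, Set.mem_Iio.mpr (by omega), by simp [hfStar]⟩
      · obtain ⟨a, rfl⟩ := heSrange x hx
        have halt := a.isLt
        refine ⟨(a : ℕ) + 1, by simp only [Set.mem_Iio]; omega, ?_⟩
        simp only [hfStar, if_neg (Nat.succ_ne_zero _), Nat.add_sub_cancel]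
        congr 1
        exact Fin.ext (by simp [Nat.mod_eq_of_lt halt])
  have hstarEdge : ∀ i e, e ∈ (star i).edgeSet → ∃ x ∈ S, e = s(out i, x) := by
    intro i e he
    rw [hstar] at he
    obtain ⟨j, hj0, hjm, rfl⟩ := psub_edge he
    refine ⟨fStar i j, ?_, ?_⟩
    · simp only [hfStar, if_neg (by omega : ¬ j = 0)]
      exact heS _
    · congr 1
  -- ## paths
  set z : Fin (k / 2) → ℕ → ZMod k := fun i j => ((i : ℕ) : ZMod k) + zig k j with hz
  set fPath : Fin (k / 2) → ℕ → Fin n := fun i j =>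
    eS ⟨(z i j).val, ZMod.val_lt _⟩ with hfPath
  have hfPinj : ∀ i a b, fPath i a = fPath i b → z i a = z i b := by
    intro i a b hab
    rw [hfPath] at hab
    have := eS.injective hab
    rw [Fin.mk.injEq] at this
    exact ZMod.val_injective k this
  have hfPinj2 : ∀ i i' a b, fPath i a = fPath i' b → z i a = z i' b := by
    intro i i' a b hab
    rw [hfPath] at hab
    have := eS.injective hab
    rw [Fin.mk.injEq] at this
    exact ZMod.val_injective k this
  have hfPathInj : ∀ i, Set.InjOn (fPath i) (Set.Iio k) := by
    intro i a ha b hb hab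
    have hzz := hfPinj i a b hab
    rw [hz] at hzz
    simp only at hzz
    have := zig_injOn (by omega : 1 ≤ k) ha hb (by
      have := add_left_cancel hzz
      exact this)
    exact this
  set path : Fin (k / 2) → (⊤ : SimpleGraph (Fin n)).Subgraph := fun i =>
    psub (fPath i) (fun j => j - 1) k (hfPathInj i) (fun j hj hjk => by show j - 1 < j; omega) with hpath
  have hpathVerts : ∀ i, (path i).verts = (S : Set (Fin n)) := by
    intro i
    have hsub : (path i).verts ⊆ (S : Set (Fin n)) := by
      rintro x ⟨j, _, rfl⟩
      exact_mod_cast heS _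
    have h1 : (path i).verts.ncard = (Set.Iio k).ncard :=
      Set.ncard_image_of_injOn (hfPathInj i)
    have h2 : (Set.Iio k : Set ℕ).ncard = k := by
      rw [← Finset.coe_range, Set.ncard_coe_finset, Finset.card_range]
    have hle : (S : Set (Fin n)).ncard ≤ (path i).verts.ncard := by
      rw [h1, h2, Set.ncard_coe_finset, hS]
    exact Set.eq_of_subset_of_ncard_le hsub hle (S.finite_toSet)
  have hsum : ∀ (i : Fin (k / 2)) j, 0 < j →
      z i (j - 1) + z i j = ((2 * (i : ℕ) + j % 2 : ℕ) : ZMod k) := by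
    intro i j hj
    rw [hz]
    simp only
    rw [add_add_add_comm, zig_add j hj]
    push_cast
    ring
  have hpathEdgeSum : ∀ (i : Fin (k / 2)) e, e ∈ (path i).edgeSet →
      (∃ u ∈ S, ∃ v ∈ S, e = s(u, v)) ∧
      ∃ c < 2, ∀ (i' : Fin (k / 2)) u v, e = s(fPath i' u, fPath i' v) →
        z i' u + z i' v = ((2 * (i : ℕ) + c : ℕ) : ZMod k) := by
    intro i e he
    rw [hpath] at he
    obtain ⟨j, hj0, hjm, rfl⟩ := psub_edge he
    refine ⟨⟨_, by exact_mod_cast heS _, _, by exact_mod_cast heS _, rfl⟩,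
      j % 2, by omega, ?_⟩
    intro i' u v huv
    have hsum1 : z i (j - 1) + z i j = ((2 * (i : ℕ) + j % 2 : ℕ) : ZMod k) := hsum i j hj0
    rcases Sym2.eq_iff.mp huv with ⟨h1, h2⟩ | ⟨h1, h2⟩
    · rw [← hfPinj2 i i' _ _ h1, ← hfPinj2 i i' _ _ h2]
      exact hsum1
    · rw [← hfPinj2 i i' _ _ h2, ← hfPinj2 i i' _ _ h1, add_comm]
      exact hsum1
  -- ## disjointness of paths
  have hpathDisj : ∀ i i' : Fin (k / 2), i ≠ i' →
      (path i).edgeSet ∩ (path i').edgeSet = ∅ := by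
    intro i i' hii
    rw [Set.eq_empty_iff_forall_notMem]
    rintro e ⟨he1, he2⟩
    obtain ⟨_, c, hc, hkey⟩ := hpathEdgeSum i e he1
    obtain ⟨_, c', hc', hkey'⟩ := hpathEdgeSum i' e he2
    have he2' := he2
    rw [hpath] at he2'
    obtain ⟨j', hj0', hjm', hee⟩ := psub_edge he2'
    have q1 := hkey i' (j' - 1) j' hee
    have q2 := hkey' i' (j' - 1) j' hee
    have heq : ((2 * (i : ℕ) + c : ℕ) : ZMod k) = ((2 * (i' : ℕ) + c' : ℕ) : ZMod k) := by
      rw [← q1, ← q2]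
    have hi1 : 2 * (i : ℕ) + c < k := by have := i.isLt; omega
    have hi2 : 2 * (i' : ℕ) + c' < k := by have := i'.isLt; omega
    have := natCast_inj_of_lt hi1 hi2 heq
    exact hii (Fin.ext (by omega))
  -- ## assembly
  have hcount : n - (k + 1) / 2 = (n - k) + k / 2 := by omega
  rw [hcount]
  set tr : Fin (n - k) ⊕ Fin (k / 2) → (⊤ : SimpleGraph (Fin n)).Subgraph :=
    Sum.elim star path with htr
  refine ⟨fun i => tr (finSumFinEquiv.symm i), ?_, ?_⟩
  · intro i
    rcases hsplit : finSumFinEquiv.symm i with a | a <;>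
      simp only [htr, hsplit, Sum.elim_inl, Sum.elim_inr]
    · exact ⟨psub_isTree (by omega), by rw [hstarVerts]; exact Set.subset_insert _ _⟩
    · exact ⟨psub_isTree (by omega), by rw [hpathVerts]⟩
  · intro i j hij
    have hne : finSumFinEquiv.symm i ≠ finSumFinEquiv.symm j :=
      fun h => hij (finSumFinEquiv.symm.injective h)
    rcases hsi : finSumFinEquiv.symm i with a | a <;>
      rcases hsj : finSumFinEquiv.symm j with b | b <;>
      rw [hsi, hsj] at hne <;>
      simp only [htr, hsi, hsj, Sum.elim_inl, Sum.elim_inr]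
    · -- star a vs star b
      have hab : a ≠ b := fun h => hne (h ▸ rfl)
      constructor
      · rw [Set.eq_empty_iff_forall_notMem]
        rintro e ⟨he1, he2⟩
        obtain ⟨x, hx, rfl⟩ := hstarEdge a e he1
        obtain ⟨y, hy, hee⟩ := hstarEdge b _ he2
        rcases Sym2.eq_iff.mp hee with ⟨h1, _⟩ | ⟨h1, h2⟩
        · exact hab (out.injective h1 ▸ rfl)
        · exact hout b (h2 ▸ hx)
      · rw [hstarVerts, hstarVerts]
        ext x
        simp only [Set.mem_inter_iff, Set.mem_insert_iff]
        constructor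
        · rintro ⟨(rfl | h1), (h2 | h2)⟩
          · exact absurd (out.injective h2) hab
          · exact absurd h2 (hout a)
          · exact absurd (h2 ▸ h1) (hout b)
          · exact h1
        · intro hx
          exact ⟨Or.inr hx, Or.inr hx⟩
    · -- star a vs path b
      constructor
      · rw [Set.eq_empty_iff_forall_notMem]
        rintro e ⟨he1, he2⟩
        obtain ⟨x, hx, rfl⟩ := hstarEdge a e he1
        obtain ⟨⟨u, hu, v, hv, hee⟩, -⟩ := hpathEdgeSum b _ he2
        rcases Sym2.eq_iff.mp hee with ⟨h1, _⟩ | ⟨h1, _⟩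
        · exact hout a (h1 ▸ hu)
        · exact hout a (h1 ▸ hv)
      · rw [hstarVerts, hpathVerts]
        ext x
        simp only [Set.mem_inter_iff, Set.mem_insert_iff]
        constructor
        · rintro ⟨(rfl | h1), h2⟩
          · exact absurd h2 (hout a)
          · exact h1
        · intro hx
          exact ⟨Or.inr hx, hx⟩
    · -- path a vs star b
      constructor
      · rw [Set.eq_empty_iff_forall_notMem]
        rintro e ⟨he1, he2⟩
        obtain ⟨⟨u, hu, v, hv, hee⟩, -⟩ := hpathEdgeSum a _ he1
        obtain ⟨x, hx, rfl⟩ := hstarEdge b e he2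
        rcases Sym2.eq_iff.mp hee with ⟨h1, _⟩ | ⟨h1, _⟩
        · exact hout b (h1.symm ▸ hu)
        · exact hout b (h1.symm ▸ hv)
      · rw [hstarVerts, hpathVerts]
        ext x
        simp only [Set.mem_inter_iff, Set.mem_insert_iff]
        constructor
        · rintro ⟨h1, (rfl | h2)⟩
          · exact absurd h1 (hout b)
          · exact h1
        · intro hx
          exact ⟨hx, Or.inr hx⟩
    · -- path a vs path b
      have hab : a ≠ b := fun h => hne (h ▸ rfl)
      exact ⟨hpathDisj a b hab, by rw [hpathVerts, hpathVerts, Set.inter_self]⟩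

/-- The generalized `k`-connectivity of the complete graph `K_n` equals `n - ⌈k/2⌉`:
every `k`-set of vertices admits `n - ⌈k/2⌉` internally disjoint `S`-trees, and some
`k`-set admits no more. -/
theorem generalized_connectivity_complete (n k : ℕ) (hk2 : 2 ≤ k) (hkn : k ≤ n) :
    (∀ S : Finset (Fin n), S.card = k →
        HasSTrees (⊤ : SimpleGraph (Fin n)) (S : Set (Fin n)) (n - (k + 1) / 2)) ∧
    (∃ S : Finset (Fin n), S.card = k ∧
        ¬ HasSTrees (⊤ : SimpleGraph (Fin n)) (S : Set (Fin n)) (n - (k + 1) / 2 + 1)) := by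
  constructor
  · intro S hS
    exact lower_bound n k hk2 hkn S hS
  · obtain ⟨S, _, hScard⟩ := Finset.exists_subset_card_eq
      (show k ≤ (Finset.univ : Finset (Fin n)).card by rw [Finset.card_univ, Fintype.card_fin]; exact hkn)
    exact ⟨S, hScard, upper_bound n k hk2 hkn S hScard⟩
end

section
/- For every even integer n ≥ 2, the edge set of K_n can be partitioned into n/2 Hamiltonian paths. -/
open SimpleGraph

namespace HPD

variable {n : ℕ}

/-- cast a vertex into `ZMod n` -/
def c (u : Fin n) : ZMod n := ((u : ℕ) : ZMod n)

def d [NeZero n] (x : ZMod n) : Fin n := ⟨x.val, x.val_lt⟩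

lemma val_cast_self [NeZero n] (x : ZMod n) : ((x.val : ℕ) : ZMod n) = x := by
  apply ZMod.val_injective
  exact ZMod.val_cast_of_lt x.val_lt

lemma c_d [NeZero n] (x : ZMod n) : c (d x) = x := val_cast_self x

lemma c_inj : Function.Injective (c (n := n)) := by
  intro u v h
  have h2 : ((u : ℕ) : ZMod n).val = ((v : ℕ) : ZMod n).val := by
    simp only [c] at h; rw [h]
  rw [ZMod.val_cast_of_lt u.isLt, ZMod.val_cast_of_lt v.isLt] at h2
  exact Fin.ext h2

lemma d_c [NeZero n] (u : Fin n) : d (c u) = u := by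
  apply Fin.ext
  simp [d, c, ZMod.val_cast_of_lt u.isLt]

lemma d_eq_iff [NeZero n] (x : ZMod n) (u : Fin n) : d x = u ↔ x = c u := by
  constructor
  · rintro rfl; exact (c_d x).symm
  · rintro rfl; exact d_c u

/-- the zig-zag sequence 0, 1, -1, 2, -2, ... -/
def s (j : ℕ) : ZMod n := if Even j then -((j/2 : ℕ) : ZMod n) else ((j/2 + 1 : ℕ) : ZMod n)

lemma s_sum (j : ℕ) : s (n := n) j + s (j+1) = if Even j then 1 else 0 := by
  rcases Nat.even_or_odd j with hj | hj
  · have hj' := Nat.even_iff.mp hj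
    have h1 : ¬ Even (j+1) := by rw [Nat.even_iff]; omega
    have h2 : (j+1)/2 = j/2 := by omega
    rw [s, s, if_pos hj, if_neg h1, if_pos hj, h2]
    push_cast
    ring
  · have hj' := Nat.odd_iff.mp hj
    have h0 : ¬ Even j := by rw [Nat.even_iff]; omega
    have h1 : Even (j+1) := by rw [Nat.even_iff]; omega
    have h2 : (j+1)/2 = j/2 + 1 := by omega
    rw [s, s, if_neg h0, if_pos h1, if_neg h0, h2]
    push_cast
    ring

section Vals

variable [NeZero n]

lemma s_val_odd {j : ℕ} (hj : ¬ Even j) (hjn : j < n) : (s (n := n) j).val = j/2 + 1 := by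
  have hj' : j % 2 = 1 := by rw [Nat.even_iff] at hj; omega
  have h : j/2 + 1 < n := by omega
  rw [s, if_neg hj]
  exact ZMod.val_cast_of_lt h

lemma s_val_even {j : ℕ} (hj : Even j) (h0 : 0 < j) (hjn : j < n) :
    (s (n := n) j).val = n - j/2 := by
  have hj' : j % 2 = 0 := Nat.even_iff.mp hj
  have h2 : j / 2 < n := by omega
  have h3 : ((j/2 : ℕ) : ZMod n) ≠ 0 := by
    intro h
    have h4 := congrArg ZMod.val h
    rw [ZMod.val_cast_of_lt h2, ZMod.val_zero] at h4
    omega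
  rw [s, if_pos hj, ZMod.neg_val, if_neg h3, ZMod.val_cast_of_lt h2]

omit [NeZero n] in
lemma s_zero : s (n := n) 0 = 0 := by simp [s]

lemma s_val_spec {j : ℕ} (hjn : j < n) :
    (s (n := n) j).val = if j % 2 = 1 then j/2 + 1 else (if j = 0 then 0 else n - j/2) := by
  rcases Nat.even_or_odd j with hj | hj
  · have hj' := Nat.even_iff.mp hj
    rcases Nat.eq_zero_or_pos j with rfl | h0
    · simp [s_zero]
    · rw [s_val_even hj h0 hjn, if_neg (by omega), if_neg (by omega)]
  · have hj' := Nat.odd_iff.mp hj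
    rw [s_val_odd (by rw [Nat.even_iff]; omega) hjn, if_pos hj']

/-- `s` is injective on `[0, n)` when `n` is even. -/
lemma s_inj {m : ℕ} (hm : n = 2 * m) {j k : ℕ} (hj : j < n) (hk : k < n)
    (h : s (n := n) j = s k) : j = k := by
  have hval := congrArg ZMod.val h
  rw [s_val_spec hj, s_val_spec hk] at hval
  rcases Nat.even_or_odd j with hje | hjo <;> rcases Nat.even_or_odd k with hke | hko
  · have h1 := Nat.even_iff.mp hje; have h2 := Nat.even_iff.mp hke
    rw [if_neg (show ¬ j % 2 = 1 by omega), if_neg (show ¬ k % 2 = 1 by omega)] at hval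
    split at hval <;> split at hval <;> omega
  · have h1 := Nat.even_iff.mp hje; have h2 := Nat.odd_iff.mp hko
    rw [if_neg (show ¬ j % 2 = 1 by omega), if_pos (show k % 2 = 1 by omega)] at hval
    split at hval <;> omega
  · have h1 := Nat.odd_iff.mp hjo; have h2 := Nat.even_iff.mp hke
    rw [if_pos (show j % 2 = 1 by omega), if_neg (show ¬ k % 2 = 1 by omega)] at hval
    split at hval <;> omega
  · have h1 := Nat.odd_iff.mp hjo; have h2 := Nat.odd_iff.mp hko
    rw [if_pos (show j % 2 = 1 by omega), if_pos (show k % 2 = 1 by omega)] at hval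
    omega

end Vals

/-- the `i`-th Hamiltonian path subgraph: edges are pairs whose sum is `2i` or `2i+1`. -/
def P (n : ℕ) [NeZero n] (i : ZMod n) : (⊤ : SimpleGraph (Fin n)).Subgraph where
  verts := Set.univ
  Adj u v := u ≠ v ∧ (c u + c v = 2*i ∨ c u + c v = 2*i + 1)
  adj_sub h := by simpa using h.1
  edge_vert _ := Set.mem_univ _
  symm := by
    constructor
    intro u v h
    refine ⟨h.1.symm, ?_⟩
    rw [add_comm (c v) (c u)]
    exact h.2

lemma P_adj (n : ℕ) [NeZero n] (i : ZMod n) (u v : Fin n) :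
    (P n i).Adj u v ↔ u ≠ v ∧ (c u + c v = 2*i ∨ c u + c v = 2*i + 1) := Iff.rfl

section Ham

variable [NeZero n]

/-- the vertex sequence of path `i` -/
def g (i : ZMod n) : Fin n → Fin n := fun j => d (i + s (j : ℕ))

lemma g_inj {m : ℕ} (hm : n = 2 * m) (i : ZMod n) : Function.Injective (g (n := n) i) := by
  intro a b h
  unfold g at h
  rw [d_eq_iff, c_d] at h
  exact Fin.ext (s_inj hm a.isLt b.isLt (add_left_cancel h))

noncomputable def f {m : ℕ} (hm : n = 2 * m) (i : ZMod n) : Fin n ≃ Fin n :=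
  Equiv.ofBijective (g i) (Finite.injective_iff_bijective.mp (g_inj hm i))

lemma f_apply {m : ℕ} (hm : n = 2 * m) (i : ZMod n) (j : Fin n) :
    f hm i j = d (i + s (j : ℕ)) := rfl

/-- backward direction: consecutive pairs are adjacent in `P n i`. -/
lemma adj_of_consec {m : ℕ} (hm : n = 2 * m) (i : ZMod n) {a b : Fin n}
    (hab : (a : ℕ) + 1 = (b : ℕ)) :
    (P n i).Adj (f hm i a) (f hm i b) := by
  have hne : f hm i a ≠ f hm i b := by
    intro h
    have h2 : a = b := (f hm i).injective h
    rw [h2] at hab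
    omega
  refine ⟨hne, ?_⟩
  rw [f_apply, f_apply, c_d, c_d]
  have h3 : (i + s (a:ℕ)) + (i + s (b:ℕ)) = 2*i + (s (a:ℕ) + s ((a:ℕ)+1)) := by
    rw [hab]; ring
  rw [h3, s_sum]
  rcases Nat.even_or_odd (a : ℕ) with h | h
  · right; rw [if_pos h]
  · left; rw [if_neg (Nat.not_even_iff_odd.mpr h), add_zero]

/-- Case sum ≡ 0: given `x + y = 0` with `1 ≤ x.val ≤ m - 1`, find a consecutive pair
realizing `x, y`. -/
lemma helper0 {m : ℕ} (hm : n = 2 * m) {x y : ZMod n} (hxy : x + y = 0)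
    (h1 : 1 ≤ x.val) (h2 : x.val ≤ m - 1) :
    ∃ a b : Fin n, (a : ℕ) + 1 = (b : ℕ) ∧ s (n := n) (a : ℕ) = x ∧ s (b : ℕ) = y := by
  have hmn : m ≥ 2 := by have := x.val_lt; omega
  set k := x.val - 1 with hk
  refine ⟨⟨2*k+1, by omega⟩, ⟨2*k+2, by omega⟩, rfl, ?_, ?_⟩
  · have hne : ¬ Even (2*k+1) := by rw [Nat.even_iff]; omega
    rw [s, if_neg hne]
    have h3 : (2*k+1)/2 + 1 = x.val := by omega
    rw [h3, val_cast_self]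
  · have hev : Even (2*k+2) := ⟨k+1, by ring⟩
    rw [s, if_pos hev]
    have h3 : (2*k+2)/2 = x.val := by omega
    rw [h3, val_cast_self]
    linear_combination -hxy
/-- Case sum ≡ 1: given `x + y = 1` with `1 ≤ y.val ≤ m`, find a consecutive pair
realizing `x, y`. -/
lemma helper1 {m : ℕ} (hm : n = 2 * m) {x y : ZMod n} (hxy : x + y = 1)
    (h1 : 1 ≤ y.val) (h2 : y.val ≤ m) :
    ∃ a b : Fin n, (a : ℕ) + 1 = (b : ℕ) ∧ s (n := n) (a : ℕ) = x ∧ s (b : ℕ) = y := by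
  have hm1 : m ≥ 1 := by omega
  set k := y.val - 1 with hk
  have hy : y = ((k + 1 : ℕ) : ZMod n) := by
    rw [← val_cast_self y]; congr 1; omega
  refine ⟨⟨2*k, by omega⟩, ⟨2*k+1, by omega⟩, rfl, ?_, ?_⟩
  · have hev : Even (2*k) := ⟨k, by ring⟩
    rw [s, if_pos hev]
    have h3 : (2*k)/2 = k := by omega
    rw [h3]
    have hx : x = 1 - y := by linear_combination hxy
    rw [hx, hy]
    push_cast
    ring
  · have hne : ¬ Even (2*k+1) := by rw [Nat.even_iff]; omega
    rw [s, if_neg hne]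
    have h3 : (2*k+1)/2 + 1 = k + 1 := by omega
    rw [h3, ← hy]

lemma two_cast_eq_zero {m : ℕ} (hm : n = 2 * m) (x : ZMod n) (hx : x.val = m) :
    2 * x = 0 := by
  have h : ((2 * x.val : ℕ) : ZMod n) = 2 * x := by
    push_cast [val_cast_self]
    ring
  rw [← h, hx, ← hm, ZMod.natCast_self]

/-- forward direction. -/
lemma forward {m : ℕ} (hm : n = 2 * m) (i : ZMod n) {u v : Fin n}
    (h : (P n i).Adj u v) :
    ∃ a b : Fin n, (a : ℕ) + 1 = (b : ℕ) ∧
      ((f hm i a = u ∧ f hm i b = v) ∨ (f hm i a = v ∧ f hm i b = u)) := by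
  obtain ⟨huv, hor⟩ := h
  have hn0 : n ≠ 0 := NeZero.ne n
  have hm1 : m ≥ 1 := by omega
  set x := c u - i with hxdef
  set y := c v - i with hydef
  have hxu : i + x = c u := by ring
  have hyv : i + y = c v := by ring
  rcases hor with hsum | hsum
  · -- sum = 2i
    have hxy : x + y = 0 := by rw [hxdef, hydef]; linear_combination hsum
    have hne : x ≠ y := by
      intro h'
      exact huv (c_inj (by rw [← hxu, ← hyv, h']))
    have hx0 : x ≠ 0 := by
      intro h'
      apply hne
      rw [h']
      linear_combination -hxy + h'
    have hy0 : y ≠ 0 := by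
      intro h'
      apply hne
      rw [h']
      linear_combination hxy - h'
    have hxm : x.val ≠ m := by
      intro h'
      apply hne
      have h2 : 2 * x = 0 := two_cast_eq_zero hm x h'
      linear_combination -hxy + h2
    have hx1 : 1 ≤ x.val := by
      rcases Nat.eq_zero_or_pos x.val with h' | h'
      · exact absurd (by rw [← val_cast_self x, h']; simp) hx0
      · exact h'
    have hyval : y.val = n - x.val := by
      have h' : y = -x := by linear_combination hxy
      rw [h', ZMod.neg_val, if_neg hx0]
    rcases le_or_gt x.val (m - 1) with hsm | hsm
    · obtain ⟨a, b, hab, hsa, hsb⟩ := helper0 hm hxy hx1 hsm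
      refine ⟨a, b, hab, Or.inl ⟨?_, ?_⟩⟩
      · rw [f_apply, hsa, hxu, d_c]
      · rw [f_apply, hsb, hyv, d_c]
    · have hy1 : 1 ≤ y.val := by have := x.val_lt; omega
      have hym : y.val ≤ m - 1 := by have := x.val_lt; omega
      obtain ⟨a, b, hab, hsa, hsb⟩ := helper0 hm (by linear_combination hxy : y + x = 0) hy1 hym
      refine ⟨a, b, hab, Or.inr ⟨?_, ?_⟩⟩
      · rw [f_apply, hsa, hyv, d_c]
      · rw [f_apply, hsb, hxu, d_c]
  · -- sum = 2i + 1
    have hxy : x + y = 1 := by rw [hxdef, hydef]; linear_combination hsum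
    have hn2 : 2 ≤ n := by
      rcases Nat.lt_or_ge n 2 with h' | h'
      · interval_cases n
        · omega
        · exact absurd (Subsingleton.elim u v) huv
      · exact h'
    have hval1 : (1 : ZMod n).val = 1 := by
      have : ((1 : ℕ) : ZMod n).val = 1 := ZMod.val_cast_of_lt (by omega)
      simpa using this
    -- determine which of x, y has value in [1, m]
    have hcases : (1 ≤ y.val ∧ y.val ≤ m) ∨ (1 ≤ x.val ∧ x.val ≤ m) := by
      by_cases hy0 : y = 0
      · right
        have hx1 : x = 1 := by linear_combination hxy - hy0
        rw [hx1, hval1]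
        omega
      by_cases hx0 : x = 0
      · left
        have hy1 : y = 1 := by linear_combination hxy - hx0
        rw [hy1, hval1]
        omega
      · -- both nonzero
        have hx1 : 1 ≤ x.val := by
          rcases Nat.eq_zero_or_pos x.val with h' | h'
          · exact absurd (by rw [← val_cast_self x, h']; simp) hx0
          · exact h'
        have hy1 : 1 ≤ y.val := by
          rcases Nat.eq_zero_or_pos y.val with h' | h'
          · exact absurd (by rw [← val_cast_self y, h']; simp) hy0
          · exact h'
        have hsum2 : ((x.val + y.val : ℕ) : ZMod n) = 1 := by
          push_cast [val_cast_self]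
          exact hxy
        have hmod : (x.val + y.val) % n = 1 := by
          have := congrArg ZMod.val hsum2
          rwa [ZMod.val_natCast, hval1] at this
        have hlt : x.val + y.val < 2 * n := by
          have := x.val_lt; have := y.val_lt; omega
        have heq : x.val + y.val = n + 1 := by
          rcases Nat.lt_or_ge (x.val + y.val) n with h' | h'
          · rw [Nat.mod_eq_of_lt h'] at hmod; omega
          · rw [Nat.mod_eq_sub_mod h', Nat.mod_eq_of_lt (by omega)] at hmod
            omega
        rcases le_or_gt y.val m with h' | h'
        · left; omega
        · right
          have := y.val_lt
          omega
    rcases hcases with ⟨h1, h2⟩ | ⟨h1, h2⟩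
    · obtain ⟨a, b, hab, hsa, hsb⟩ := helper1 hm hxy h1 h2
      refine ⟨a, b, hab, Or.inl ⟨?_, ?_⟩⟩
      · rw [f_apply, hsa, hxu, d_c]
      · rw [f_apply, hsb, hyv, d_c]
    · obtain ⟨a, b, hab, hsa, hsb⟩ := helper1 hm (by linear_combination hxy : y + x = 1) h1 h2
      refine ⟨a, b, hab, Or.inr ⟨?_, ?_⟩⟩
      · rw [f_apply, hsa, hyv, d_c]
      · rw [f_apply, hsb, hxu, d_c]

end Ham

end HPD

/-- `H` is a Hamiltonian path subgraph: it is spanning, and for some ordering of all the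
vertices its edges are exactly the consecutive pairs. -/
def IsHamiltonianPathSubgraph {n : ℕ} (H : (⊤ : SimpleGraph (Fin n)).Subgraph) : Prop :=
  H.verts = Set.univ ∧ ∃ f : Fin n ≃ Fin n, ∀ u v, H.Adj u v ↔
    ∃ i j : Fin n, (i : ℕ) + 1 = (j : ℕ) ∧ ((f i = u ∧ f j = v) ∨ (f i = v ∧ f j = u))

namespace HPD

lemma isHam {n m : ℕ} [NeZero n] (hm : n = 2 * m) (i : ZMod n) :
    IsHamiltonianPathSubgraph (P n i) := by
  refine ⟨rfl, f hm i, fun u v => ⟨?_, ?_⟩⟩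
  · intro h
    exact forward hm i h
  · rintro ⟨a, b, hab, ⟨h1, h2⟩ | ⟨h1, h2⟩⟩
    · rw [← h1, ← h2]
      exact adj_of_consec hm i hab
    · rw [← h1, ← h2]
      exact (P n i).adj_symm (adj_of_consec hm i hab)

end HPD

open HPD in
/-- For every even `n ≥ 2`, the edge set of `K_n` can be partitioned into `n/2`
Hamiltonian paths. -/
theorem complete_graph_hamiltonian_path_decomposition (n : ℕ) (hn : 2 ≤ n) (he : Even n) :
    ∃ P : Fin (n / 2) → (⊤ : SimpleGraph (Fin n)).Subgraph,
      (∀ i, IsHamiltonianPathSubgraph (P i)) ∧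
      (∀ e ∈ (⊤ : SimpleGraph (Fin n)).edgeSet, ∃! i, e ∈ (P i).edgeSet) := by
  haveI : NeZero n := ⟨by omega⟩
  have he2 := Nat.even_iff.mp he
  obtain ⟨m, hm⟩ : ∃ m, n = 2 * m := ⟨n / 2, by omega⟩
  have hm2 : n / 2 = m := by omega
  refine ⟨fun i => HPD.P n (((i : ℕ) : ZMod n)), fun i => HPD.isHam hm _, ?_⟩
  intro e he'
  induction e using Sym2.ind with
  | _ u v =>
    rw [SimpleGraph.mem_edgeSet, SimpleGraph.top_adj] at he'
    set cval := (c u + c v).val with hcval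
    have hclt : cval < n := (c u + c v).val_lt
    have hcs : ((cval : ℕ) : ZMod n) = c u + c v := val_cast_self _
    refine ⟨⟨cval / 2, by omega⟩, ⟨?_, ?_⟩⟩
    · show s(u, v) ∈ (HPD.P n ((cval / 2 : ℕ) : ZMod n)).edgeSet
      rw [SimpleGraph.Subgraph.mem_edgeSet]
      refine ⟨he', ?_⟩
      rcases Nat.even_or_odd cval with hev | hod
      · left
        have h1 := Nat.even_iff.mp hev
        show c u + c v = 2 * ((cval / 2 : ℕ) : ZMod n)
        calc c u + c v = ((2 * (cval / 2) : ℕ) : ZMod n) := by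
              rw [← hcs]; congr 1; omega
          _ = 2 * ((cval / 2 : ℕ) : ZMod n) := by push_cast; ring
      · right
        have h1 := Nat.odd_iff.mp hod
        show c u + c v = 2 * ((cval / 2 : ℕ) : ZMod n) + 1
        calc c u + c v = ((2 * (cval / 2) + 1 : ℕ) : ZMod n) := by
              rw [← hcs]; congr 1; omega
          _ = 2 * ((cval / 2 : ℕ) : ZMod n) + 1 := by push_cast; ring
    · intro j hj
      simp only [SimpleGraph.Subgraph.mem_edgeSet] at hj
      obtain ⟨-, hj2⟩ := hj
      have hjlt : (j : ℕ) < m := by have := j.isLt; omega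
      apply Fin.ext
      show (j : ℕ) = cval / 2
      rcases hj2 with h' | h'
      · have h2 : 2 * (((j : ℕ) : ZMod n)) = ((2 * (j : ℕ) : ℕ) : ZMod n) := by
          push_cast; ring
        rw [h2] at h'
        have h3 := congrArg ZMod.val h'
        rw [ZMod.val_cast_of_lt (by omega)] at h3
        omega
      · have h2 : 2 * (((j : ℕ) : ZMod n)) + 1 = ((2 * (j : ℕ) + 1 : ℕ) : ZMod n) := by
          push_cast; ring
        rw [h2] at h'
        have h3 := congrArg ZMod.val h'
        rw [ZMod.val_cast_of_lt (by omega)] at h3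
        omega
end

section
/- For every odd integer n ≥ 3, the edge set of K_n can be partitioned into (n−1)/2 Hamiltonian cycles. -/
open SimpleGraph

/-- `H` is a Hamiltonian cycle subgraph: it is spanning, and for some cyclic ordering of all
the vertices its edges are exactly the (cyclically) consecutive pairs. -/
def IsHamiltonianCycleSubgraph {n : ℕ} (H : (⊤ : SimpleGraph (Fin n)).Subgraph) : Prop :=
  H.verts = Set.univ ∧ ∃ f : ZMod n ≃ Fin n, ∀ u v, H.Adj u v ↔
    ∃ i : ZMod n, (f i = u ∧ f (i + 1) = v) ∨ (f i = v ∧ f (i + 1) = u)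

namespace Walecki
variable (m : ℕ)
instance iN : NeZero (2*m+2) := ⟨by omega⟩
instance iN' : NeZero (2*m+3) := ⟨by omega⟩
instance iF : Fact (1 < 2*m+3) := ⟨by omega⟩
def inf : Fin (2*m+3) := ⟨2*m+2, by omega⟩
def emb (x : ZMod (2*m+2)) : Fin (2*m+3) := ⟨x.val, by have := x.val_lt; omega⟩
lemma emb_ne_inf (x : ZMod (2*m+2)) : emb m x ≠ inf m := by
  have := x.val_lt; simp only [emb, inf, Fin.mk.injEq, ne_eq]; omega
def zig (t : ℕ) : ZMod (2*m+2) :=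
  if t % 2 = 0 then ((t/2 : ℕ) : ZMod (2*m+2)) else -((t/2 : ℕ) : ZMod (2*m+2))
lemma zig_add_zig (t : ℕ) :
    zig m t + zig m (t+1) = if t % 2 = 0 then 0 else 1 := by
  rcases Nat.even_or_odd t with ⟨k, hk⟩ | ⟨k, hk⟩
  · subst hk
    have h1 : (k+k) % 2 = 0 := by omega
    have h2 : (k+k+1) % 2 = 1 := by omega
    have h3 : (k+k)/2 = k := by omega
    have h4 : (k+k+1)/2 = k := by omega
    simp [zig, h1, h2, h3, h4]
  · subst hk
    have h1 : (2*k+1) % 2 = 1 := by omega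
    have h2 : (2*k+1+1) % 2 = 0 := by omega
    have h3 : (2*k+1)/2 = k := by omega
    have h4 : (2*k+1+1)/2 = k+1 := by omega
    simp only [zig, h1, h2, h3, h4, if_neg (by omega : ¬(1:ℕ) = 0), if_pos rfl]
    push_cast
    ring

def f (i : ZMod (2*m+2)) (j : ZMod (2*m+3)) : Fin (2*m+3) :=
  if j = 0 then inf m else emb m (i + zig m j.val)
-- new stuff
def vz (u : Fin (2*m+3)) : ZMod (2*m+2) := ((u.val : ℕ) : ZMod (2*m+2))

lemma vz_emb (x : ZMod (2*m+2)) : vz m (emb m x) = x := ZMod.natCast_rightInverse x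

lemma emb_vz {u : Fin (2*m+3)} (h : u ≠ inf m) : emb m (vz m u) = u := by
  have hu : u.val < 2*m+2 := by
    have := u.isLt
    rcases Nat.lt_or_ge u.val (2*m+2) with h' | h'
    · exact h'
    · exact absurd (Fin.ext (by simp [inf]; omega)) h
  apply Fin.ext
  simp only [emb, vz]
  exact ZMod.val_cast_of_lt hu

lemma vz_inj {u v : Fin (2*m+3)} (hu : u ≠ inf m) (hv : v ≠ inf m)
    (h : vz m u = vz m v) : u = v := by
  rw [← emb_vz m hu, ← emb_vz m hv, h]

lemma castN_self : ((2*m+2 : ℕ) : ZMod (2*m+2)) = 0 := ZMod.natCast_self _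

lemma castN_pred : ((2*m+1 : ℕ) : ZMod (2*m+2)) = -1 := by
  have h := castN_self m
  have : ((2*m+1 : ℕ) : ZMod (2*m+2)) + 1 = 0 := by push_cast at h ⊢; linear_combination h
  linear_combination this

lemma two_mul_mid : (2 : ZMod (2*m+2)) * ((m+1 : ℕ) : ZMod (2*m+2)) = 0 := by
  have h := castN_self m
  push_cast at h ⊢
  linear_combination h

lemma val_one' : (1 : ZMod (2*m+3)).val = 1 := ZMod.val_one _

lemma neg_one_eq : ((2*m+2 : ℕ) : ZMod (2*m+3)) = -1 := by
  have h : ((2*m+3 : ℕ) : ZMod (2*m+3)) = 0 := ZMod.natCast_self _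
  have : ((2*m+2 : ℕ) : ZMod (2*m+3)) + 1 = 0 := by push_cast at h ⊢; linear_combination h
  linear_combination this

lemma val_neg_one' : (-1 : ZMod (2*m+3)).val = 2*m+2 := by
  rw [← neg_one_eq]; exact ZMod.val_cast_of_lt (by omega)

lemma val_add_one {j : ZMod (2*m+3)} (h : j.val < 2*m+2) : (j+1).val = j.val + 1 := by
  rw [ZMod.val_add_of_lt (by rw [val_one']; omega), val_one']

lemma f_zero (i : ZMod (2*m+2)) : f m i 0 = inf m := by simp [f]

lemma f_one (i : ZMod (2*m+2)) : f m i 1 = emb m i := by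
  have h1 : (1 : ZMod (2*m+3)) ≠ 0 := by
    intro h; have := congrArg ZMod.val h; rw [val_one'] at this; simp at this
  rw [f, if_neg h1, val_one']
  simp [zig]

lemma f_neg_one (i : ZMod (2*m+2)) : f m i (-1) = emb m (i + ((m+1:ℕ) : ZMod (2*m+2))) := by
  have h1 : (-1 : ZMod (2*m+3)) ≠ 0 := by
    intro h; have := congrArg ZMod.val h; rw [val_neg_one'] at this; simp at this
  rw [f, if_neg h1, val_neg_one']
  congr 1
  have h2 : (2*m+2) % 2 = 0 := by omega
  have h3 : (2*m+2)/2 = m+1 := by omega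
  simp [zig, h2, h3]

def P (i : ZMod (2*m+2)) (u v : Fin (2*m+3)) : Prop :=
  ∃ j : ZMod (2*m+3), (f m i j = u ∧ f m i (j+1) = v) ∨ (f m i j = v ∧ f m i (j+1) = u)

def Q (i : ZMod (2*m+2)) (u v : Fin (2*m+3)) : Prop :=
  (u = inf m ∧ (vz m v = i ∨ vz m v = i + ((m+1:ℕ) : ZMod (2*m+2)))) ∨
  (v = inf m ∧ (vz m u = i ∨ vz m u = i + ((m+1:ℕ) : ZMod (2*m+2)))) ∨
  (u ≠ inf m ∧ v ≠ inf m ∧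
    (vz m u + vz m v = 2*i ∨ vz m u + vz m v = 2*i + 1))

lemma P_symm (i : ZMod (2*m+2)) (u v : Fin (2*m+3)) : P m i u v → P m i v u := by
  rintro ⟨j, h | h⟩; exacts [⟨j, Or.inr h⟩, ⟨j, Or.inl h⟩]

lemma P_to_Q (i : ZMod (2*m+2)) (u v : Fin (2*m+3)) (h : P m i u v) : Q m i u v := by
  obtain ⟨j, hj⟩ := h
  by_cases h0 : j = 0
  · subst h0
    rw [f_zero] at hj
    have h1 : (0 : ZMod (2*m+3)) + 1 = 1 := by ring
    rw [h1, f_one] at hj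
    rcases hj with ⟨hu, hv⟩ | ⟨hv, hu⟩
    · exact Or.inl ⟨hu.symm, Or.inl (by rw [← hv, vz_emb])⟩
    · exact Or.inr (Or.inl ⟨hv.symm, Or.inl (by rw [← hu, vz_emb])⟩)
  · by_cases h2 : j + 1 = 0
    · have hj' : j = -1 := by linear_combination h2
      subst hj'
      rw [f_neg_one] at hj
      rw [h2, f_zero] at hj
      rcases hj with ⟨hu, hv⟩ | ⟨hv, hu⟩
      · exact Or.inr (Or.inl ⟨hv.symm, Or.inr (by rw [← hu, vz_emb])⟩)
      · exact Or.inl ⟨hu.symm, Or.inr (by rw [← hv, vz_emb])⟩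
    · -- middle case
      have hj1 : 1 ≤ j.val := by
        by_contra hc
        exact h0 ((ZMod.val_eq_zero j).mp (by omega))
      have hj2 : j.val ≤ 2*m+1 := by
        by_contra hc
        have hj3 : j.val = 2*m+2 := by have := j.val_lt; omega
        apply h2
        have : j = ((2*m+2:ℕ) : ZMod (2*m+3)) := by
          rw [← ZMod.natCast_rightInverse j, hj3]
        rw [this, neg_one_eq]; ring
      have hjv : (j+1).val = j.val + 1 := val_add_one m (by omega)
      rw [f, if_neg h0, f, if_neg h2, hjv] at hj
      have key : vz m u + vz m v = 2*i + zig m j.val + zig m (j.val + 1) := by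
        rcases hj with ⟨hu, hv⟩ | ⟨hv, hu⟩ <;>
          rw [← hu, ← hv, vz_emb, vz_emb] <;> ring
      refine Or.inr (Or.inr ⟨?_, ?_, ?_⟩)
      · rcases hj with ⟨hu, _⟩ | ⟨_, hu⟩ <;> rw [← hu] <;> exact emb_ne_inf m _
      · rcases hj with ⟨_, hv⟩ | ⟨hv, _⟩ <;> rw [← hv] <;> exact emb_ne_inf m _
      · have hz := zig_add_zig m j.val
        by_cases hp : j.val % 2 = 0
        · rw [if_pos hp] at hz
          left; rw [key]; linear_combination hz
        · rw [if_neg hp] at hz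
          right; rw [key]; linear_combination hz


lemma zig_even (d : ℕ) : zig m (2*d) = ((d:ℕ) : ZMod (2*m+2)) := by
  have h1 : (2*d) % 2 = 0 := by omega
  have h2 : (2*d)/2 = d := by omega
  simp [zig, h1, h2]

lemma zig_odd (d : ℕ) : zig m (2*d+1) = -((d:ℕ) : ZMod (2*m+2)) := by
  have h1 : (2*d+1) % 2 = 1 := by omega
  have h2 : (2*d+1)/2 = d := by omega
  simp [zig, h1, h2]

lemma P_pair (i : ZMod (2*m+2)) (u v : Fin (2*m+3)) (hu : u ≠ inf m) (hv : v ≠ inf m)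
    (t : ℕ) (ht1 : 1 ≤ t) (ht2 : t ≤ 2*m+1)
    (h1 : i + zig m t = vz m u) (h2 : i + zig m (t+1) = vz m v) : P m i u v := by
  refine ⟨((t:ℕ) : ZMod (2*m+3)), Or.inl ⟨?_, ?_⟩⟩
  · have hval : (((t:ℕ) : ZMod (2*m+3))).val = t := ZMod.val_cast_of_lt (by omega)
    have h0 : ((t:ℕ) : ZMod (2*m+3)) ≠ 0 := by
      intro hc; rw [hc, ZMod.val_zero] at hval; omega
    rw [f, if_neg h0, hval, h1, emb_vz m hu]
  · have hval : (((t:ℕ) : ZMod (2*m+3))).val = t := ZMod.val_cast_of_lt (by omega)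
    have hval1 : (((t:ℕ) : ZMod (2*m+3)) + 1).val = t + 1 := by
      rw [val_add_one m (by omega)]; omega
    have h0 : ((t:ℕ) : ZMod (2*m+3)) + 1 ≠ 0 := by
      intro hc; rw [hc, ZMod.val_zero] at hval1; omega
    rw [f, if_neg h0, hval1, h2, emb_vz m hv]

lemma P_inf (i : ZMod (2*m+2)) (v : Fin (2*m+3)) (hv : v ≠ inf m)
    (h : vz m v = i ∨ vz m v = i + ((m+1:ℕ) : ZMod (2*m+2))) : P m i (inf m) v := by
  rcases h with h | h
  · refine ⟨0, Or.inl ⟨f_zero m i, ?_⟩⟩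
    rw [zero_add, f_one, ← h, emb_vz m hv]
  · refine ⟨-1, Or.inr ⟨?_, ?_⟩⟩
    · rw [f_neg_one, ← h, emb_vz m hv]
    · rw [neg_add_cancel, f_zero]

lemma Q_to_P (i : ZMod (2*m+2)) (u v : Fin (2*m+3)) (hne : u ≠ v) (h : Q m i u v) :
    P m i u v := by
  rcases h with ⟨hu, h⟩ | ⟨hv, h⟩ | ⟨hu, hv, h⟩
  · subst hu
    exact P_inf m i v (fun hc => hne hc.symm) h
  · subst hv
    exact P_symm m i _ _ (P_inf m i u (fun hc => hne hc) h)
  · have hne' : vz m u ≠ vz m v := fun hc => hne (vz_inj m hu hv hc)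
    rcases h with hs | hs
    · -- even case : x + y = 2 i
      obtain ⟨d, hxd⟩ : ∃ d, vz m u = i + d := ⟨vz m u - i, by ring⟩
      have hyd : vz m v = i - d := by linear_combination hs - hxd
      have hd0 : d ≠ 0 := by
        intro h0
        exact hne' (by linear_combination hxd - hyd + 2*h0)
      have hd1 : 1 ≤ d.val := by
        by_contra hc
        exact hd0 ((ZMod.val_eq_zero d).mp (by omega))
      have hdlt : d.val < 2*m+2 := d.val_lt
      have hdm : d.val ≠ m+1 := by
        intro h0
        have hdc : d = ((m+1:ℕ) : ZMod (2*m+2)) := by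
          rw [← ZMod.natCast_rightInverse d, h0]
        have h2d : 2 * d = 0 := by rw [hdc]; exact two_mul_mid m
        exact hne' (by linear_combination hxd - hyd + h2d)
      set δ : ℕ := if d.val ≤ m then d.val else 2*m+2 - d.val with hδ
      have hδ1 : 1 ≤ δ := by rw [hδ]; split <;> omega
      have hδ2 : δ ≤ m := by rw [hδ]; split <;> omega
      have hδ' : ((δ:ℕ) : ZMod (2*m+2)) = d ∨ ((δ:ℕ) : ZMod (2*m+2)) = -d := by
        rw [hδ]
        split
        · left; exact ZMod.natCast_rightInverse d
        · right
          rw [Nat.cast_sub (by omega), castN_self, ZMod.natCast_rightInverse d]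
          ring
      rcases hδ' with hc | hc
      · refine P_pair m i u v hu hv (2*δ) (by omega) (by omega) ?_ ?_
        · rw [zig_even, hc]; linear_combination -hxd
        · rw [zig_odd, hc]; linear_combination -hyd
      · refine P_symm m i v u (P_pair m i v u hv hu (2*δ) (by omega) (by omega) ?_ ?_)
        · rw [zig_even, hc]; linear_combination -hyd
        · rw [zig_odd, hc]; linear_combination -hxd
    · -- odd case : x + y = 2 i + 1
      obtain ⟨k, hxk⟩ : ∃ k, vz m u = i - k := ⟨i - vz m u, by ring⟩
      have hyk : vz m v = i + k + 1 := by linear_combination hs - hxk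
      have hklt : k.val < 2*m+2 := k.val_lt
      set κ : ℕ := if k.val ≤ m then k.val else 2*m+1 - k.val with hκ
      have hκ2 : κ ≤ m := by rw [hκ]; split <;> omega
      have hκ' : ((κ:ℕ) : ZMod (2*m+2)) = k ∨ ((κ:ℕ) : ZMod (2*m+2)) = -k-1 := by
        rw [hκ]
        split
        · left; exact ZMod.natCast_rightInverse k
        · right
          rw [Nat.cast_sub (by omega), castN_pred, ZMod.natCast_rightInverse k]
          ring
      rcases hκ' with hc | hc
      · refine P_pair m i u v hu hv (2*κ+1) (by omega) (by omega) ?_ ?_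
        · rw [zig_odd, hc]; linear_combination -hxk
        · have h21 : 2*κ+1+1 = 2*(κ+1) := by ring
          rw [h21, zig_even]
          push_cast [hc]
          linear_combination -hyk
      · refine P_symm m i v u (P_pair m i v u hv hu (2*κ+1) (by omega) (by omega) ?_ ?_)
        · rw [zig_odd, hc]; linear_combination -hyk
        · have h21 : 2*κ+1+1 = 2*(κ+1) := by ring
          rw [h21, zig_even]
          push_cast [hc]
          linear_combination -hxk


lemma cast_inj_small {a b : ℕ} (ha : a < 2*m+2) (hb : b < 2*m+2)
    (h : ((a:ℕ) : ZMod (2*m+2)) = ((b:ℕ) : ZMod (2*m+2))) : a = b := by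
  have := congrArg ZMod.val h
  rwa [ZMod.val_cast_of_lt ha, ZMod.val_cast_of_lt hb] at this

lemma extract_inf {c : ZMod (2*m+2)} {u v : Fin (2*m+3)} (hu : u = inf m) (hv : v ≠ inf m)
    (h : Q m c u v) : vz m v = c ∨ vz m v = c + ((m+1:ℕ) : ZMod (2*m+2)) := by
  rcases h with ⟨_, ha⟩ | ⟨hv', _⟩ | ⟨hu', _, _⟩
  · exact ha
  · exact absurd hv' hv
  · exact absurd hu hu'

lemma extract_fin {c : ZMod (2*m+2)} {u v : Fin (2*m+3)} (hu : u ≠ inf m) (hv : v ≠ inf m)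
    (h : Q m c u v) :
    vz m u + vz m v = 2*c ∨ vz m u + vz m v = 2*c + 1 := by
  rcases h with ⟨hu', _⟩ | ⟨hv', _⟩ | ⟨_, _, ha⟩
  · exact absurd hu' hu
  · exact absurd hv' hv
  · exact ha

lemma disj_unique {z : ZMod (2*m+2)} (i₁ i₂ : Fin (m+1))
    (h1 : z = ((i₁:ℕ) : ZMod (2*m+2)) ∨ z = ((i₁:ℕ) : ZMod (2*m+2)) + ((m+1:ℕ) : ZMod (2*m+2)))
    (h2 : z = ((i₂:ℕ) : ZMod (2*m+2)) ∨ z = ((i₂:ℕ) : ZMod (2*m+2)) + ((m+1:ℕ) : ZMod (2*m+2))) :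
    i₁ = i₂ := by
  have hi1 : (i₁:ℕ) ≤ m := by omega
  have hi2 : (i₂:ℕ) ≤ m := by omega
  apply Fin.ext
  rcases h1 with h1 | h1 <;> rcases h2 with h2 | h2
  · exact cast_inj_small m (by omega) (by omega) (h1.symm.trans h2)
  · exfalso
    have : ((i₁:ℕ) : ZMod (2*m+2)) = (((i₂:ℕ)+(m+1) : ℕ) : ZMod (2*m+2)) := by
      push_cast at h1 h2 ⊢; linear_combination h2 - h1
    have := cast_inj_small m (by omega) (by omega) this
    omega
  · exfalso
    have : ((i₂:ℕ) : ZMod (2*m+2)) = (((i₁:ℕ)+(m+1) : ℕ) : ZMod (2*m+2)) := by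
      push_cast at h1 h2 ⊢; linear_combination h1 - h2
    have := cast_inj_small m (by omega) (by omega) this
    omega
  · have : (((i₁:ℕ)+(m+1) : ℕ) : ZMod (2*m+2)) = (((i₂:ℕ)+(m+1) : ℕ) : ZMod (2*m+2)) := by
      push_cast at h1 h2 ⊢; linear_combination h2 - h1
    have := cast_inj_small m (by omega) (by omega) this
    omega

lemma sum_unique {z : ZMod (2*m+2)} (i₁ i₂ : Fin (m+1))
    (h1 : z = 2*((i₁:ℕ) : ZMod (2*m+2)) ∨ z = 2*((i₁:ℕ) : ZMod (2*m+2)) + 1)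
    (h2 : z = 2*((i₂:ℕ) : ZMod (2*m+2)) ∨ z = 2*((i₂:ℕ) : ZMod (2*m+2)) + 1) :
    i₁ = i₂ := by
  have hi1 : (i₁:ℕ) ≤ m := by omega
  have hi2 : (i₂:ℕ) ≤ m := by omega
  apply Fin.ext
  rcases h1 with h1 | h1 <;> rcases h2 with h2 | h2
  · have : ((2*(i₁:ℕ) : ℕ) : ZMod (2*m+2)) = ((2*(i₂:ℕ) : ℕ) : ZMod (2*m+2)) := by
      push_cast at h1 h2 ⊢; linear_combination h2 - h1
    have := cast_inj_small m (by omega) (by omega) this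
    omega
  · exfalso
    have : ((2*(i₁:ℕ) : ℕ) : ZMod (2*m+2)) = ((2*(i₂:ℕ)+1 : ℕ) : ZMod (2*m+2)) := by
      push_cast at h1 h2 ⊢; linear_combination h2 - h1
    have := cast_inj_small m (by omega) (by omega) this
    omega
  · exfalso
    have : ((2*(i₂:ℕ) : ℕ) : ZMod (2*m+2)) = ((2*(i₁:ℕ)+1 : ℕ) : ZMod (2*m+2)) := by
      push_cast at h1 h2 ⊢; linear_combination h1 - h2
    have := cast_inj_small m (by omega) (by omega) this
    omega
  · have : ((2*(i₁:ℕ)+1 : ℕ) : ZMod (2*m+2)) = ((2*(i₂:ℕ)+1 : ℕ) : ZMod (2*m+2)) := by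
      push_cast at h1 h2 ⊢; linear_combination h2 - h1
    have := cast_inj_small m (by omega) (by omega) this
    omega

lemma fin_lt {u : Fin (2*m+3)} (hu : u ≠ inf m) : u.val < 2*m+2 := by
  have := u.isLt
  rcases Nat.lt_or_ge u.val (2*m+2) with h' | h'
  · exact h'
  · exact absurd (Fin.ext (by simp [inf]; omega)) hu

lemma Q_exists_unique (u v : Fin (2*m+3)) (hne : u ≠ v) :
    ∃! i : Fin (m+1), Q m ((i:ℕ) : ZMod (2*m+2)) u v := by
  by_cases hu : u = inf m
  · have hv : v ≠ inf m := fun h => hne (hu.trans h.symm)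
    have hvlt := fin_lt m hv
    have hex : ∃ i : Fin (m+1), Q m ((i:ℕ) : ZMod (2*m+2)) u v := by
      by_cases hle : v.val ≤ m
      · exact ⟨⟨v.val, by omega⟩, Or.inl ⟨hu, Or.inl rfl⟩⟩
      · refine ⟨⟨v.val - (m+1), by omega⟩, Or.inl ⟨hu, Or.inr ?_⟩⟩
        show ((v.val : ℕ) : ZMod (2*m+2)) = _
        rw [← Nat.cast_add]
        simp only [Fin.val_mk]
        congr 1
        omega
    obtain ⟨i₀, hi₀⟩ := hex
    exact ⟨i₀, hi₀, fun j hj => disj_unique m j i₀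
      (extract_inf m hu hv hj) (extract_inf m hu hv hi₀)⟩
  · by_cases hv : v = inf m
    · have hu' : u ≠ inf m := hu
      have hult := fin_lt m hu'
      have hex : ∃ i : Fin (m+1), Q m ((i:ℕ) : ZMod (2*m+2)) u v := by
        by_cases hle : u.val ≤ m
        · exact ⟨⟨u.val, by omega⟩, Or.inr (Or.inl ⟨hv, Or.inl rfl⟩)⟩
        · refine ⟨⟨u.val - (m+1), by omega⟩, Or.inr (Or.inl ⟨hv, Or.inr ?_⟩)⟩
          show ((u.val : ℕ) : ZMod (2*m+2)) = _
          rw [← Nat.cast_add]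
          try simp only [Fin.val_mk]
          congr 1
          omega
      obtain ⟨i₀, hi₀⟩ := hex
      have extract : ∀ {c : ZMod (2*m+2)}, Q m c u v →
          vz m u = c ∨ vz m u = c + ((m+1:ℕ) : ZMod (2*m+2)) := by
        intro c h
        rcases h with ⟨hu'', _⟩ | ⟨_, ha⟩ | ⟨_, hv'', _⟩
        · exact absurd hu'' hu
        · exact ha
        · exact absurd hv hv''
      exact ⟨i₀, hi₀, fun j hj => disj_unique m j i₀ (extract hj) (extract hi₀)⟩
    · have hult := fin_lt m hu
      have hvlt := fin_lt m hv
      have hcast : vz m u + vz m v = ((((u.val + v.val) % (2*m+2) : ℕ)) : ZMod (2*m+2)) := by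
        rw [ZMod.natCast_mod]
        push_cast
        rfl
      set s : ℕ := (u.val + v.val) % (2*m+2) with hs
      have hslt : s < 2*m+2 := Nat.mod_lt _ (by omega)
      have hex : ∃ i : Fin (m+1), Q m ((i:ℕ) : ZMod (2*m+2)) u v := by
        by_cases hpar : s % 2 = 0
        · refine ⟨⟨s/2, by omega⟩, Or.inr (Or.inr ⟨hu, hv, Or.inl ?_⟩)⟩
          rw [hcast]
          show ((s:ℕ) : ZMod (2*m+2)) = 2 * ((s/2 : ℕ) : ZMod (2*m+2))
          rw [show (2 : ZMod (2*m+2)) = ((2:ℕ) : ZMod (2*m+2)) by push_cast; ring,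
            ← Nat.cast_mul]
          try simp only [Fin.val_mk]
          congr 1
          omega
        · refine ⟨⟨s/2, by omega⟩, Or.inr (Or.inr ⟨hu, hv, Or.inr ?_⟩)⟩
          rw [hcast]
          show ((s:ℕ) : ZMod (2*m+2)) = 2 * ((s/2 : ℕ) : ZMod (2*m+2)) + 1
          rw [show (2 : ZMod (2*m+2)) = ((2:ℕ) : ZMod (2*m+2)) by push_cast; ring,
            ← Nat.cast_mul, show (1 : ZMod (2*m+2)) = ((1:ℕ) : ZMod (2*m+2)) by push_cast; ring,
            ← Nat.cast_add]
          try simp only [Fin.val_mk]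
          congr 1
          omega
      obtain ⟨i₀, hi₀⟩ := hex
      exact ⟨i₀, hi₀, fun j hj => sum_unique m j i₀
        (extract_fin m hu hv hj) (extract_fin m hu hv hi₀)⟩


lemma emb_inj : Function.Injective (emb m) := by
  intro x y h
  simp only [emb, Fin.mk.injEq] at h
  exact ZMod.val_injective _ h

lemma zig_injOn {s t : ℕ} (hs1 : 1 ≤ s) (hs2 : s ≤ 2*m+2) (ht1 : 1 ≤ t)
    (ht2 : t ≤ 2*m+2) (h : zig m s = zig m t) : s = t := by
  unfold zig at h
  have hs : s/2 ≤ m+1 := by omega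
  have ht : t/2 ≤ m+1 := by omega
  rcases Nat.even_or_odd s with ⟨a, ha⟩ | ⟨a, ha⟩ <;>
    rcases Nat.even_or_odd t with ⟨b, hb⟩ | ⟨b, hb⟩
  · rw [if_pos (by omega), if_pos (by omega)] at h
    have := congrArg ZMod.val h
    rw [ZMod.val_cast_of_lt (by omega), ZMod.val_cast_of_lt (by omega)] at this
    omega
  · rw [if_pos (by omega), if_neg (by omega)] at h
    have hs' : 1 ≤ s/2 := by omega
    have ht' : t/2 ≤ m := by omega
    have : ((s/2 + t/2 : ℕ) : ZMod (2*m+2)) = 0 := by push_cast; rw [h]; ring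
    rw [ZMod.natCast_eq_zero_iff] at this
    have := Nat.le_of_dvd (by omega) this
    omega
  · rw [if_neg (by omega), if_pos (by omega)] at h
    have ht' : 1 ≤ t/2 := by omega
    have hs' : s/2 ≤ m := by omega
    have : ((s/2 + t/2 : ℕ) : ZMod (2*m+2)) = 0 := by push_cast; rw [← h]; ring
    rw [ZMod.natCast_eq_zero_iff] at this
    have := Nat.le_of_dvd (by omega) this
    omega
  · rw [if_neg (by omega), if_neg (by omega)] at h
    have h' : ((s/2 : ℕ) : ZMod (2*m+2)) = ((t/2 : ℕ) : ZMod (2*m+2)) := neg_injective h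
    have := congrArg ZMod.val h'
    rw [ZMod.val_cast_of_lt (by omega), ZMod.val_cast_of_lt (by omega)] at this
    omega

lemma val_pos_of_ne_zero {j : ZMod (2*m+3)} (h : j ≠ 0) : 1 ≤ j.val := by
  by_contra hc
  exact h ((ZMod.val_eq_zero j).mp (by omega))

lemma f_inj (i : ZMod (2*m+2)) : Function.Injective (f m i) := by
  intro j k h
  unfold f at h
  split_ifs at h with h1 h2 h2
  · rw [h1, h2]
  · exact absurd h.symm (emb_ne_inf m _)
  · exact absurd h (emb_ne_inf m _)
  · have h3 := add_left_cancel (emb_inj m h)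
    have hj1 := val_pos_of_ne_zero m h1
    have hk1 := val_pos_of_ne_zero m h2
    have hj2 := j.val_lt
    have hk2 := k.val_lt
    have := zig_injOn m hj1 (by omega) hk1 (by omega) h3
    exact ZMod.val_injective _ this

lemma f_bij (i : ZMod (2*m+2)) : Function.Bijective (f m i) :=
  (Fintype.bijective_iff_injective_and_card _).2 ⟨f_inj m i, by simp⟩

lemma one_ne_zero' : (1 : ZMod (2*m+3)) ≠ 0 := by
  intro h; have := congrArg ZMod.val h; rw [val_one'] at this; simp at this

lemma P_ne {i : ZMod (2*m+2)} {u v : Fin (2*m+3)} (h : P m i u v) : u ≠ v := by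
  obtain ⟨j, hj⟩ := h
  intro he
  have hf : f m i j = f m i (j+1) := by
    rcases hj with ⟨h1, h2⟩ | ⟨h1, h2⟩
    · rw [h1, h2]; exact he
    · rw [h1, h2]; exact he.symm
  have hjj := f_inj m i hf
  exact one_ne_zero' m (by linear_combination -hjj)

def cyc (i : Fin (m+1)) : (⊤ : SimpleGraph (Fin (2*m+3))).Subgraph where
  verts := Set.univ
  Adj u v := P m ((i:ℕ) : ZMod (2*m+2)) u v
  adj_sub := fun h => by simpa using P_ne m h
  edge_vert := fun _ => Set.mem_univ _
  symm := ⟨fun u v h => P_symm m _ u v h⟩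

end Walecki


open Walecki in
/-- For every odd `n ≥ 3`, the edge set of `K_n` can be partitioned into `(n-1)/2`
Hamiltonian cycles. -/
theorem complete_graph_hamiltonian_cycle_decomposition (n : ℕ) (hn : 3 ≤ n) (ho : Odd n) :
    ∃ C : Fin ((n - 1) / 2) → (⊤ : SimpleGraph (Fin n)).Subgraph,
      (∀ i, IsHamiltonianCycleSubgraph (C i)) ∧
      (∀ e ∈ (⊤ : SimpleGraph (Fin n)).edgeSet, ∃! i, e ∈ (C i).edgeSet) := by
  obtain ⟨m, rfl⟩ : ∃ m, n = 2*m+3 := by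
    obtain ⟨k, hk⟩ := ho
    exact ⟨k-1, by omega⟩
  have hcard : (2*m+3-1)/2 = m+1 := by omega
  refine ⟨fun i => cyc m (Fin.cast hcard i), fun i => ?_, ?_⟩
  · refine ⟨rfl, ⟨Equiv.ofBijective _
      (f_bij m (((Fin.cast hcard i : Fin (m+1)) : ℕ) : ZMod (2*m+2))), fun u v => ?_⟩⟩
    exact Iff.rfl
  · intro e he
    induction e using Sym2.ind with
    | _ u v =>
      rw [SimpleGraph.mem_edgeSet, SimpleGraph.top_adj] at he
      obtain ⟨i₀, hQ, huniq⟩ := Q_exists_unique m u v he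
      have hcc : Fin.cast hcard (Fin.cast hcard.symm i₀) = i₀ := by
        apply Fin.ext; simp
      refine ⟨Fin.cast hcard.symm i₀, ?_, ?_⟩
      · show s(u,v) ∈ (cyc m (Fin.cast hcard (Fin.cast hcard.symm i₀))).edgeSet
        rw [hcc, SimpleGraph.Subgraph.mem_edgeSet]
        exact Q_to_P m _ u v he hQ
      · intro j hj
        have hj' : s(u,v) ∈ (cyc m (Fin.cast hcard j)).edgeSet := hj
        rw [SimpleGraph.Subgraph.mem_edgeSet] at hj'
        have hjq := huniq (Fin.cast hcard j) (P_to_Q m _ u v hj')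
        apply Fin.ext
        have := congrArg Fin.val hjq
        simpa using this
end

section
/- Given integers δ ≥ 3 and g ≥ 3, for every integer n ≥ 2(δ^{g−1} − 1)/(δ − 1) − 1 there exists a graph G on n vertices with minimum degree at least δ and girth at least g. -/
open SimpleGraph

namespace ExistsLargeGirth

open Finset

variable {V : Type*} [DecidableEq V] {G H : SimpleGraph V}




lemma start_not_mem_support_tail {a b : V} (p : G.Walk a b) (h : p.support.Nodup) :
    a ∉ p.support.tail := by
  have := h
  rw [p.support_eq_cons] at this
  exact (List.nodup_cons.mp this).1

/-- If a walk starts at `a`, visits `a` only at the start, and contains an edge `s(a,y)`,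
then that edge is the first edge. -/
lemma head_decomp {a b y : V} (p : G.Walk a b) (ha : a ∉ p.support.tail)
    (he : s(a, y) ∈ p.edges) :
    ∃ (h : G.Adj a y) (q : G.Walk y b), p = Walk.cons h q := by
  cases p with
  | nil => simp at he
  | @cons _ x _ h q =>
    rw [Walk.edges_cons, List.mem_cons] at he
    rcases he with he | he
    · have hxy : x = y := (Sym2.congr_right.mp he).symm
      subst hxy
      exact ⟨h, q, rfl⟩
    · exfalso
      have : a ∈ q.support := q.fst_mem_support_of_mem_edges he
      rw [Walk.support_cons] at ha
      simp only [List.tail_cons] at ha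
      exact ha this

lemma length_rotate [DecidableEq V] {u v : V} (c : G.Walk v v) (h : u ∈ c.support) :
    (c.rotate u h).length = c.length := by
  unfold Walk.rotate
  rw [Walk.length_append, add_comm, ← Walk.length_append, Walk.take_spec]

/-- Core surgery: from a cycle at `u` containing the edge `s(u,v)`, extract a path from `u`
to `v` avoiding that edge, one shorter, with edges among the cycle's edges. -/
lemma cycle_core {u v : V} (c : G.Walk u u) (hc : c.IsCycle) (he : s(u, v) ∈ c.edges) :
    ∃ W : G.Walk u v, W.IsPath ∧ s(u, v) ∉ W.edges ∧ (∀ e ∈ W.edges, e ∈ c.edges) ∧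
      W.length + 1 = c.length := by
  cases c with
  | nil => simp at he
  | @cons _ x _ h q =>
    have hnodupE : (Walk.cons h q).edges.Nodup := hc.edges_nodup
    have hnodupE' := List.nodup_cons.mp (by simpa using hnodupE)
    have hq_support : q.support.Nodup := by
      have := hc.support_nodup
      simpa using this
    rw [Walk.edges_cons, List.mem_cons] at he
    rcases he with he | he
    · -- first edge is s(u,v), so x = v
      have hxy : x = v := (Sym2.congr_right.mp he).symm
      subst hxy
      refine ⟨q.reverse, ?_, ?_, ?_, ?_⟩
      · rw [Walk.isPath_def, Walk.support_reverse]
        exact List.nodup_reverse.mpr hq_support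
      · rw [Walk.edges_reverse, List.mem_reverse]
        exact hnodupE'.1
      · intro e hee
        rw [Walk.edges_reverse, List.mem_reverse] at hee
        rw [Walk.edges_cons]
        exact List.mem_cons_of_mem _ hee
      · simp [Walk.length_reverse]
    · -- edge inside q; u appears in q only at the end
      have hxv : x ≠ v := by
        rintro rfl
        exact hnodupE'.1 he
      have hrevnodupS : q.reverse.support.Nodup := by
        rw [Walk.support_reverse]; exact List.nodup_reverse.mpr hq_support
      have hu_notmem : u ∉ q.reverse.support.tail :=
        start_not_mem_support_tail _ hrevnodupS
      have he' : s(u, v) ∈ q.reverse.edges := by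
        rw [Walk.edges_reverse, List.mem_reverse]; exact he
      obtain ⟨h', Q, hQ⟩ := head_decomp q.reverse hu_notmem he'
      have hQsupp : q.reverse.support = u :: Q.support := by
        rw [hQ, Walk.support_cons]
      have hQsuppN : Q.support.Nodup ∧ u ∉ Q.support := by
        rw [hQsupp] at hrevnodupS
        exact ⟨(List.nodup_cons.mp hrevnodupS).2, (List.nodup_cons.mp hrevnodupS).1⟩
      have hqe_nodup : q.reverse.edges.Nodup := by
        rw [Walk.edges_reverse]; exact List.nodup_reverse.mpr hnodupE'.2
      have hQedges : q.reverse.edges = s(u, v) :: Q.edges := by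
        rw [hQ, Walk.edges_cons]
      have huv_notin_Q : s(u, v) ∉ Q.edges := by
        rw [hQedges] at hqe_nodup
        exact (List.nodup_cons.mp hqe_nodup).1
      refine ⟨Walk.cons h Q.reverse, ?_, ?_, ?_, ?_⟩
      · rw [Walk.isPath_def, Walk.support_cons, List.nodup_cons, Walk.support_reverse]
        constructor
        · rw [List.mem_reverse]; exact hQsuppN.2
        · exact List.nodup_reverse.mpr hQsuppN.1
      · rw [Walk.edges_cons, List.mem_cons]
        rintro (heq | hmem)
        · exact hxv (Sym2.congr_right.mp heq).symm
        · rw [Walk.edges_reverse, List.mem_reverse] at hmem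
          exact huv_notin_Q hmem
      · intro e hee
        rw [Walk.edges_cons, List.mem_cons] at hee
        rw [Walk.edges_cons]
        rcases hee with rfl | hee
        · exact List.mem_cons_self
        · rw [Walk.edges_reverse, List.mem_reverse] at hee
          have : e ∈ q.reverse.edges := by rw [hQedges]; exact List.mem_cons_of_mem _ hee
          rw [Walk.edges_reverse, List.mem_reverse] at this
          exact List.mem_cons_of_mem _ this
      · have hqlen : q.length = Q.length + 1 := by
          have : q.reverse.length = Q.length + 1 := by rw [hQ, Walk.length_cons]
          rwa [Walk.length_reverse] at this
        simp [Walk.length_cons, Walk.length_reverse, hqlen]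


lemma le_edist {u v : V} {k : ℕ∞} (h : ∀ p : G.Walk u v, k ≤ p.length) :
    k ≤ G.edist u v :=
  le_iInf h


/-- the edge-deleted distance between endpoints of an edge is at least g - 1. -/
lemma edist_sdiff_edge [DecidableEq V] {g : ℕ} {u w : V} (h : G.Adj u w)
    (hgirth : (g : ℕ∞) ≤ G.egirth) :
    ((g - 1 : ℕ) : ℕ∞) ≤ (G \ edge u w).edist u w := by
  apply le_edist
  intro p
  have hsub : ∀ e ∈ p.bypass.edges, e ∈ G.edgeSet := by
    intro e hee
    have : e ∈ (G \ edge u w).edgeSet := p.bypass.edges_subset_edgeSet hee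
    rw [edgeSet_sdiff] at this
    exact this.1
  set q : G.Walk u w := p.bypass.transfer G hsub with hq
  have hqpath : q.IsPath := by
    rw [Walk.isPath_def, hq, Walk.support_transfer]
    exact p.bypass_isPath.support_nodup
  have hnotuw : s(u, w) ∉ q.edges := by
    rw [hq, Walk.edges_transfer]
    intro hmem
    have : s(u, w) ∈ (G \ edge u w).edgeSet := p.bypass.edges_subset_edgeSet hmem
    rw [edgeSet_sdiff] at this
    exact this.2 (by rw [edge_edgeSet_of_ne h.ne]; rfl)
  have hcyc : (Walk.cons h q.reverse).IsCycle := by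
    apply SimpleGraph.Path.cons_isCycle ⟨q.reverse, hqpath.reverse⟩ h
    rw [Walk.edges_reverse, List.mem_reverse]
    intro hmem
    exact hnotuw hmem
  have hlen := le_egirth.mp hgirth _ _ hcyc
  rw [Walk.length_cons, Walk.length_reverse] at hlen
  have hq_le : q.length ≤ p.length := by
    rw [hq, Walk.length_transfer]; exact p.length_bypass_le
  have hlen' : g ≤ q.length + 1 := by
    have : ((g : ℕ) : ℕ∞) ≤ ((q.length + 1 : ℕ) : ℕ∞) := by
      push_cast
      exact_mod_cast hlen
    exact_mod_cast this
  exact_mod_cast Nat.cast_le.mpr (by omega : g - 1 ≤ p.length)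



lemma egirth_sup_edge {g : ℕ} {u v : V} (hg : 1 ≤ g) (hne : u ≠ v)
    (hgirth : (g : ℕ∞) ≤ H.egirth) (hdist : ((g - 1 : ℕ) : ℕ∞) ≤ H.edist u v) :
    (g : ℕ∞) ≤ (H ⊔ edge u v).egirth := by
  rw [le_egirth]
  intro a c hc
  by_cases he : s(u, v) ∈ c.edges
  · have hu : u ∈ c.support := c.fst_mem_support_of_mem_edges he
    set c' := c.rotate u hu with hc'def
    have hc' : c'.IsCycle := hc.rotate hu
    have he' : s(u, v) ∈ c'.edges := (Walk.rotate_edges c u hu).mem_iff.mpr he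
    obtain ⟨W, hWp, hWuv, hWsub, hWlen⟩ := cycle_core c' hc' he'
    have hsub : ∀ e ∈ W.edges, e ∈ H.edgeSet := by
      intro e hee
      have h1 : e ∈ (H ⊔ edge u v).edgeSet := W.edges_subset_edgeSet hee
      rw [edgeSet_sup, edge_edgeSet_of_ne hne] at h1
      rcases h1 with h1 | h1
      · exact h1
      · exact absurd (h1 ▸ hee) hWuv
    have hd : ((g - 1 : ℕ) : ℕ∞) ≤ (W.transfer H hsub).length :=
      hdist.trans (edist_le _)
    rw [Walk.length_transfer] at hd
    have hd' : g - 1 ≤ W.length := by exact_mod_cast hd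
    have : c.length = W.length + 1 := by
      rw [hWlen, hc'def, length_rotate]
    rw [this]
    exact_mod_cast Nat.cast_le.mpr (by omega : g ≤ W.length + 1)
  · have hsub : ∀ e ∈ c.edges, e ∈ H.edgeSet := by
      intro e hee
      have h1 : e ∈ (H ⊔ edge u v).edgeSet := c.edges_subset_edgeSet hee
      rw [edgeSet_sup, edge_edgeSet_of_ne hne] at h1
      rcases h1 with h1 | h1
      · exact h1
      · exact absurd (h1 ▸ hee) he
    have := le_egirth.mp hgirth a (c.transfer H hsub) (hc.transfer hsub)
    rwa [Walk.length_transfer] at this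

lemma egirth_sup_two_edges {g : ℕ} {u w v : V} (hg : 2 ≤ g)
    (hune : u ≠ v) (hwne : w ≠ v) (huw : u ≠ w)
    (hgirth : (g : ℕ∞) ≤ H.egirth)
    (hduv : ((g - 1 : ℕ) : ℕ∞) ≤ H.edist u v)
    (hdwv : ((g - 1 : ℕ) : ℕ∞) ≤ H.edist w v)
    (hduw : ((g - 2 : ℕ) : ℕ∞) ≤ H.edist u w) :
    (g : ℕ∞) ≤ (H ⊔ edge u v ⊔ edge w v).egirth := by
  rw [le_egirth]
  intro a c hc
  have hmem_split : ∀ e ∈ (H ⊔ edge u v ⊔ edge w v).edgeSet,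
      e = s(u, v) ∨ e = s(w, v) ∨ e ∈ H.edgeSet := by
    intro e hee
    rw [edgeSet_sup, edgeSet_sup, edge_edgeSet_of_ne hune, edge_edgeSet_of_ne hwne] at hee
    rcases hee with (hee | hee) | hee
    · exact Or.inr (Or.inr hee)
    · exact Or.inl hee
    · exact Or.inr (Or.inl hee)
  by_cases h1 : s(u, v) ∈ c.edges
  · have hu : u ∈ c.support := c.fst_mem_support_of_mem_edges h1
    set c' := c.rotate u hu with hc'def
    have hc' : c'.IsCycle := hc.rotate hu
    have he' : s(u, v) ∈ c'.edges := (Walk.rotate_edges c u hu).mem_iff.mpr h1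
    obtain ⟨W, hWp, hWuv, hWsub, hWlen⟩ := cycle_core c' hc' he'
    have hclen : c.length = W.length + 1 := by rw [hWlen, hc'def, length_rotate]
    by_cases h2 : s(w, v) ∈ W.edges
    · -- extract a walk from w to u avoiding both added edges
      have hWrnodupS : W.reverse.support.Nodup := by
        rw [Walk.support_reverse]; exact List.nodup_reverse.mpr hWp.support_nodup
      have hv_notmem : v ∉ W.reverse.support.tail := start_not_mem_support_tail _ hWrnodupS
      have he2 : s(v, w) ∈ W.reverse.edges := by
        rw [Walk.edges_reverse, List.mem_reverse, Sym2.eq_swap]; exact h2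
      obtain ⟨h', W₂, hW₂⟩ := head_decomp W.reverse hv_notmem he2
      have hWredges : W.reverse.edges = s(v, w) :: W₂.edges := by rw [hW₂, Walk.edges_cons]
      have hWrnodupE : W.reverse.edges.Nodup := by
        rw [Walk.edges_reverse]; exact List.nodup_reverse.mpr hWp.isTrail.edges_nodup
      have hW₂wv : s(v, w) ∉ W₂.edges := by
        rw [hWredges] at hWrnodupE; exact (List.nodup_cons.mp hWrnodupE).1
      have hW₂subW : ∀ e ∈ W₂.edges, e ∈ W.edges := by
        intro e hee
        have : e ∈ W.reverse.edges := by rw [hWredges]; exact List.mem_cons_of_mem _ hee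
        rwa [Walk.edges_reverse, List.mem_reverse] at this
      have hsub : ∀ e ∈ W₂.edges, e ∈ H.edgeSet := by
        intro e hee
        rcases hmem_split e (W₂.edges_subset_edgeSet hee) with rfl | rfl | h3
        · exact absurd (hW₂subW _ hee) hWuv
        · exact absurd hee (by rwa [Sym2.eq_swap] at hW₂wv)
        · exact h3
      have hd : ((g - 2 : ℕ) : ℕ∞) ≤ (W₂.transfer H hsub).length := by
        refine le_trans ?_ (edist_le _)
        rwa [← edist_comm] at hduw
      rw [Walk.length_transfer] at hd
      have hd' : g - 2 ≤ W₂.length := by exact_mod_cast hd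
      have hW₂len : W.length = W₂.length + 1 := by
        have : W.reverse.length = W₂.length + 1 := by rw [hW₂, Walk.length_cons]
        rwa [Walk.length_reverse] at this
      rw [hclen, hW₂len]
      exact_mod_cast Nat.cast_le.mpr (by omega : g ≤ W₂.length + 1 + 1)
    · have hsub : ∀ e ∈ W.edges, e ∈ H.edgeSet := by
        intro e hee
        rcases hmem_split e (W.edges_subset_edgeSet hee) with rfl | rfl | h3
        · exact absurd hee hWuv
        · exact absurd hee h2
        · exact h3
      have hd : ((g - 1 : ℕ) : ℕ∞) ≤ (W.transfer H hsub).length := hduv.trans (edist_le _)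
      rw [Walk.length_transfer] at hd
      have hd' : g - 1 ≤ W.length := by exact_mod_cast hd
      rw [hclen]
      exact_mod_cast Nat.cast_le.mpr (by omega : g ≤ W.length + 1)
  · by_cases h2 : s(w, v) ∈ c.edges
    · have hw : w ∈ c.support := c.fst_mem_support_of_mem_edges h2
      set c' := c.rotate w hw with hc'def
      have hc' : c'.IsCycle := hc.rotate hw
      have he' : s(w, v) ∈ c'.edges := (Walk.rotate_edges c w hw).mem_iff.mpr h2
      obtain ⟨W, hWp, hWwv, hWsub, hWlen⟩ := cycle_core c' hc' he'
      have hclen : c.length = W.length + 1 := by rw [hWlen, hc'def, length_rotate]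
      have hsub : ∀ e ∈ W.edges, e ∈ H.edgeSet := by
        intro e hee
        rcases hmem_split e (W.edges_subset_edgeSet hee) with rfl | rfl | h3
        · exact absurd ((Walk.rotate_edges c w hw).mem_iff.mp (hWsub _ hee)) h1
        · exact absurd hee hWwv
        · exact h3
      have hd : ((g - 1 : ℕ) : ℕ∞) ≤ (W.transfer H hsub).length := hdwv.trans (edist_le _)
      rw [Walk.length_transfer] at hd
      have hd' : g - 1 ≤ W.length := by exact_mod_cast hd
      rw [hclen]
      exact_mod_cast Nat.cast_le.mpr (by omega : g ≤ W.length + 1)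
    · have hsub : ∀ e ∈ c.edges, e ∈ H.edgeSet := by
        intro e hee
        rcases hmem_split e (c.edges_subset_edgeSet hee) with rfl | rfl | h3
        · exact absurd hee h1
        · exact absurd hee h2
        · exact h3
      have := le_egirth.mp hgirth a (c.transfer H hsub) (hc.transfer hsub)
      rwa [Walk.length_transfer] at this


/-- every vertex at finite positive distance has a predecessor. -/
lemma exists_pred {v u : V} {i : ℕ} (hi : 1 ≤ i) (h : G.edist v u = i) :
    ∃ x, G.Adj x u ∧ G.edist v x = (i - 1 : ℕ) := by
  obtain ⟨p, hp⟩ := exists_walk_of_edist_eq_coe h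
  have hrev : p.reverse.length = i := by rw [Walk.length_reverse]; exact hp
  cases hpr : p.reverse with
  | nil => rw [hpr] at hrev; simp at hrev; omega
  | @cons _ x _ h' q =>
    refine ⟨x, h'.symm, ?_⟩
    have hqlen : q.length = i - 1 := by
      rw [hpr, Walk.length_cons] at hrev; omega
    have hle : G.edist v x ≤ (i - 1 : ℕ) := by
      have := edist_le q.reverse
      rw [Walk.length_reverse, hqlen] at this
      exact this
    have hge : (i : ℕ∞) ≤ G.edist v x + 1 := by
      calc (i : ℕ∞) = G.edist v u := h.symm
        _ ≤ G.edist v x + G.edist x u := SimpleGraph.edist_triangle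
        _ ≤ G.edist v x + 1 := by
            gcongr
            exact le_of_eq (edist_eq_one_iff_adj.mpr h'.symm)
    have hne : G.edist v x ≠ ⊤ := by
      intro htop; rw [htop] at hle; exact absurd hle (by simp)
    lift G.edist v x to ℕ using hne with D hD
    have h1 : D ≤ i - 1 := by exact_mod_cast hle
    have h2 : i ≤ D + 1 := by exact_mod_cast hge
    congr 1
    omega


lemma ball_card_le [Fintype V] {v : V} {δ : ℕ} (hδ : 1 ≤ δ)
    (hdegv : (G.neighborSet v).ncard ≤ δ - 1)
    (hdeg : ∀ x, (G.neighborSet x).ncard ≤ δ + 1) (r : ℕ) :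
    ({u : V | G.edist v u ≤ (r : ℕ∞)}).ncard ≤ δ ^ r := by
  classical
  set sph : ℕ → Finset V := fun i => univ.filter (fun u => G.edist v u = (i : ℕ∞)) with hsph
  set ball : ℕ → Finset V := fun i => univ.filter (fun u => G.edist v u ≤ (i : ℕ∞)) with hball
  have hncard : ∀ x : V, (G.neighborSet x).ncard = (G.neighborSet x).toFinset.card := by
    intro x; exact Set.ncard_eq_toFinset_card' _
  -- sphere 1
  have h_sph1 : (sph 1).card ≤ δ - 1 := by
    have hsub : sph 1 ⊆ (G.neighborSet v).toFinset := by
      intro u hu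
      rw [hsph] at hu
      simp only [mem_filter, mem_univ, true_and] at hu
      rw [Set.mem_toFinset, mem_neighborSet]
      exact edist_eq_one_iff_adj.mp (by exact_mod_cast hu)
    calc (sph 1).card ≤ _ := card_le_card hsub
      _ = (G.neighborSet v).ncard := (hncard v).symm
      _ ≤ δ - 1 := hdegv
  -- sphere step
  have h_step : ∀ i, 1 ≤ i → (sph (i + 1)).card ≤ δ * (sph i).card := by
    intro i hi
    have hsub : sph (i + 1) ⊆ (sph i).biUnion
        (fun x => (G.neighborSet x).toFinset \ ball i) := by
      intro u hu
      rw [hsph] at hu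
      simp only [mem_filter, mem_univ, true_and] at hu
      obtain ⟨x, hadj, hx⟩ := exists_pred (by omega : 1 ≤ i + 1) hu
      rw [(by omega : i + 1 - 1 = i)] at hx
      rw [mem_biUnion]
      refine ⟨x, ?_, ?_⟩
      · rw [hsph]; simp only [mem_filter, mem_univ, true_and]; exact hx
      · rw [mem_sdiff, Set.mem_toFinset]
        refine ⟨hadj, ?_⟩
        rw [hball]
        simp only [mem_filter, mem_univ, true_and]
        rw [hu]
        intro hle
        have : i + 1 ≤ i := by exact_mod_cast hle
        omega
    refine le_trans (card_le_card hsub) (le_trans (card_biUnion_le) ?_)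
    rw [mul_comm]
    apply Finset.sum_le_card_nsmul
    intro x hx
    rw [hsph] at hx
    simp only [mem_filter, mem_univ, true_and] at hx
    obtain ⟨y, hadj, hy⟩ := exists_pred hi hx
    have hy_ball : y ∈ ball i := by
      rw [hball]; simp only [mem_filter, mem_univ, true_and]
      rw [hy]; exact_mod_cast Nat.cast_le.mpr (Nat.sub_le i 1)
    have hy_nb : y ∈ (G.neighborSet x).toFinset := by
      rw [Set.mem_toFinset, mem_neighborSet]; exact hadj.symm
    have hsub2 : (G.neighborSet x).toFinset \ ball i ⊆
        ((G.neighborSet x).toFinset).erase y := by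
      intro z hz
      rw [mem_sdiff] at hz
      rw [mem_erase]
      exact ⟨fun h => hz.2 (h ▸ hy_ball), hz.1⟩
    calc ((G.neighborSet x).toFinset \ ball i).card
        ≤ _ := card_le_card hsub2
      _ = (G.neighborSet x).toFinset.card - 1 := card_erase_of_mem hy_nb
      _ ≤ (δ + 1) - 1 := by  
          have := hdeg x; rw [hncard x] at this; omega
      _ = δ := by omega
  -- sphere bound
  have h_sphbound : ∀ j, (sph (j + 1)).card ≤ (δ - 1) * δ ^ j := by
    intro j
    induction j with
    | zero => simpa using h_sph1
    | succ k ih =>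
      calc (sph (k + 2)).card ≤ δ * (sph (k + 1)).card := h_step (k + 1) (by omega)
        _ ≤ δ * ((δ - 1) * δ ^ k) := Nat.mul_le_mul_left _ ih
        _ = (δ - 1) * δ ^ (k + 1) := by ring
  -- ball bound
  have h_ball0 : (ball 0).card ≤ 1 := by
    have : ball 0 ⊆ {v} := by
      intro u hu
      rw [hball] at hu
      simp only [mem_filter, mem_univ, true_and, Nat.cast_zero, nonpos_iff_eq_zero] at hu
      rw [mem_singleton]
      exact (edist_eq_zero_iff.mp hu).symm
    simpa using card_le_card this
  have h_ballstep : ∀ i, ball (i + 1) ⊆ ball i ∪ sph (i + 1) := by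
    intro i u hu
    rw [hball] at hu
    simp only [mem_filter, mem_univ, true_and] at hu
    have hne : G.edist v u ≠ ⊤ := fun htop => by
      rw [htop] at hu; exact ENat.coe_ne_top _ (top_le_iff.mp hu)
    rw [mem_union]
    obtain ⟨D, hD0⟩ := WithTop.ne_top_iff_exists.mp hne
    have hD : ((D : ℕ) : ℕ∞) = G.edist v u := by exact_mod_cast hD0
    rw [← hD] at hu
    have hD' : D ≤ i + 1 := by exact_mod_cast hu
    rcases Nat.lt_or_ge D (i + 1) with hlt | hge
    · left; rw [hball]; simp only [mem_filter, mem_univ, true_and, ← hD]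
      exact_mod_cast Nat.cast_le.mpr (by omega)
    · right; rw [hsph]; simp only [mem_filter, mem_univ, true_and, ← hD]
      have hDe : D = i + 1 := by omega
      rw [hDe]
  have h_ballcard : ∀ i, (ball i).card ≤ δ ^ i := by
    intro i
    induction i with
    | zero => simpa using h_ball0
    | succ k ih =>
      calc (ball (k + 1)).card ≤ (ball k ∪ sph (k + 1)).card := card_le_card (h_ballstep k)
        _ ≤ (ball k).card + (sph (k + 1)).card := card_union_le _ _
        _ ≤ δ ^ k + (δ - 1) * δ ^ k := Nat.add_le_add ih (h_sphbound k)
        _ = (1 + (δ - 1)) * δ ^ k := by ring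
        _ = δ ^ (k + 1) := by rw [(by omega : 1 + (δ - 1) = δ), pow_succ, mul_comm]
  calc ({u : V | G.edist v u ≤ (r : ℕ∞)}).ncard
      = ({u : V | G.edist v u ≤ (r : ℕ∞)}).toFinset.card := Set.ncard_eq_toFinset_card' _
    _ = (ball r).card := by
        congr 1
        rw [hball]
        ext u
        simp [Set.mem_toFinset]
    _ ≤ δ ^ r := h_ballcard r


lemma nbhd_sup_edge (H : SimpleGraph V) {u v : V} (hne : u ≠ v) (x : V) :
    (H ⊔ edge u v).neighborSet x =
      if x = u then insert v (H.neighborSet x)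
      else if x = v then insert u (H.neighborSet x) else H.neighborSet x := by
  ext y
  simp only [mem_neighborSet, sup_adj, edge_adj]
  split_ifs with h1 h2
  · subst h1; simp only [Set.mem_insert_iff, mem_neighborSet]; aesop
  · subst h2; simp only [Set.mem_insert_iff, mem_neighborSet]; aesop
  · simp only [mem_neighborSet]; aesop

lemma nbhd_sdiff_edge (H : SimpleGraph V) {u w : V} (hne : u ≠ w) (x : V) :
    (H \ edge u w).neighborSet x =
      if x = u then H.neighborSet x \ {w}
      else if x = w then H.neighborSet x \ {u} else H.neighborSet x := by
  ext y
  simp only [mem_neighborSet, sdiff_adj, edge_adj]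
  split_ifs with h1 h2
  · subst h1; simp only [Set.mem_diff, Set.mem_singleton_iff, mem_neighborSet]; aesop
  · subst h2; simp only [Set.mem_diff, Set.mem_singleton_iff, mem_neighborSet]; aesop
  · simp only [mem_neighborSet]; aesop


lemma main {n δ g : ℕ} (hδ : 3 ≤ δ) (hg : 3 ≤ g) (hn : 2 * δ ^ (g - 2) + 1 ≤ n) :
    ∃ G : SimpleGraph (Fin n),
      (∀ v, δ ≤ (G.neighborSet v).ncard) ∧ (g : ℕ∞) ≤ G.egirth := by
  classical
  set P : SimpleGraph (Fin n) → Prop := fun G =>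
    (∀ x, (G.neighborSet x).ncard ≤ δ + 1) ∧ (g : ℕ∞) ≤ G.egirth with hP
  have hbot : P ⊥ := by
    constructor
    · intro x
      have : (⊥ : SimpleGraph (Fin n)).neighborSet x = ∅ := by ext y; simp
      rw [this, Set.ncard_empty]
      omega
    · simp
  obtain ⟨G, hPG, hmax⟩ := Set.Finite.exists_maximalFor
    (fun G : SimpleGraph (Fin n) => G.edgeSet.ncard) {G | P G} (Set.toFinite _) ⟨⊥, hbot⟩
  rw [Set.mem_setOf_eq] at hPG
  obtain ⟨hdeg, hgirth⟩ := hPG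
  refine ⟨G, ?_, hgirth⟩
  by_contra hcon
  push_neg at hcon
  obtain ⟨v, hv⟩ := hcon
  have hdv : (G.neighborSet v).ncard ≤ δ - 1 := by omega
  set B : Set (Fin n) := {u | G.edist v u ≤ ((g - 2 : ℕ) : ℕ∞)} with hB
  have hBcard : B.ncard ≤ δ ^ (g - 2) := ball_card_le (by omega) hdv hdeg (g - 2)
  have hvB : v ∈ B := by
    rw [hB]
    simp only [Set.mem_setOf_eq, SimpleGraph.edist_self]
    exact zero_le
  have hcompl : B.ncard + Bᶜ.ncard = n := by
    have h := Set.ncard_add_ncard_compl B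
    rwa [Nat.card_eq_fintype_card, Fintype.card_fin] at h
  have hT1 : B.ncard + 1 ≤ Bᶜ.ncard := by omega
  have hTfact : ∀ u ∈ Bᶜ, ((g - 1 : ℕ) : ℕ∞) ≤ G.edist u v ∧ u ≠ v ∧ ¬ G.Adj u v := by
    intro u hu
    rw [Set.mem_compl_iff, hB, Set.mem_setOf_eq] at hu
    have hlt : ((g - 2 : ℕ) : ℕ∞) < G.edist v u := lt_of_not_ge hu
    have hge : ((g - 1 : ℕ) : ℕ∞) ≤ G.edist v u := by
      have h1 := Order.add_one_le_of_lt hlt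
      calc ((g - 1 : ℕ) : ℕ∞) = ((g - 2 : ℕ) : ℕ∞) + 1 := by
            rw [← Nat.cast_add_one]; congr 1; omega
        _ ≤ G.edist v u := h1
    refine ⟨by rwa [SimpleGraph.edist_comm], ?_, ?_⟩
    · rintro rfl; rw [SimpleGraph.edist_self] at hlt; simp at hlt
    · intro hadj
      have h1 : G.edist v u ≤ 1 := le_of_eq (edist_eq_one_iff_adj.mpr hadj.symm)
      have h2 : (1 : ℕ∞) ≤ ((g - 2 : ℕ) : ℕ∞) := by
        have hh : (1 : ℕ) ≤ g - 2 := by omega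
        exact_mod_cast Nat.cast_le.mpr hh
      exact hu (h1.trans h2)
  have hTdeg : ∀ u ∈ Bᶜ, (G.neighborSet u).ncard = δ + 1 := by
    intro u hu
    obtain ⟨hud, hune, hunadj⟩ := hTfact u hu
    by_contra hne'
    have hule : (G.neighborSet u).ncard ≤ δ := by have := hdeg u; omega
    set G' := G ⊔ edge u v with hG'
    have hPG' : P G' := by
      constructor
      · intro x
        rw [hG', nbhd_sup_edge G hune x]
        split_ifs with h1 h2
        · subst h1; exact le_trans (Set.ncard_insert_le _ _) (by omega)
        · subst h2; exact le_trans (Set.ncard_insert_le _ _) (by omega)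
        · exact hdeg x
      · exact egirth_sup_edge (by omega) hune hgirth hud
    have hedge : G'.edgeSet.ncard = G.edgeSet.ncard + 1 := by
      rw [hG', edgeSet_sup, edge_edgeSet_of_ne hune, Set.union_singleton,
        Set.ncard_insert_of_notMem (by rwa [mem_edgeSet]) (Set.toFinite _)]
    have : G'.edgeSet.ncard ≤ G.edgeSet.ncard := hmax (j := G') hPG' (by beta_reduce; omega)
    omega
  have hTT : ∃ u ∈ Bᶜ, ∃ w ∈ Bᶜ, G.Adj u w := by
    by_contra hTT
    push_neg at hTT
    set Tf : Finset (Fin n) := Set.toFinset Bᶜ with hTf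
    set Bf : Finset (Fin n) := Set.toFinset B with hBf
    have hTfcard : Tf.card = Bᶜ.ncard := (Set.ncard_eq_toFinset_card' _).symm
    have hBfcard : Bf.card = B.ncard := (Set.ncard_eq_toFinset_card' _).symm
    have hvmem : v ∈ Bf := by rw [hBf, Set.mem_toFinset]; exact hvB
    have key : ∀ u ∈ Tf, Finset.filter (fun b => G.Adj u b) (Bf.erase v)
        = (G.neighborSet u).toFinset := by
      intro u hu
      rw [hTf, Set.mem_toFinset] at hu
      ext y
      simp only [Finset.mem_filter, Finset.mem_erase, Set.mem_toFinset, mem_neighborSet]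
      constructor
      · rintro ⟨_, h2⟩; exact h2
      · intro hadj
        refine ⟨⟨?_, ?_⟩, hadj⟩
        · rintro rfl; exact (hTfact u hu).2.2 hadj
        · rw [hBf, Set.mem_toFinset]
          by_contra hyB
          exact hTT u hu y hyB hadj
    have swap : ∑ u ∈ Tf, (Finset.filter (fun b => G.Adj u b) (Bf.erase v)).card
        = ∑ b ∈ Bf.erase v, (Finset.filter (fun u => G.Adj u b) Tf).card := by
      simp_rw [Finset.card_filter]
      exact Finset.sum_comm
    have lhs_eq : ∑ u ∈ Tf, (Finset.filter (fun b => G.Adj u b) (Bf.erase v)).card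
        = (δ + 1) * Tf.card := by
      rw [Finset.sum_congr rfl (fun u hu => by
        rw [key u hu, ← Set.ncard_eq_toFinset_card',
          hTdeg u (by rwa [hTf, Set.mem_toFinset] at hu)])]
      rw [Finset.sum_const, smul_eq_mul, mul_comm]
    have rhs_le : ∀ b ∈ Bf.erase v, (Finset.filter (fun u => G.Adj u b) Tf).card ≤ δ := by
      intro b hb
      rw [Finset.mem_erase, hBf, Set.mem_toFinset] at hb
      obtain ⟨hbv, hbB⟩ := hb
      rw [hB, Set.mem_setOf_eq] at hbB
      have hne : G.edist v b ≠ ⊤ := fun htop => by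
        rw [htop] at hbB; exact ENat.coe_ne_top _ (top_le_iff.mp hbB)
      obtain ⟨D, hD0⟩ := WithTop.ne_top_iff_exists.mp hne
      have hD : ((D : ℕ) : ℕ∞) = G.edist v b := by exact_mod_cast hD0
      have hD1 : 1 ≤ D := by
        by_contra hD1
        have : D = 0 := by omega
        subst this
        exact hbv (edist_eq_zero_iff.mp hD.symm).symm
      obtain ⟨y, hyadj, hy⟩ := exists_pred hD1 hD.symm
      have hDg : D ≤ g - 2 := by
        rw [← hD] at hbB; exact_mod_cast hbB
      have hyB : y ∈ B := by
        rw [hB, Set.mem_setOf_eq, hy]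
        have hD2 : (D - 1 : ℕ) ≤ (g - 2 : ℕ) := by omega
        exact_mod_cast Nat.cast_le.mpr hD2
      have hsub : Finset.filter (fun u => G.Adj u b) Tf ⊆
          ((G.neighborSet b).toFinset).erase y := by
        intro z hz
        rw [Finset.mem_filter] at hz
        rw [Finset.mem_erase, Set.mem_toFinset, mem_neighborSet]
        refine ⟨?_, hz.2.symm⟩
        rintro rfl
        rw [hTf, Set.mem_toFinset] at hz
        exact hz.1 hyB
      calc (Finset.filter (fun u => G.Adj u b) Tf).card
          ≤ _ := Finset.card_le_card hsub
        _ = (G.neighborSet b).toFinset.card - 1 := Finset.card_erase_of_mem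
            (by rw [Set.mem_toFinset, mem_neighborSet]; exact hyadj.symm)
        _ ≤ δ := by
            have := hdeg b
            rw [Set.ncard_eq_toFinset_card'] at this
            omega
    have count : (δ + 1) * Tf.card ≤ δ * (Bf.card - 1) := by
      calc (δ + 1) * Tf.card = _ := lhs_eq.symm
        _ = _ := swap
        _ ≤ ∑ _b ∈ Bf.erase v, δ := Finset.sum_le_sum rhs_le
        _ = (Bf.erase v).card * δ := by rw [Finset.sum_const, smul_eq_mul]
        _ = δ * (Bf.card - 1) := by rw [Finset.card_erase_of_mem hvmem, mul_comm]
    have hb1 : 1 ≤ Bf.card := Finset.card_pos.mpr ⟨v, hvmem⟩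
    have htb : Bf.card + 1 ≤ Tf.card := by omega
    have hchain : δ * (Bf.card - 1) ≤ δ * (Tf.card - 1) :=
      Nat.mul_le_mul_left _ (by omega)
    have hfin : δ * (Tf.card - 1) < (δ + 1) * Tf.card := by
      have ht1 : 1 ≤ Tf.card := by omega
      calc δ * (Tf.card - 1) ≤ δ * Tf.card := Nat.mul_le_mul_left _ (by omega)
        _ < δ * Tf.card + Tf.card := by omega
        _ = (δ + 1) * Tf.card := by ring
    omega
  obtain ⟨u, hu, w, hw, huw⟩ := hTT
  obtain ⟨hud, hune, hunadj⟩ := hTfact u hu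
  obtain ⟨hwd, hwne, hwnadj⟩ := hTfact w hw
  have huwne : u ≠ w := huw.ne
  set H := G \ edge u w with hH
  have hHle : H ≤ G := sdiff_le
  have hgirthH : (g : ℕ∞) ≤ H.egirth := le_trans hgirth (egirth_anti hHle)
  have hduv : ((g - 1 : ℕ) : ℕ∞) ≤ H.edist u v := le_trans hud (edist_anti hHle)
  have hdwv : ((g - 1 : ℕ) : ℕ∞) ≤ H.edist w v := le_trans hwd (edist_anti hHle)
  have hduw : ((g - 2 : ℕ) : ℕ∞) ≤ H.edist u w := by
    refine le_trans ?_ (edist_sdiff_edge huw hgirth)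
    have hgg : (g - 2 : ℕ) ≤ (g - 1 : ℕ) := by omega
    exact_mod_cast Nat.cast_le.mpr hgg
  set G₂ := H ⊔ edge u v ⊔ edge w v with hG₂
  have hNu : (G.neighborSet u).ncard = δ + 1 := hTdeg u hu
  have hNw : (G.neighborSet w).ncard = δ + 1 := hTdeg w hw
  have hPG₂ : P G₂ := by
    constructor
    · intro x
      have e1 := nbhd_sup_edge (H ⊔ edge u v) hwne x
      have e2 := nbhd_sup_edge H hune x
      have e3 := nbhd_sdiff_edge G huwne x
      rw [hG₂, e1]
      by_cases hxw : x = w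
      · subst hxw
        rw [if_pos rfl]
        rw [if_neg huwne.symm, if_neg hwne] at e2
        rw [if_neg huwne.symm, if_pos rfl] at e3
        rw [e2, hH, e3]
        refine le_trans (Set.ncard_insert_le _ _) ?_
        have hd : (G.neighborSet x \ {u}).ncard = (G.neighborSet x).ncard - 1 :=
          Set.ncard_diff_singleton_of_mem (by rw [mem_neighborSet]; exact huw.symm)
        omega
      · rw [if_neg hxw]
        by_cases hxv : x = v
        · subst hxv
          rw [if_pos rfl]
          rw [if_neg (Ne.symm hune), if_pos rfl] at e2
          rw [if_neg (Ne.symm hune), if_neg (Ne.symm hwne)] at e3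
          rw [e2, hH, e3]
          refine le_trans (Set.ncard_insert_le _ _) ?_
          refine le_trans (Nat.add_le_add_right (Set.ncard_insert_le _ _) 1) ?_
          omega
        · rw [if_neg hxv]
          by_cases hxu : x = u
          · subst hxu
            rw [if_pos rfl] at e2
            rw [if_pos rfl] at e3
            rw [e2, hH, e3]
            refine le_trans (Set.ncard_insert_le _ _) ?_
            have hd : (G.neighborSet x \ {w}).ncard = (G.neighborSet x).ncard - 1 :=
              Set.ncard_diff_singleton_of_mem (by rw [mem_neighborSet]; exact huw)
            omega
          · rw [if_neg hxu, if_neg hxv] at e2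
            rw [if_neg hxu, if_neg hxw] at e3
            rw [e2, hH, e3]
            exact hdeg x
    · exact egirth_sup_two_edges (by omega) hune hwne huwne hgirthH hduv hdwv hduw
  have hedge₂ : G₂.edgeSet.ncard = G.edgeSet.ncard + 1 := by
    have h1 : s(u, w) ∈ G.edgeSet := (mem_edgeSet G).mpr huw
    have hEpos : 0 < G.edgeSet.ncard := by
      rw [Set.ncard_pos (Set.toFinite _)]
      exact ⟨_, h1⟩
    have hnm1 : s(u, v) ∉ G.edgeSet \ {s(u, w)} := by
      intro hmem
      exact hunadj ((mem_edgeSet G).mp hmem.1)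
    have hnm2 : s(w, v) ∉ insert s(u, v) (G.edgeSet \ {s(u, w)}) := by
      intro hmem
      rcases hmem with hmem | hmem
      · exact huwne (Sym2.congr_left.mp hmem).symm
      · exact hwnadj ((mem_edgeSet G).mp hmem.1)
    rw [hG₂, edgeSet_sup, edgeSet_sup, hH, edgeSet_sdiff, edge_edgeSet_of_ne huwne,
      edge_edgeSet_of_ne hune, edge_edgeSet_of_ne hwne, Set.union_singleton,
      Set.union_singleton, Set.ncard_insert_of_notMem hnm2 (Set.toFinite _),
      Set.ncard_insert_of_notMem hnm1 (Set.toFinite _),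
      Set.ncard_diff_singleton_of_mem h1]
    omega
  have : G₂.edgeSet.ncard ≤ G.edgeSet.ncard := hmax (j := G₂) hPG₂ (by beta_reduce; omega)
  omega


end ExistsLargeGirth

/-- Given `δ ≥ 3` and `g ≥ 3`, for every `n ≥ 2(δ^{g−1} − 1)/(δ − 1) − 1` there exists a
graph on `n` vertices with minimum degree at least `δ` and girth at least `g`. -/
theorem exists_large_girth_min_degree (δ g n : ℕ) (hδ : 3 ≤ δ) (hg : 3 ≤ g)
    (hn : 2 * ((δ : ℝ) ^ (g - 1) - 1) / ((δ : ℝ) - 1) - 1 ≤ (n : ℝ)) :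
    ∃ G : SimpleGraph (Fin n),
      (∀ v, δ ≤ (G.neighborSet v).ncard) ∧ (g : ℕ∞) ≤ G.egirth := by
  apply ExistsLargeGirth.main hδ hg
  set K : ℕ := ∑ i ∈ Finset.range (g - 1), δ ^ i with hK
  have hδ1 : (δ : ℝ) ≠ 1 := by
    have : δ ≠ 1 := by omega
    exact_mod_cast this
  have hgeom : ((K : ℝ)) = ((δ : ℝ) ^ (g - 1) - 1) / ((δ : ℝ) - 1) := by
    rw [hK]
    push_cast
    rw [geom_sum_eq hδ1]
  have hKn : 2 * (K : ℝ) - 1 ≤ n := by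
    rw [hgeom, ← mul_div_assoc]
    exact hn
  have hKnat : 2 * K ≤ n + 1 := by
    have h2 : 2 * (K : ℝ) ≤ (n : ℝ) + 1 := by linarith
    exact_mod_cast h2
  have hKlb : δ ^ (g - 2) + 1 ≤ K := by
    have hsub : ({0, g - 2} : Finset ℕ) ⊆ Finset.range (g - 1) := by
      intro i hi
      simp only [Finset.mem_insert, Finset.mem_singleton] at hi
      rcases hi with rfl | rfl <;> rw [Finset.mem_range] <;> omega
    have hle := Finset.sum_le_sum_of_subset (f := fun i => δ ^ i) hsub
    rw [Finset.sum_pair (by omega : (0 : ℕ) ≠ g - 2)] at hle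
    rw [pow_zero, ← hK] at hle; omega
  omega
end

section
/- Let k ≥ 3 and ℓ ≥ 1 be integers. For every n ≥ 2((ℓ(k−1)+k)^4 − 1)/((ℓ+1)(k−1)) − 1, px_{k,ℓ}(K_n) = 2: there exists a 2-edge-coloring of K_n such that every k-subset S of vertices is contained in ℓ internally disjoint proper S-paths. -/
open SimpleGraph

/-- No two adjacent edges of the subgraph `T` receive the same color under `c`. -/
def ProperSubgraph {V α : Type*} {G : SimpleGraph V} (c : Sym2 V → α) (T : G.Subgraph) : Prop :=
  ∀ u v w, T.Adj u v → T.Adj u w → v ≠ w → c s(u, v) ≠ c s(u, w)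

/-- `c` is a `(k,ℓ)`-proper coloring of `G`: every `k`-subset `S` of vertices is connected by
`ℓ` internally disjoint proper `S`-trees. -/
def IsProperColoring {V α : Type*} (G : SimpleGraph V) (k ℓ : ℕ) (c : Sym2 V → α) : Prop :=
  ∀ S : Finset V, S.card = k →
    ∃ T : Fin ℓ → G.Subgraph,
      (∀ i, IsSTree G (S : Set V) (T i) ∧ ProperSubgraph c (T i)) ∧
      InternallyDisjoint (S : Set V) T

/-- The `(k,ℓ)`-proper index of `G` is at most `m`. -/
def pxLE {V : Type*} (G : SimpleGraph V) (k ℓ m : ℕ) : Prop :=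
  ∃ c : Sym2 V → Fin m, IsProperColoring G k ℓ c

/-- The `(k,ℓ)`-proper index of `G` equals `2`. -/
def pxEq2 {V : Type*} (G : SimpleGraph V) (k ℓ : ℕ) : Prop :=
  pxLE G k ℓ 2 ∧ ¬ pxLE G k ℓ 1

section PXProof

open List

variable {V : Type*}

/-- Walk in the complete graph along a list of vertices with distinct consecutive entries. -/
def wfl : (l : List V) → (hc : l.Chain' Ne) → (hne : l ≠ []) →
    (⊤ : SimpleGraph V).Walk (l.head hne) (l.getLast hne)
  | [_], _, _ => Walk.nil
  | a :: b :: t, hc, _ =>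
    (Walk.cons (by simpa [SimpleGraph.top_adj] using hc.rel_head)
      (wfl (b :: t) hc.tail (by simp))).copy rfl
      ((List.getLast_cons (by simp : (b :: t) ≠ [])).symm)

lemma wfl_support : ∀ (l : List V) (hc hne), (wfl l hc hne).support = l
  | [_], _, _ => rfl
  | a :: b :: t, hc, hne => by
    rw [wfl]
    simp only [Walk.support_copy, Walk.support_cons]
    erw [wfl_support (b :: t)]
    simp

lemma wfl_edges : ∀ (l : List V) (hc hne),
    (wfl l hc hne).edges = l.zipWith (fun x y => s(x, y)) l.tail
  | [_], _, _ => rfl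
  | a :: b :: t, hc, hne => by
    rw [wfl]
    simp only [Walk.edges_copy, Walk.edges_cons]
    erw [wfl_edges (b :: t)]
    rfl

lemma wfl_adj_iff {l : List V} {hc hne} {x y : V} :
    (wfl l hc hne).toSubgraph.Adj x y ↔
      ∃ i, i + 1 < l.length ∧ ((l[i]? = some x ∧ l[i+1]? = some y) ∨ (l[i]? = some y ∧ l[i+1]? = some x)) := by
  rw [← SimpleGraph.Subgraph.mem_edgeSet, SimpleGraph.Walk.mem_edges_toSubgraph, wfl_edges,
    List.mem_iff_getElem]
  constructor
  · rintro ⟨i, hi, he⟩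
    rw [List.length_zipWith, List.length_tail] at hi
    have hi1 : i + 1 < l.length := by omega
    refine ⟨i, hi1, ?_⟩
    rw [List.getElem_zipWith, List.getElem_tail] at he
    rw [Sym2.eq_iff] at he
    have h0 : i < l.length := by omega
    rcases he with ⟨h1, h2⟩ | ⟨h1, h2⟩
    · exact Or.inl ⟨by simp [List.getElem?_eq_getElem h0, h1], by simp [List.getElem?_eq_getElem hi1, h2]⟩
    · exact Or.inr ⟨by simp [List.getElem?_eq_getElem h0, h1], by simp [List.getElem?_eq_getElem hi1, h2]⟩
  · rintro ⟨i, hi1, he⟩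
    have h0 : i < l.length := by omega
    refine ⟨i, ?_, ?_⟩
    · rw [List.length_zipWith, List.length_tail]; omega
    · rw [List.getElem_zipWith, List.getElem_tail]
      rw [List.getElem?_eq_getElem h0, List.getElem?_eq_getElem hi1] at he
      rw [Sym2.eq_iff]
      rcases he with ⟨h1, h2⟩ | ⟨h1, h2⟩
      · exact Or.inl ⟨Option.some.inj h1, Option.some.inj h2⟩
      · exact Or.inr ⟨Option.some.inj h1, Option.some.inj h2⟩

/-- A graph with an injective height function whose edges are height-steps is acyclic. -/
lemma acyclic_of_height {W : Type*} (H : SimpleGraph W) (f : W → ℕ)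
    (hinj : Function.Injective f)
    (hadj : ∀ u v, H.Adj u v → f u + 1 = f v ∨ f v + 1 = f u) : H.IsAcyclic := by
  classical
  intro v c hc
  obtain ⟨u, hu_mem, hu_max⟩ := Finset.exists_max_image c.support.toFinset f
    ⟨v, by simp [c.start_mem_support]⟩
  rw [List.mem_toFinset] at hu_mem
  have hmax : ∀ x ∈ c.support, f x ≤ f u := fun x hx => hu_max x (by simp [hx])
  have hc' := hc.rotate hu_mem
  have hsupmem : ∀ x ∈ (c.rotate u hu_mem).support, f x ≤ f u := by
    intro x hx
    rcases (c.rotate u hu_mem).mem_support_iff.mp hx with rfl | hx'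
    · exact le_rfl
    · exact hmax x (c.mem_support_iff.mpr (Or.inr ((c.support_rotate u hu_mem).mem_iff.mp hx')))
  generalize c.rotate u hu_mem = c' at hc' hsupmem
  obtain ⟨y, h, p, rfl⟩ := SimpleGraph.Walk.not_nil_iff.mp hc'.not_nil
  rw [SimpleGraph.Walk.cons_isCycle_iff] at hc'
  obtain ⟨z, h2, q, hrev⟩ := SimpleGraph.Walk.not_nil_iff.mp
    (SimpleGraph.Walk.not_nil_of_ne (p := p.reverse) h.ne)
  have hyz : y = z := by
    apply hinj
    have hy_mem : y ∈ (SimpleGraph.Walk.cons h p).support := by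
      simp [SimpleGraph.Walk.support_cons, p.start_mem_support]
    have hz_mem : z ∈ (SimpleGraph.Walk.cons h p).support := by
      have : z ∈ p.reverse.support := by rw [hrev]; simp [q.start_mem_support]
      rw [SimpleGraph.Walk.support_reverse, List.mem_reverse] at this
      simp [SimpleGraph.Walk.support_cons, this]
    have h1 := hadj u y h
    have h2' := hadj u z h2
    have hy := hsupmem y hy_mem
    have hz := hsupmem z hz_mem
    omega
  have hmem : s(u, z) ∈ p.edges := by
    have : s(u, z) ∈ p.reverse.edges := by rw [hrev]; simp
    rwa [SimpleGraph.Walk.edges_reverse, List.mem_reverse] at this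
  rw [← hyz] at hmem
  exact hc'.2 hmem

lemma wfl_isTree [DecidableEq V] (l : List V) (hnd : l.Nodup) (hc hne) :
    (wfl l hc hne).toSubgraph.coe.IsTree := by
  constructor
  · exact (SimpleGraph.Subgraph.connected_iff'.mp (wfl l hc hne).toSubgraph_connected)
  · apply acyclic_of_height _ (fun x => l.idxOf x.val)
    · intro a b hab
      have ha : a.val ∈ l := by
        have := a.prop
        rwa [SimpleGraph.Walk.mem_verts_toSubgraph, wfl_support] at this
      have hb : b.val ∈ l := by
        have := b.prop
        rwa [SimpleGraph.Walk.mem_verts_toSubgraph, wfl_support] at this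
      exact Subtype.ext ((List.idxOf_inj ha).mp hab)
    · intro a b hab
      rw [SimpleGraph.Subgraph.coe_adj] at hab
      rw [wfl_adj_iff] at hab
      obtain ⟨i, hi1, hor⟩ := hab
      have h0 : i < l.length := by omega
      rw [List.getElem?_eq_getElem h0, List.getElem?_eq_getElem hi1] at hor
      rcases hor with ⟨h1, h2⟩ | ⟨h1, h2⟩
      · left
        rw [← Option.some.inj h1, ← Option.some.inj h2,
          List.Nodup.idxOf_getElem hnd i h0, List.Nodup.idxOf_getElem hnd (i+1) hi1]
      · right
        rw [← Option.some.inj h1, ← Option.some.inj h2,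
          List.Nodup.idxOf_getElem hnd i h0, List.Nodup.idxOf_getElem hnd (i+1) hi1]

/-- Parity triple condition: entries two apart have different parity. -/
def Tri (P : V → Bool) : List V → Prop
  | a :: b :: c :: t => P a ≠ P c ∧ Tri P (b :: c :: t)
  | _ => True

lemma tri_get {P : V → Bool} : ∀ {l : List V}, Tri P l → ∀ i (h : i + 2 < l.length),
    P l[i] ≠ P l[i+2]
  | a :: b :: c :: t, ht, 0, h => ht.1
  | a :: b :: c :: t, ht, (i+1), h => by
    have := tri_get ht.2 i (by simpa using h)
    simpa using this

lemma wfl_proper {α : Type*} (P : V → Bool) [DecidableEq V] (c0 : Sym2 V → α)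
    (hcol : ∀ u v w : V, P v ≠ P w → c0 s(u,v) ≠ c0 s(u,w))
    (l : List V) (hnd : l.Nodup) (htri : Tri P l) (hc hne) :
    ∀ u v w, (wfl l hc hne).toSubgraph.Adj u v → (wfl l hc hne).toSubgraph.Adj u w → v ≠ w →
      c0 s(u,v) ≠ c0 s(u,w) := by
  have injg : ∀ i j (hi : i < l.length) (hj : j < l.length), l[i] = l[j] → i = j := by
    intro i j hi hj hij
    rw [← List.Nodup.idxOf_getElem hnd i hi, ← List.Nodup.idxOf_getElem hnd j hj, hij]
  intro u v w h1 h2 hvw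
  apply hcol
  rw [wfl_adj_iff] at h1 h2
  obtain ⟨i, hi, h1⟩ := h1
  obtain ⟨j, hj, h2⟩ := h2
  have hi0 : i < l.length := by omega
  have hj0 : j < l.length := by omega
  simp only [List.getElem?_eq_getElem hi0, List.getElem?_eq_getElem hi,
    List.getElem?_eq_getElem hj0, List.getElem?_eq_getElem hj, Option.some.injEq] at h1 h2
  rcases h1 with ⟨ha1, ha2⟩ | ⟨ha1, ha2⟩ <;> rcases h2 with ⟨hb1, hb2⟩ | ⟨hb1, hb2⟩
  · exfalso
    have hij : i = j := injg i j hi0 hj0 (ha1.trans hb1.symm)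
    subst hij
    exact hvw (ha2.symm.trans hb2)
  · -- u = l[i] = l[j+1], v = l[i+1], w = l[j]
    have hij : i = j + 1 := injg i (j+1) hi0 hj (ha1.trans hb2.symm)
    subst hij
    have := tri_get htri j (by omega)
    rw [hb1, ha2] at this
    exact this.symm
  · -- u = l[i+1] = l[j], v = l[i], w = l[j+1]
    have hij : j = i + 1 := injg j (i+1) hj0 hi (hb1.trans ha2.symm)
    subst hij
    have := tri_get htri i (by omega)
    rw [ha1, hb2] at this
    exact this
  · exfalso
    have hij : i = j := Nat.succ_injective (injg (i+1) (j+1) hi hj (ha2.trans hb2.symm))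
    subst hij
    exact hvw (ha1.symm.trans hb1)

/-- Interleave private connector vertices into a list, ensuring the proper-parity condition. -/
def glue (P : V → Bool) (c : Bool → ℕ → V) : ℕ → List V → List V
  | _, [] => []
  | _, [a] => [a]
  | j, a :: b :: t =>
    if P a = P b then
      a :: c (!P a) j :: c (!P a) (j+1) :: c (P a) (j+2) :: glue P c (j+3) (b :: t)
    else
      a :: c (!P a) j :: glue P c (j+3) (b :: t)

variable {P : V → Bool} {c : Bool → ℕ → V}

lemma glue_shape (j : ℕ) (a : V) (t : List V) :
    ∃ r, glue P c j (a :: t) = a :: r := by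
  cases t with
  | nil => exact ⟨[], rfl⟩
  | cons b t' =>
    rw [glue]
    split
    · exact ⟨_, rfl⟩
    · exact ⟨_, rfl⟩

lemma glue_ne_nil (j : ℕ) {l : List V} (h : l ≠ []) : glue P c j l ≠ [] := by
  cases l with
  | nil => exact absurd rfl h
  | cons a t => obtain ⟨r, hr⟩ := glue_shape (P := P) (c := c) j a t; simp [hr]

lemma glue_head (j : ℕ) (a : V) (t : List V) (h) :
    (glue P c j (a :: t)).head h = a := by
  obtain ⟨r, hr⟩ := glue_shape (P := P) (c := c) j a t
  simp [hr]

lemma mem_glue_of_mem : ∀ (j : ℕ) (l : List V) (x : V), x ∈ l → x ∈ glue P c j l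
  | _, [], x, hx => by simp at hx
  | _, [a], x, hx => hx
  | j, a :: b :: t, x, hx => by
    rw [glue]
    have : x = a ∨ x ∈ b :: t := by simpa using hx
    split
    · rcases this with rfl | h
      · simp
      · simp only [List.mem_cons]
        right; right; right; right
        exact mem_glue_of_mem (j+3) (b :: t) x h
    · rcases this with rfl | h
      · simp
      · simp only [List.mem_cons]
        right; right
        exact mem_glue_of_mem (j+3) (b :: t) x h

lemma mem_glue : ∀ (j : ℕ) (l : List V) (x : V), x ∈ glue P c j l →
    x ∈ l ∨ ∃ b m, j ≤ m ∧ m < j + 3 * l.length ∧ x = c b m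
  | _, [], x, hx => by simp [glue] at hx
  | _, [a], x, hx => Or.inl hx
  | j, a :: b :: t, x, hx => by
    rw [glue] at hx
    have hlen : (a :: b :: t).length = t.length + 2 := by simp
    split at hx
    · rcases (by simpa using hx : x = a ∨ x = c (!P a) j ∨ x = c (!P a) (j+1) ∨
        x = c (P a) (j+2) ∨ x ∈ glue P c (j+3) (b :: t)) with rfl | h | h | h | h
      · exact Or.inl (by simp)
      · exact Or.inr ⟨_, j, le_rfl, by simp only [hlen]; omega, h⟩
      · exact Or.inr ⟨_, j+1, by omega, by simp only [hlen]; omega, h⟩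
      · exact Or.inr ⟨_, j+2, by omega, by simp only [hlen]; omega, h⟩
      · rcases mem_glue (j+3) (b :: t) x h with h' | ⟨b', m, hm1, hm2, hm3⟩
        · exact Or.inl (by simp [h'])
        · refine Or.inr ⟨b', m, by omega, ?_, hm3⟩
          simp only [List.length_cons] at hm2 ⊢
          omega
    · rcases (by simpa using hx : x = a ∨ x = c (!P a) j ∨ x ∈ glue P c (j+3) (b :: t))
        with rfl | h | h
      · exact Or.inl (by simp)
      · exact Or.inr ⟨_, j, le_rfl, by simp only [hlen]; omega, h⟩
      · rcases mem_glue (j+3) (b :: t) x h with h' | ⟨b', m, hm1, hm2, hm3⟩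
        · exact Or.inl (by simp [h'])
        · refine Or.inr ⟨b', m, by omega, ?_, hm3⟩
          simp only [List.length_cons] at hm2 ⊢
          omega

lemma glue_nodup : ∀ (j : ℕ) (l : List V), l.Nodup →
    (∀ b m, j ≤ m → m < j + 3 * l.length → c b m ∉ l) →
    (∀ b m b' m', j ≤ m → m < j + 3 * l.length → j ≤ m' → m' < j + 3 * l.length →
      c b m = c b' m' → m = m') →
    (glue P c j l).Nodup
  | _, [], _, _, _ => by simp [glue]
  | _, [a], h, _, _ => by simpa [glue] using h
  | j, a :: b :: t, hnd, hS, hinj => by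
    have hlen : (a :: b :: t).length = t.length + 2 := by simp
    have hlen2 : (b :: t).length = t.length + 1 := by simp
    have hw : ∀ m, j ≤ m → m < j + 3 → m < j + 3 * (a :: b :: t).length := by
      intro m h1 h2; simp only [hlen]; omega
    have hIH : (glue P c (j+3) (b :: t)).Nodup := by
      apply glue_nodup (j+3) (b :: t) hnd.of_cons
      · intro b0 m h1 h2 hmem
        exact hS b0 m (by omega) (by simp only [hlen]; simp only [hlen2] at h2; omega)
          (by simp [hmem])
      · intro b0 m b0' m' h1 h2 h3 h4 heq
        simp only [hlen2] at h2 h4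
        exact hinj b0 m b0' m' (by omega) (by simp only [hlen]; omega) (by omega)
          (by simp only [hlen]; omega) heq
    -- connectors with small index are not in the tail glue
    have hcg : ∀ b0 m, j ≤ m → m < j + 3 → c b0 m ∉ glue P c (j+3) (b :: t) := by
      intro b0 m h1 h2 hmem
      rcases mem_glue (j+3) (b :: t) _ hmem with h' | ⟨b', m', hm1, hm2, hm3⟩
      · exact hS b0 m h1 (hw m h1 h2) (by simp [h'])
      · simp only [hlen2] at hm2
        have := hinj b0 m b' m' h1 (hw m h1 h2) (by omega) (by simp only [hlen]; omega) hm3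
        omega
    have hag : a ∉ glue P c (j+3) (b :: t) := by
      intro hmem
      rcases mem_glue (j+3) (b :: t) _ hmem with h' | ⟨b', m', hm1, hm2, hm3⟩
      · exact (List.nodup_cons.mp hnd).1 h'
      · simp only [hlen2] at hm2
        exact hS b' m' (by omega) (by simp only [hlen]; omega) (by simp [← hm3])
    have hbg : b ∈ glue P c (j+3) (b :: t) := mem_glue_of_mem _ _ _ (by simp)
    have hca : ∀ b0 m, j ≤ m → m < j + 3 → c b0 m ≠ a := by
      intro b0 m h1 h2 heq
      exact hS b0 m h1 (hw m h1 h2) (by simp [heq])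
    have hcc : ∀ b0 m b0' m', j ≤ m → m < j + 3 → j ≤ m' → m' < j + 3 → m ≠ m' →
        c b0 m ≠ c b0' m' := by
      intro b0 m b0' m' h1 h2 h3 h4 hne heq
      exact hne (hinj b0 m b0' m' h1 (hw m h1 h2) h3 (hw m' h3 h4) heq)
    rw [glue]
    split
    · simp only [List.nodup_cons, List.mem_cons, not_or]
      refine ⟨⟨?_, ?_, ?_, ?_⟩, ⟨?_, ?_, ?_⟩, ⟨?_, ?_⟩, ?_, hIH⟩
      · exact fun h => hca _ j le_rfl (by omega) h.symm
      · exact fun h => hca _ (j+1) (by omega) (by omega) h.symm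
      · exact fun h => hca _ (j+2) (by omega) (by omega) h.symm
      · exact hag
      · exact hcc _ j _ (j+1) le_rfl (by omega) (by omega) (by omega) (by omega)
      · exact hcc _ j _ (j+2) le_rfl (by omega) (by omega) (by omega) (by omega)
      · exact hcg _ j le_rfl (by omega)
      · exact hcc _ (j+1) _ (j+2) (by omega) (by omega) (by omega) (by omega) (by omega)
      · exact hcg _ (j+1) (by omega) (by omega)
      · exact hcg _ (j+2) (by omega) (by omega)
    · simp only [List.nodup_cons, List.mem_cons, not_or]
      refine ⟨⟨?_, ?_⟩, ?_, hIH⟩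
      · exact fun h => hca _ j le_rfl (by omega) h.symm
      · exact hag
      · exact hcg _ j le_rfl (by omega)

lemma tri_tail {x : V} {l : List V} (h : Tri P (x :: l)) : Tri P l := by
  match l with
  | [] => trivial
  | [a] => trivial
  | a :: b :: t => exact h.2

lemma glue_tri : ∀ (j : ℕ) (a : V) (t : List V)
    (hP : ∀ b m, j ≤ m → m < j + 3 * (a :: t).length → P (c b m) = b)
    (x : V), P x = P a → Tri P (x :: glue P c j (a :: t))
  | _, _, [], _, _, _ => trivial
  | j, a, b :: t', hP, x, hx => by
    have hlen : (a :: b :: t').length = t'.length + 2 := by simp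
    obtain ⟨r, hr⟩ := glue_shape (P := P) (c := c) (j+3) b t'
    have hPj : P (c (!P a) j) = !P a := hP _ j le_rfl (by simp only [hlen]; omega)
    have hPj1 : P (c (!P a) (j+1)) = !P a := hP _ (j+1) (by omega) (by simp only [hlen]; omega)
    have hPj2 : P (c (P a) (j+2)) = P a := hP _ (j+2) (by omega) (by simp only [hlen]; omega)
    have hP' : ∀ b0 m, j+3 ≤ m → m < (j+3) + 3 * (b :: t').length → P (c b0 m) = b0 := by
      intro b0 m h1 h2
      exact hP b0 m (by omega) (by simp only [hlen]; simp only [List.length_cons] at h2; omega)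
    rw [glue]
    split
    · rename_i hpar
      have hIH : Tri P (c (P a) (j+2) :: glue P c (j+3) (b :: t')) :=
        glue_tri (j+3) b t' hP' _ (by rw [hPj2, hpar])
      rw [hr] at hIH ⊢
      exact ⟨by simp [hx, hPj], by simp [hPj1], by simp [hPj, hPj2],
        ⟨by simp [hPj1, ← hpar], hIH⟩⟩
    · rename_i hpar
      have hIH : Tri P (c (!P a) j :: glue P c (j+3) (b :: t')) :=
        glue_tri (j+3) b t' hP' _ (by
          rw [hPj]
          cases hA : P a <;> cases hB : P b <;> simp_all)
      rw [hr] at hIH ⊢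
      exact ⟨by simp [hx, hPj], ⟨hpar, hIH⟩⟩

lemma glue_chain (Cs : Set V) : ∀ (j : ℕ) (l : List V)
    (hCs : ∀ b m, j ≤ m → m < j + 3 * l.length → c b m ∈ Cs),
    List.Chain' (fun x y => x ∈ Cs ∨ y ∈ Cs) (glue P c j l)
  | _, [], _ => by simp [glue, List.Chain']
  | _, [a], _ => by simp [glue, List.Chain']
  | j, a :: b :: t, hCs => by
    have hlen : (a :: b :: t).length = t.length + 2 := by simp
    obtain ⟨r, hr⟩ := glue_shape (P := P) (c := c) (j+3) b t
    have hCs' : ∀ b0 m, j+3 ≤ m → m < (j+3) + 3 * (b :: t).length → c b0 m ∈ Cs := by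
      intro b0 m h1 h2
      exact hCs b0 m (by omega) (by simp only [hlen]; simp only [List.length_cons] at h2; omega)
    have hIH := glue_chain Cs (j+3) (b :: t) hCs'
    have h0 : c (!P a) j ∈ Cs := hCs _ j le_rfl (by simp only [hlen]; omega)
    have h1 : c (!P a) (j+1) ∈ Cs := hCs _ (j+1) (by omega) (by simp only [hlen]; omega)
    have h2 : c (P a) (j+2) ∈ Cs := hCs _ (j+2) (by omega) (by simp only [hlen]; omega)
    rw [glue]
    split
    · rw [hr] at hIH ⊢
      exact List.IsChain.cons_cons (Or.inr h0) (List.IsChain.cons_cons (Or.inr h1)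
        (List.IsChain.cons_cons (Or.inr h2) (List.IsChain.cons_cons (Or.inl h2) hIH)))
    · rw [hr] at hIH ⊢
      exact List.IsChain.cons_cons (Or.inr h0) (List.IsChain.cons_cons (Or.inl h0) hIH)

lemma block_inj {K a b x y : ℕ} (hK : 0 < K) (hx : x < K) (hy : y < K)
    (h : K*a+x = K*b+y) : a = b ∧ x = y := by
  have ha : a = b := by
    rcases lt_trichotomy a b with hab | hab | hab
    · exfalso
      have : K*(a+1) ≤ K*b := Nat.mul_le_mul_left K hab
      have : K*a + x < K*a + K := by omega
      have hKa : K*a + K = K*(a+1) := by ring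
      omega
    · exact hab
    · exfalso
      have : K*(b+1) ≤ K*a := Nat.mul_le_mul_left K hab
      have hKb : K*b + K = K*(b+1) := by ring
      omega
  refine ⟨ha, by subst ha; omega⟩

/-- The parity of a vertex of `Fin n`. -/
def Pbty {n : ℕ} (v : Fin n) : Bool := decide (v.val % 2 = 0)

/-- The 2-coloring of `K_n`: an edge is colored by whether its endpoints have equal parity. -/
def col (n : ℕ) : Sym2 (Fin n) → Fin 2 :=
  Sym2.lift ⟨fun u v => if Pbty u = Pbty v then 0 else 1, by
    intro a b
    simp only [eq_comm]⟩

lemma col_proper {n : ℕ} (u v w : Fin n) (h : Pbty v ≠ Pbty w) :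
    col n s(u,v) ≠ col n s(u,w) := by
  simp only [col, Sym2.lift_mk]
  cases h1 : Pbty u <;> cases h2 : Pbty v <;> cases h3 : Pbty w <;> simp_all (config := {decide := true})

lemma upper_bound_s9 {n k ℓ : ℕ} (hk : 3 ≤ k) (hl : 1 ≤ ℓ) (hn2 : 2*(3*ℓ*k + k) ≤ n) :
    ∃ c : Sym2 (Fin n) → Fin 2,
    ∀ S : Finset (Fin n), S.card = k →
      ∃ T : Fin ℓ → (⊤ : SimpleGraph (Fin n)).Subgraph,
        (∀ i, ((T i).coe.IsTree ∧ (S : Set (Fin n)) ⊆ (T i).verts) ∧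
          (∀ u v w, (T i).Adj u v → (T i).Adj u w → v ≠ w → c s(u,v) ≠ c s(u,w))) ∧
        (∀ i j, i ≠ j → (T i).edgeSet ∩ (T j).edgeSet = ∅ ∧
          (T i).verts ∩ (T j).verts = (S : Set (Fin n))) := by
  classical
  obtain ⟨M, hMdef⟩ : ∃ M, M = 3*ℓ*k := ⟨_, rfl⟩
  rw [← hMdef] at hn2
  have hM0 : 0 < M := by
    rw [hMdef]
    exact Nat.mul_pos (Nat.mul_pos (by norm_num) hl) (by omega)
  refine ⟨col n, ?_⟩
  intro S hS
  -- pools of fresh vertices of each parity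
  have hbig : ∀ b : Bool, M ≤ ((Finset.univ.filter (fun v => Pbty v = b)) \ S).card := by
    intro b
    have h1 : M + k ≤ (Finset.univ.filter (fun v : Fin n => Pbty v = b)).card := by
      set r : ℕ := if b then 0 else 1 with hr
      have hrlt : r < 2 := by cases b <;> simp [hr]
      have hf : ∀ i : Fin (M + k), 2 * i.val + r < n := by
        intro i
        have := i.isLt
        omega
      have hinj : (Finset.univ : Finset (Fin (M+k))).card ≤
          (Finset.univ.filter (fun v : Fin n => Pbty v = b)).card := by
        apply Finset.card_le_card_of_injOn
          (fun i : Fin (M+k) => (⟨2 * i.val + r, hf i⟩ : Fin n))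
        · intro a _
          simp only [Finset.mem_filter, Finset.mem_univ, true_and, Pbty]
          cases b <;> simp [hr] <;> omega
        · intro a _ b' _ hab
          have : 2 * a.val + r = 2 * b'.val + r := congrArg Fin.val hab
          exact Fin.ext (by omega)
      simpa using hinj
    have h2 := Finset.card_le_card_sdiff_add_card
      (s := Finset.univ.filter (fun v : Fin n => Pbty v = b)) (t := S)
    omega
  have hpool := fun b : Bool => Finset.exists_subset_card_eq (hbig b)
  choose C hCsub hCcard using hpool
  have hCP : ∀ b x, x ∈ C b → Pbty x = b := by
    intro b x hx
    have := hCsub b hx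
    simp only [Finset.mem_sdiff, Finset.mem_filter] at this
    exact this.1.2
  have hCS : ∀ b x, x ∈ C b → x ∉ S := by
    intro b x hx
    have := hCsub b hx
    simp only [Finset.mem_sdiff] at this
    exact this.2
  set con : Bool → ℕ → Fin n := fun b m =>
    (C b).orderEmbOfFin (hCcard b) ⟨m % M, Nat.mod_lt m hM0⟩ with hcon
  have hconC : ∀ b m, con b m ∈ C b := by
    intro b m
    exact Finset.orderEmbOfFin_mem _ _ _
  have hconP : ∀ b m, Pbty (con b m) = b := fun b m => hCP b _ (hconC b m)
  have hconS : ∀ b m, con b m ∉ S := fun b m => hCS b _ (hconC b m)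
  have hconInj : ∀ b m b' m', m < M → m' < M → con b m = con b' m' → b = b' ∧ m = m' := by
    intro b m b' m' hm hm' heq
    have hbb : b = b' := by
      have h1 := hconP b m
      have h2 := hconP b' m'
      rw [heq] at h1
      rw [h1] at h2
      exact h2.symm ▸ rfl
    subst hbb
    refine ⟨rfl, ?_⟩
    have h2 := (Finset.orderEmbOfFin (C b) (hCcard b)).injective heq
    have h3 : m % M = m' % M := Fin.mk.inj_iff.mp h2
    rwa [Nat.mod_eq_of_lt hm, Nat.mod_eq_of_lt hm'] at h3
  -- the S vertices in order
  set sl := S.sort (· ≤ ·) with hsl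
  have hslnd : sl.Nodup := S.sort_nodup _
  have hsllen : sl.length = k := by rw [hsl, Finset.length_sort, hS]
  have hslmem : ∀ x, x ∈ sl ↔ x ∈ S := fun x => Finset.mem_sort _
  have hslne : sl ≠ [] := by
    intro h
    rw [h] at hsllen
    simp at hsllen
    omega
  have hwin : ∀ (i : Fin ℓ) (m : ℕ), m < 3*k → 3*k*i.val + m < M := by
    intro i m hm
    have h1 : 3*k*(i.val+1) ≤ 3*k*ℓ := Nat.mul_le_mul_left _ i.isLt
    have h2 : 3*k*ℓ = M := by rw [hMdef]; ring
    have h3 : 3*k*(i.val+1) = 3*k*i.val + 3*k := by ring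
    omega
  set coni : Fin ℓ → Bool → ℕ → Fin n := fun i b m => con b (3*k*i.val + m) with hconi
  set L : Fin ℓ → List (Fin n) := fun i => glue Pbty (coni i) 0 sl with hL
  have hLnd : ∀ i, (L i).Nodup := by
    intro i
    apply glue_nodup 0 sl hslnd
    · intro b m _ hm hmem
      exact hconS b _ ((hslmem _).mp hmem)
    · intro b m b' m' _ hm _ hm' heq
      have hm3 : m < 3*k := by rw [hsllen] at hm; omega
      have hm3' : m' < 3*k := by rw [hsllen] at hm'; omega
      have := hconInj b _ b' _ (hwin i m hm3) (hwin i m' hm3') heq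
      omega
  have hLne : ∀ i, L i ≠ [] := fun i => glue_ne_nil 0 hslne
  have hLchain : ∀ i, (L i).Chain' Ne := fun i => List.Pairwise.isChain (hLnd i)
  set T : Fin ℓ → (⊤ : SimpleGraph (Fin n)).Subgraph :=
    fun i => (wfl (L i) (hLchain i) (hLne i)).toSubgraph with hT
  have hverts : ∀ i x, x ∈ (T i).verts ↔ x ∈ L i := by
    intro i x
    rw [hT]
    rw [SimpleGraph.Walk.mem_verts_toSubgraph, wfl_support]
  have hmemL : ∀ (i : Fin ℓ) x, x ∈ L i → x ∈ S ∨ ∃ b m, m < 3*k ∧ x = coni i b m := by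
    intro i x hx
    rcases mem_glue 0 sl x hx with h | ⟨b, m, _, h2, h3⟩
    · exact Or.inl ((hslmem x).mp h)
    · exact Or.inr ⟨b, m, by rw [hsllen] at h2; omega, h3⟩
  have key : ∀ (i j : Fin ℓ), i ≠ j → ∀ (b : Bool) (m : ℕ), m < 3*k →
      coni i b m ∈ (T j).verts → False := by
    intro i j hij b m hm hmem
    rw [hverts] at hmem
    rcases hmemL j _ hmem with hzS | ⟨b', m', hm', heq⟩
    · exact hconS b _ hzS
    · obtain ⟨hbb, hmm⟩ := hconInj b _ b' _ (hwin i m hm) (hwin j m' hm') heq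
      have hk0 : 0 < 3*k := by omega
      obtain ⟨hii, -⟩ := block_inj hk0 hm hm' hmm
      exact hij (Fin.ext hii)
  have htri : ∀ i, Tri Pbty (L i) := by
    intro i
    obtain ⟨a0, t0, hsl0⟩ := List.exists_cons_of_ne_nil hslne
    have h := glue_tri (P := Pbty) (c := coni i) 0 a0 t0
      (fun b m _ _ => hconP b _) a0 rfl
    rw [hL]
    simp only
    rw [hsl0]
    exact tri_tail h
  have hCs : ∀ i, List.Chain' (fun x y =>
      (x ∈ {z | ∃ b m, m < 3*k ∧ z = coni i b m} ∨ y ∈ {z | ∃ b m, m < 3*k ∧ z = coni i b m}))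
      (L i) := by
    intro i
    apply glue_chain _ 0 sl
    intro b m _ hm
    exact ⟨b, m, by rw [hsllen] at hm; omega, rfl⟩
  have hadjCs : ∀ (i : Fin ℓ) x y, (T i).Adj x y →
      ((∃ b m, m < 3*k ∧ x = coni i b m) ∨ (∃ b m, m < 3*k ∧ y = coni i b m)) := by
    intro i x y hadj
    rw [hT] at hadj
    rw [wfl_adj_iff] at hadj
    obtain ⟨m, hm, hor⟩ := hadj
    have hm0 : m < (L i).length := by omega
    have hcg := (List.isChain_iff_getElem.mp (hCs i)) m (by omega)
    simp only [List.getElem?_eq_getElem hm0, List.getElem?_eq_getElem hm,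
      Option.some.injEq] at hor
    rcases hor with ⟨h1, h2⟩ | ⟨h1, h2⟩
    · rw [h1, h2] at hcg
      exact hcg
    · rw [h1, h2] at hcg
      exact hcg.symm
  refine ⟨T, fun i => ⟨⟨?_, ?_⟩, ?_⟩, fun i j hij => ⟨?_, ?_⟩⟩
  · exact wfl_isTree (L i) (hLnd i) _ _
  · intro x hx
    rw [hverts]
    exact mem_glue_of_mem 0 sl x ((hslmem x).mpr hx)
  · exact wfl_proper Pbty (col n) col_proper (L i) (hLnd i) (htri i) _ _
  · rw [Set.eq_empty_iff_forall_notMem]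
    intro e he
    induction e using Sym2.ind with
    | _ x y =>
      obtain ⟨he1, he2⟩ := he
      rw [SimpleGraph.Subgraph.mem_edgeSet] at he1 he2
      rcases hadjCs i x y he1 with ⟨b, m, hm, rfl⟩ | ⟨b, m, hm, rfl⟩
      · exact key i j hij b m hm he2.fst_mem
      · exact key i j hij b m hm he2.snd_mem
  · ext x
    simp only [Set.mem_inter_iff, Finset.coe_sort_coe, Finset.mem_coe]
    constructor
    · rintro ⟨hxi, hxj⟩
      rcases hmemL i x ((hverts i x).mp hxi) with hS' | ⟨b, m, hm, rfl⟩
      · exact hS'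
      · exact absurd hxj (fun h => key i j hij b m hm h)
    · intro hxS
      constructor <;> rw [hverts] <;> exact mem_glue_of_mem 0 sl x ((hslmem x).mpr hxS)

lemma arith_bounds {k ℓ n : ℕ} (hk : 3 ≤ k) (hl : 1 ≤ ℓ)
    (hn : 2 * (((ℓ * (k - 1) + k : ℝ)) ^ 4 - 1) / ((ℓ + 1) * (k - 1)) - 1 ≤ (n : ℝ)) :
    k ≤ n ∧ 2*(3*ℓ*k + k) ≤ n := by
  have hK : (3:ℝ) ≤ (k:ℝ) := by exact_mod_cast hk
  have hL : (1:ℝ) ≤ (ℓ:ℝ) := by exact_mod_cast hl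
  set K : ℝ := (k:ℝ) with hKdef
  set Lr : ℝ := (ℓ:ℝ) with hLdef
  set D : ℝ := Lr * (K - 1) + K with hDdef
  have hDK : K ≤ D := by
    have : (0:ℝ) ≤ Lr * (K - 1) := mul_nonneg (by linarith) (by linarith)
    rw [hDdef]; linarith
  have hD5 : (5:ℝ) ≤ D := by
    have : (2:ℝ) * Lr ≤ Lr * (K-1) := by nlinarith
    rw [hDdef]; nlinarith
  have hD2L : 2*Lr + 3 ≤ D := by
    have : (0:ℝ) ≤ Lr * (K - 3) := mul_nonneg (by linarith) (by linarith)
    rw [hDdef]; nlinarith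
  have hpos : (0:ℝ) < D - 1 := by linarith
  have hden : ((Lr + 1) * (K - 1)) = D - 1 := by rw [hDdef]; ring
  have hfrac : 2 * (D ^ 4 - 1) / (D - 1) = 2*(D^3 + D^2 + D + 1) := by
    rw [div_eq_iff (ne_of_gt hpos)]; ring
  rw [hden, hfrac] at hn
  have hn' : 2*D^3 + 2*D^2 + 2*D + 1 ≤ (n:ℝ) := by linarith
  have hDsq : (2*Lr+3)*K ≤ D^2 := by nlinarith
  have hD3 : 5*((2*Lr+3)*K) ≤ D^3 := by nlinarith
  have hLK : (0:ℝ) ≤ Lr * K := mul_nonneg (by linarith) (by linarith)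
  have t1 : (k:ℝ) ≤ (n:ℝ) := by nlinarith
  have t2 : ((2*(3*ℓ*k + k) : ℕ) : ℝ) ≤ (n:ℝ) := by
    push_cast
    nlinarith
  exact ⟨by exact_mod_cast t1, by exact_mod_cast t2⟩

lemma lower_bound_s9 {n k ℓ : ℕ} (hk : 3 ≤ k) (hl : 1 ≤ ℓ) (hkn : k ≤ n)
    (c : Sym2 (Fin n) → Fin 1)
    (hc : ∀ S : Finset (Fin n), S.card = k →
      ∃ T : Fin ℓ → (⊤ : SimpleGraph (Fin n)).Subgraph,
        (∀ i, ((T i).coe.IsTree ∧ (S : Set (Fin n)) ⊆ (T i).verts) ∧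
          (∀ u v w, (T i).Adj u v → (T i).Adj u w → v ≠ w → c s(u,v) ≠ c s(u,w))) ∧
        True) : False := by
  obtain ⟨S, hSsub, hScard⟩ := Finset.exists_subset_card_eq
    (by simpa using hkn : k ≤ (Finset.univ : Finset (Fin n)).card)
  obtain ⟨T, hT1⟩ := hc S hScard
  obtain ⟨⟨htree, hsub⟩, hprop⟩ := hT1.1 ⟨0, hl⟩
  set T0 := T ⟨0, hl⟩ with hT0
  have huniq : ∀ u v w : Fin n, T0.Adj u v → T0.Adj u w → v = w := by
    intro u v w h1 h2
    by_contra hne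
    exact hprop u v w h1 h2 hne (Subsingleton.elim _ _)
  obtain ⟨a, b, c', ha, hb, hc', hab, hac, hbc⟩ := Finset.two_lt_card_iff.mp
    (by omega : 2 < S.card)
  have hmem : ∀ x, x ∈ S → x ∈ T0.verts := fun x hx => hsub (Finset.mem_coe.mpr hx)
  have hadj : ∀ (X Y : T0.verts), X ≠ Y → T0.Adj X.val Y.val := by
    intro X Y hne
    obtain ⟨p, hp, -⟩ := htree.existsUnique_path X Y
    cases p with
    | nil => exact absurd rfl hne
    | cons h q =>
      cases q with
      | nil => exact (SimpleGraph.Subgraph.coe_adj T0 X Y) ▸ h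
      | @cons _ w2 _ h2 q2 =>
        exfalso
        rename_i w1
        have c1 : T0.Adj w1.val X.val :=
          (SimpleGraph.Subgraph.coe_adj T0 w1 X) ▸ h.symm
        have c2 : T0.Adj w1.val w2.val :=
          (SimpleGraph.Subgraph.coe_adj T0 w1 w2) ▸ h2
        have hXw2 : X = w2 := Subtype.ext (huniq w1.val X.val w2.val c1 c2)
        rw [SimpleGraph.Walk.cons_isPath_iff] at hp
        apply hp.2
        rw [SimpleGraph.Walk.support_cons]
        exact List.mem_cons_of_mem _ (hXw2 ▸ q2.start_mem_support)
  have h1 : T0.Adj a b := hadj ⟨a, hmem a ha⟩ ⟨b, hmem b hb⟩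
    (fun h => hab (congrArg Subtype.val h))
  have h2 : T0.Adj a c' := hadj ⟨a, hmem a ha⟩ ⟨c', hmem c' hc'⟩
    (fun h => hac (congrArg Subtype.val h))
  exact hbc (huniq a b c' h1 h2)

end PXProof

/-- For `k ≥ 3`, `ℓ ≥ 1` and every
`n ≥ 2((ℓ(k−1)+k)^4 − 1)/((ℓ+1)(k−1)) − 1`, we have `px_{k,ℓ}(K_n) = 2`. -/
theorem px_k_ell_complete_explicit (k ℓ n : ℕ) (hk : 3 ≤ k) (hl : 1 ≤ ℓ)
    (hn : 2 * (((ℓ * (k - 1) + k : ℝ)) ^ 4 - 1) / ((ℓ + 1) * (k - 1)) - 1 ≤ (n : ℝ)) :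
    pxEq2 (⊤ : SimpleGraph (Fin n)) k ℓ := by
  obtain ⟨hkn, hn2⟩ := arith_bounds hk hl hn
  constructor
  · obtain ⟨c, hc⟩ := upper_bound_s9 hk hl hn2
    exact ⟨c, hc⟩
  · rintro ⟨c, hc⟩
    apply lower_bound_s9 hk hl hkn c
    intro S hS
    obtain ⟨T, h1, h2⟩ := hc S hS
    exact ⟨T, h1, trivial⟩
end

section
/- Let H be a graph on n vertices with girth at least 5 and minimum degree at least ℓ(k−1)+k, where k ≥ 3 and ℓ ≥ 1. Color the edges of H red and the edges of its complement (in K_n) blue. Then for every set S of k vertices there exist ℓ internally disjoint paths, each containing all of S, in which consecutive edges alternate between red and blue (hence each path is properly colored). -/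
open SimpleGraph

lemma isAcyclic_of_consecutive {V : Type*} (G : SimpleGraph V) (g : V → ℕ)
    (hinj : Function.Injective g)
    (hadj : ∀ u v, G.Adj u v → g u + 1 = g v ∨ g v + 1 = g u) : G.IsAcyclic := by
  classical
  intro v c hc
  obtain ⟨M, hM, hmax⟩ := Finset.exists_max_image c.support.toFinset g
    ⟨v, by simp [Walk.start_mem_support]⟩
  rw [List.mem_toFinset] at hM
  have hmax' : ∀ w ∈ c.support, g w ≤ g M := fun w hw => hmax w (List.mem_toFinset.2 hw)
  set c' := c.rotate M hM with hc'def
  have hc' : c'.IsCycle := hc.rotate hM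
  have hsupp : ∀ w ∈ c'.support, g w ≤ g M := by
    intro w hw
    apply hmax'
    rw [Walk.mem_support_iff] at hw
    rcases hw with rfl | hw
    · exact hM
    · exact List.mem_of_mem_tail ((Walk.support_rotate c M hM).mem_iff.1 hw)
  have hlen : 3 ≤ c'.length := hc'.three_le_length
  clear_value c'
  cases c' with
  | nil => exact hc'.not_of_nil
  | cons hMx p =>
    rename_i x
    rw [Walk.cons_isCycle_iff] at hc'
    obtain ⟨hp, he⟩ := hc'
    have hxs : x ∈ (Walk.cons hMx p).support := by
      simp [Walk.support_cons, Walk.start_mem_support]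
    have hgx : g M = g x + 1 := by
      rcases hadj _ _ hMx with h1 | h1
      · have := hsupp x hxs; omega
      · omega
    have hMne : M ≠ x := fun hh => by rw [hh] at hgx; omega
    obtain ⟨y, hMy, q, hq⟩ := Walk.exists_eq_cons_of_ne hMne p.reverse
    have hys : y ∈ (Walk.cons hMx p).support := by
      have : y ∈ p.reverse.support := by
        rw [hq]; simp [Walk.support_cons, Walk.start_mem_support]
      rw [Walk.support_reverse, List.mem_reverse] at this
      simp [Walk.support_cons, this]
    have hgy : g M = g y + 1 := by
      rcases hadj _ _ hMy with h1 | h1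
      · have := hsupp y hys; omega
      · omega
    have hyx : y = x := hinj (by omega)
    apply he
    have : s(M, y) ∈ p.reverse.edges := by rw [hq]; simp [Walk.edges_cons]
    rw [Walk.edges_reverse, List.mem_reverse] at this
    rw [hyx] at this
    exact (Sym2.eq_swap (a := M) (b := x)) ▸ this

def walkOfFn {V : Type*} (G : SimpleGraph V) :
    (f : ℕ → V) → (m : ℕ) → (h : ∀ t < m, G.Adj (f t) (f (t + 1))) → G.Walk (f 0) (f m)
  | _, 0, _ => Walk.nil
  | f, (m + 1), h =>
    Walk.cons (h 0 (Nat.succ_pos m))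
      (walkOfFn G (fun t => f (t + 1)) m (fun t ht => h (t + 1) (by omega)))

lemma walkOfFn_support {V : Type*} (G : SimpleGraph V) (f : ℕ → V) (m : ℕ)
    (h : ∀ t < m, G.Adj (f t) (f (t + 1))) :
    (walkOfFn G f m h).support = (List.range (m + 1)).map f := by
  induction m generalizing f with
  | zero => simp [walkOfFn, List.range_succ]
  | succ m ih =>
    rw [walkOfFn, Walk.support_cons, ih]
    conv_rhs => rw [List.range_succ_eq_map]
    simp [List.map_map, Function.comp_def]

lemma walkOfFn_edges {V : Type*} (G : SimpleGraph V) (f : ℕ → V) (m : ℕ)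
    (h : ∀ t < m, G.Adj (f t) (f (t + 1))) :
    (walkOfFn G f m h).edges = (List.range m).map (fun t => s(f t, f (t + 1))) := by
  induction m generalizing f with
  | zero => simp [walkOfFn]
  | succ m ih =>
    rw [walkOfFn, Walk.edges_cons, ih]
    conv_rhs => rw [List.range_succ_eq_map]
    simp [List.map_map, Function.comp_def]

lemma walkOfFn_mem_verts {V : Type*} (G : SimpleGraph V) (f : ℕ → V) (m : ℕ)
    (h : ∀ t < m, G.Adj (f t) (f (t + 1))) {w : V} :
    w ∈ (walkOfFn G f m h).toSubgraph.verts ↔ ∃ t ≤ m, f t = w := by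
  rw [Walk.mem_verts_toSubgraph, walkOfFn_support]
  simp only [List.mem_map, List.mem_range]
  constructor
  · rintro ⟨t, ht, rfl⟩; exact ⟨t, by omega, rfl⟩
  · rintro ⟨t, ht, rfl⟩; exact ⟨t, by omega, rfl⟩

lemma walkOfFn_adj {V : Type*} (G : SimpleGraph V) (f : ℕ → V) (m : ℕ)
    (h : ∀ t < m, G.Adj (f t) (f (t + 1))) {u v : V} :
    (walkOfFn G f m h).toSubgraph.Adj u v ↔ ∃ t < m, s(f t, f (t + 1)) = s(u, v) := by
  rw [← SimpleGraph.Subgraph.mem_edgeSet, Walk.mem_edges_toSubgraph, walkOfFn_edges]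
  simp [eq_comm]

lemma no_c4 {V : Type*} {H : SimpleGraph V} (hg : (5 : ℕ∞) ≤ H.egirth)
    {a b x y : V} (hab : a ≠ b) (hxy : x ≠ y)
    (h1 : H.Adj a x) (h2 : H.Adj x b) (h3 : H.Adj b y) (h4 : H.Adj y a) : False := by
  have hxa : x ≠ a := fun h => by subst h; exact h1.ne rfl
  have hxb : x ≠ b := h2.ne
  have hby : b ≠ y := h3.ne
  have hya : y ≠ a := h4.ne
  set w : H.Walk a a := Walk.cons h1 (Walk.cons h2 (Walk.cons h3 (Walk.cons h4 Walk.nil))) with hw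
  have hcyc : w.IsCycle := by
    rw [hw, Walk.cons_isCycle_iff]
    constructor
    · rw [Walk.isPath_def]
      simp only [Walk.support_cons, Walk.support_nil]
      simp [List.nodup_cons, hxy, hxa, hxb, hby, hya, hab.symm, hab]
    · simp only [Walk.edges_cons, Walk.edges_nil, List.mem_cons, List.not_mem_nil, or_false]
      push_neg
      refine ⟨?_, ?_, ?_⟩ <;> intro hh <;> rw [Sym2.eq_iff] at hh <;>
        rcases hh with ⟨h5, h6⟩ | ⟨h5, h6⟩ <;> subst_vars <;> simp_all
  have hlen := SimpleGraph.le_egirth.mp hg a w hcyc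
  rw [hw] at hlen
  simp only [Walk.length_cons, Walk.length_nil] at hlen
  norm_num at hlen

lemma common_le_one {V : Type*} [Finite V] {H : SimpleGraph V} (hg : (5 : ℕ∞) ≤ H.egirth)
    {a b : V} (hab : a ≠ b) : (H.neighborSet a ∩ H.neighborSet b).ncard ≤ 1 := by
  rw [Set.ncard_le_one_iff_eq]
  by_cases h : (H.neighborSet a ∩ H.neighborSet b) = ∅
  · exact Or.inl h
  · right
    obtain ⟨x, hx⟩ := Set.nonempty_iff_ne_empty.2 h
    refine ⟨x, Set.eq_singleton_iff_unique_mem.2 ⟨hx, fun y hy => ?_⟩⟩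
    by_contra hne
    exact no_c4 hg hab (Ne.symm hne) hx.1 hx.2.symm hy.2 hy.1.symm

lemma ncard_diff_lb {α : Type*} [Finite α] (A B : Set α) :
    A.ncard - B.ncard ≤ (A \ B).ncard := by
  have h1 : A ⊆ (A \ B) ∪ B := by
    intro x hx
    by_cases hb : x ∈ B
    · exact Or.inr hb
    · exact Or.inl ⟨hx, hb⟩
  have h2 : A.ncard ≤ ((A \ B) ∪ B).ncard := Set.ncard_le_ncard h1 (Set.toFinite _)
  have h3 := Set.ncard_union_le (A \ B) B
  omega


lemma greedy {n K ℓ : ℕ} (hK : 0 < K) (H : SimpleGraph (Fin n))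
    (hg : (5 : ℕ∞) ≤ H.egirth) (S : Finset (Fin n)) (v : Fin (K + 1) → Fin n)
    (hvinj : Function.Injective v) (hvS : ∀ j, v j ∈ S) (hcard : S.card = K + 1)
    (hδ : ∀ w, ℓ * K + K + 1 ≤ (H.neighborSet w).ncard) :
    ∀ m, m ≤ ℓ * K → ∃ x : Fin m → Fin n, Function.Injective x ∧
      ∀ t : Fin m,
        x t ∈ H.neighborSet (v (⟨t.val % K, Nat.mod_lt _ hK⟩ : Fin K).castSucc) ∧
        x t ∉ (S : Set (Fin n)) ∧
        x t ∉ H.neighborSet (v (⟨t.val % K, Nat.mod_lt _ hK⟩ : Fin K).succ) := by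
  intro m
  induction m with
  | zero => exact fun _ => ⟨Fin.elim0, fun t => t.elim0, fun t => t.elim0⟩
  | succ m ih =>
    intro hm
    obtain ⟨x, hxinj, hxprop⟩ := ih (by omega)
    set jc : Fin K := ⟨m % K, Nat.mod_lt _ hK⟩ with hjc
    set a := v jc.castSucc with ha
    set b := v jc.succ with hb
    have hab : a ≠ b := by
      intro h
      have := hvinj h
      have h1 : (jc.castSucc : Fin (K+1)).val = jc.succ.val := congrArg Fin.val this
      simp [Fin.coe_castSucc, Fin.val_succ] at h1
    have hc1 : H.neighborSet a \ (↑S : Set (Fin n)) = H.neighborSet a \ ((↑S : Set (Fin n)) \ {a}) := by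
      ext w
      simp only [Set.mem_diff, Set.mem_singleton_iff]
      constructor
      · rintro ⟨hw, hws⟩; exact ⟨hw, fun hh => hws hh.1⟩
      · rintro ⟨hw, hws⟩
        refine ⟨hw, fun hh => hws ⟨hh, fun he => ?_⟩⟩
        subst he; exact (H.irrefl hw)
    have hcS : ((↑S : Set (Fin n)) \ {a}).ncard = K := by
      rw [Set.ncard_diff_singleton_of_mem (by exact_mod_cast hvS jc.castSucc)]
      rw [Set.ncard_coe_finset, hcard]
      omega
    have hNa := hδ a
    have h1 : ℓ * K + 1 ≤ (H.neighborSet a \ (↑S : Set (Fin n))).ncard := by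
      rw [hc1]
      have := ncard_diff_lb (H.neighborSet a) ((↑S : Set (Fin n)) \ {a})
      omega
    have h2 : ℓ * K ≤ ((H.neighborSet a \ (↑S : Set (Fin n))) \ H.neighborSet b).ncard := by
      have hsub : (H.neighborSet a \ (↑S : Set (Fin n))) \ (H.neighborSet a ∩ H.neighborSet b)
          ⊆ (H.neighborSet a \ (↑S : Set (Fin n))) \ H.neighborSet b := by
        rintro w ⟨⟨hw1, hw2⟩, hw3⟩
        exact ⟨⟨hw1, hw2⟩, fun hh => hw3 ⟨hw1, hh⟩⟩
      have hle := Set.ncard_le_ncard hsub (Set.toFinite _)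
      have hdl := ncard_diff_lb (H.neighborSet a \ (↑S : Set (Fin n))) (H.neighborSet a ∩ H.neighborSet b)
      have hcom := common_le_one hg hab
      omega
    have h3 : (((H.neighborSet a \ (↑S : Set (Fin n))) \ H.neighborSet b) \ Set.range x).Nonempty := by
      apply Set.nonempty_of_ncard_ne_zero
      have hdl := ncard_diff_lb ((H.neighborSet a \ (↑S : Set (Fin n))) \ H.neighborSet b)
        (Set.range x)
      have hr : (Set.range x).ncard ≤ m := by
        rw [← Set.image_univ]
        have h5 := Set.ncard_image_le (f := x) (s := (Set.univ : Set (Fin m))) (Set.toFinite _)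
        rw [Set.ncard_univ] at h5
        simpa using h5
      omega
    obtain ⟨d, hd⟩ := h3
    have hd1 : d ∈ H.neighborSet a := hd.1.1.1
    have hdS : d ∉ (↑S : Set (Fin n)) := hd.1.1.2
    have hdb : d ∉ H.neighborSet b := hd.1.2
    have hd3 : d ∉ Set.range x := hd.2
    refine ⟨fun t => if h : t.val < m then x ⟨t.val, h⟩ else d, ?_, ?_⟩
    · intro s t hst
      by_cases hs : s.val < m <;> by_cases ht : t.val < m <;> simp [hs, ht] at hst
      · have h6 := congrArg Fin.val (hxinj hst); simp at h6; exact Fin.ext h6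
      · exact absurd (Set.mem_range.2 ⟨_, hst⟩) hd3
      · exact absurd (Set.mem_range.2 ⟨_, hst.symm⟩) hd3
      · apply Fin.ext; omega
    · intro t
      by_cases ht : t.val < m
      · have := hxprop ⟨t.val, ht⟩
        simpa [ht] using this
      · have htm : t.val = m := by omega
        simp only [ht, dif_neg, not_false_iff]
        rw [show (⟨t.val % K, Nat.mod_lt _ hK⟩ : Fin K) = jc by apply Fin.ext; simp [htm, hjc]]
        exact ⟨hd1, hdS, hdb⟩
open scoped Classical in
lemma exists_trees {n K ℓ : ℕ} (hK : 2 ≤ K) (H : SimpleGraph (Fin n))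
    (S : Finset (Fin n)) (v : Fin (K + 1) → Fin n) (hvinj : Function.Injective v)
    (hvrange : (S : Set (Fin n)) = Set.range v)
    (xf : Fin ℓ → Fin K → Fin n)
    (hxinj : ∀ i j i' j', xf i j = xf i' j' → i = i' ∧ j = j')
    (hx1 : ∀ i j, xf i j ∈ H.neighborSet (v j.castSucc))
    (hx2 : ∀ i j, xf i j ∉ (S : Set (Fin n)))
    (hx3 : ∀ i j, xf i j ∉ H.neighborSet (v j.succ)) :
    ∃ T : Fin ℓ → (⊤ : SimpleGraph (Fin n)).Subgraph,
      (∀ i, IsSTree (⊤ : SimpleGraph (Fin n)) (S : Set (Fin n)) (T i) ∧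
        ProperSubgraph (fun e => if e ∈ H.edgeSet then (0 : Fin 2) else 1) (T i)) ∧
      InternallyDisjoint (S : Set (Fin n)) T := by
  have hvS : ∀ j, v j ∈ (S : Set (Fin n)) := fun j => hvrange ▸ Set.mem_range_self j
  -- the vertex sequence of the i-th path
  set F : Fin ℓ → ℕ → Fin n := fun i t =>
    if h : t < 2 * K then
      (if h2 : t % 2 = 0 then v ⟨t / 2, by omega⟩ else xf i ⟨t / 2, by omega⟩)
    else v (Fin.last K) with hF
  have hFeven : ∀ i t (ht : t ≤ 2 * K) (h2 : t % 2 = 0), F i t = v ⟨t / 2, by omega⟩ := by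
    intro i t ht h2
    rcases Nat.lt_or_ge t (2 * K) with h | h
    · rw [hF]; simp only [dif_pos h, dif_pos h2]
    · have ht2 : t = 2 * K := by omega
      rw [hF]; simp only [dif_neg (by omega : ¬ t < 2 * K)]
      congr 1
      apply Fin.ext
      simp [ht2, Fin.last]
  have hFodd : ∀ i t (ht : t < 2 * K) (h2 : t % 2 = 1), F i t = xf i ⟨t / 2, by omega⟩ := by
    intro i t ht h2
    rw [hF]; simp only [dif_pos ht]
    rw [dif_neg (by omega)]
  have hFS : ∀ i t, t ≤ 2 * K → t % 2 = 0 → F i t ∈ (S : Set (Fin n)) := by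
    intro i t ht h2; rw [hFeven i t ht h2]; exact hvS _
  have hFnS : ∀ i t, t < 2 * K → t % 2 = 1 → F i t ∉ (S : Set (Fin n)) := by
    intro i t ht h2; rw [hFodd i t ht h2]; exact hx2 _ _
  have Finj : ∀ i s t, s ≤ 2 * K → t ≤ 2 * K → F i s = F i t → s = t := by
    intro i s t hs ht heq
    rcases Nat.lt_or_ge s (2*K) with hs' | hs' <;> rcases Nat.lt_or_ge t (2*K) with ht' | ht'
    all_goals {
      have hsp := Nat.mod_two_eq_zero_or_one s
      have htp := Nat.mod_two_eq_zero_or_one t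
      rcases hsp with hsp | hsp <;> rcases htp with htp | htp
      · rw [hFeven i s hs hsp, hFeven i t ht htp] at heq
        have := hvinj heq
        have h6 := congrArg Fin.val this
        simp only at h6
        omega
      · rw [hFeven i s hs hsp] at heq
        rw [hFodd i t (by omega) htp] at heq
        exact absurd (heq ▸ hvS _) (hx2 _ _)
      · rw [hFodd i s (by omega) hsp, hFeven i t ht htp] at heq
        exact absurd (heq.symm ▸ hvS _) (hx2 _ _)
      · rw [hFodd i s (by omega) hsp, hFodd i t (by omega) htp] at heq
        have := (hxinj _ _ _ _ heq).2
        have h6 := congrArg Fin.val this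
        simp only at h6
        omega }
  have hadjF : ∀ i, ∀ t < 2 * K, (⊤ : SimpleGraph (Fin n)).Adj (F i t) (F i (t + 1)) := by
    intro i t ht
    rw [top_adj]
    intro heq
    have := Finj i t (t+1) (by omega) (by omega) heq
    omega
  set W : (i : Fin ℓ) → (⊤ : SimpleGraph (Fin n)).Walk (F i 0) (F i (2 * K)) :=
    fun i => walkOfFn ⊤ (F i) (2 * K) (hadjF i) with hW
  have hmem : ∀ (i : Fin ℓ) w, w ∈ (W i).toSubgraph.verts ↔ ∃ t ≤ 2 * K, F i t = w :=
    fun i w => walkOfFn_mem_verts ⊤ (F i) (2 * K) (hadjF i)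
  have hadj' : ∀ (i : Fin ℓ) u w, (W i).toSubgraph.Adj u w ↔
      ∃ t < 2 * K, s(F i t, F i (t + 1)) = s(u, w) :=
    fun i u w => walkOfFn_adj ⊤ (F i) (2 * K) (hadjF i)
  have hSsub : ∀ i : Fin ℓ, (S : Set (Fin n)) ⊆ (W i).toSubgraph.verts := by
    intro i w hw
    rw [hmem]
    rw [hvrange] at hw
    obtain ⟨j, rfl⟩ := hw
    refine ⟨2 * j.val, by have := j.isLt; omega, ?_⟩
    rw [hFeven i (2 * j.val) (by have := j.isLt; omega) (by omega)]
    congr 1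
    apply Fin.ext
    simp
  have hvertS : ∀ (i : Fin ℓ) w, w ∈ (W i).toSubgraph.verts →
      w ∈ (S : Set (Fin n)) ∨ ∃ jz, xf i jz = w := by
    intro i w hw
    rw [hmem] at hw
    obtain ⟨t, ht, rfl⟩ := hw
    rcases Nat.mod_two_eq_zero_or_one t with h2 | h2
    · exact Or.inl (hFS i t ht h2)
    · have ht' : t < 2 * K := by omega
      right
      exact ⟨⟨t / 2, by omega⟩, (hFodd i t ht' h2).symm⟩
  have hcval : ∀ (i : Fin ℓ) t, t < 2 * K →
      ((if s(F i t, F i (t + 1)) ∈ H.edgeSet then (0 : Fin 2) else 1)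
        = if t % 2 = 0 then 0 else 1) := by
    intro i t ht
    rcases Nat.mod_two_eq_zero_or_one t with h2 | h2
    · have hA : H.Adj (F i t) (F i (t + 1)) := by
        rw [hFeven i t (by omega) h2, hFodd i (t + 1) (by omega) (by omega)]
        have := hx1 i ⟨(t + 1) / 2, by omega⟩
        rw [mem_neighborSet] at this
        convert this.symm.symm using 2
        apply Fin.ext
        simp [Fin.coe_castSucc]
        omega
      rw [if_pos (by rwa [mem_edgeSet]), if_pos h2]
    · have hA : ¬ H.Adj (F i t) (F i (t + 1)) := by
        rw [hFodd i t ht h2, hFeven i (t + 1) (by omega) (by omega)]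
        intro hadj
        apply hx3 i ⟨t / 2, by omega⟩
        have hveq : v (⟨(t + 1) / 2, by omega⟩ : Fin (K + 1)) = v ((⟨t / 2, by omega⟩ : Fin K).succ) := by
          congr 1
          apply Fin.ext
          simp [Fin.val_succ]
          omega
        rw [hveq] at hadj
        exact hadj.symm
      rw [if_neg (by rwa [mem_edgeSet]), if_neg (by omega)]
  have key : ∀ (i j : Fin ℓ), i ≠ j → ∀ jz, xf i jz ∉ (W j).toSubgraph.verts := by
    intro i j hij jz hmem'
    rcases hvertS j _ hmem' with hs | ⟨j', hj'⟩
    · exact hx2 i jz hs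
    · exact hij ((hxinj _ _ _ _ hj').1.symm)
  refine ⟨fun i => (W i).toSubgraph, ?_, ?_⟩
  · intro i
    refine ⟨⟨⟨((W i).toSubgraph_connected).coe, ?_⟩, hSsub i⟩, ?_⟩
    · -- acyclic
      have hgs : ∀ w : (W i).toSubgraph.verts,
          (Classical.choose ((hmem i w.1).mp w.2)) ≤ 2 * K ∧
            F i (Classical.choose ((hmem i w.1).mp w.2)) = w.1 :=
        fun w => Classical.choose_spec ((hmem i w.1).mp w.2)
      apply isAcyclic_of_consecutive _ (fun w => Classical.choose ((hmem i w.1).mp w.2))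
      · intro u w h
        have h' : Classical.choose ((hmem i u.1).mp u.2)
            = Classical.choose ((hmem i w.1).mp w.2) := h
        apply Subtype.ext
        rw [← (hgs u).2, ← (hgs w).2, h']
      · intro u w hadj
        rw [Subgraph.coe_adj] at hadj
        rw [hadj' i] at hadj
        obtain ⟨t, ht, heq⟩ := hadj
        show Classical.choose ((hmem i u.1).mp u.2) + 1 = Classical.choose ((hmem i w.1).mp w.2)
          ∨ Classical.choose ((hmem i w.1).mp w.2) + 1 = Classical.choose ((hmem i u.1).mp u.2)
        rw [Sym2.eq_iff] at heq
        rcases heq with ⟨ha, hb⟩ | ⟨ha, hb⟩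
        · left
          have h1 : Classical.choose ((hmem i u.1).mp u.2) = t :=
            Finj i _ _ (hgs u).1 (by omega) (by rw [(hgs u).2, ← ha])
          have h2 : Classical.choose ((hmem i w.1).mp w.2) = t + 1 :=
            Finj i _ _ (hgs w).1 (by omega) (by rw [(hgs w).2, ← hb])
          rw [h1, h2]
        · right
          have h1 : Classical.choose ((hmem i w.1).mp w.2) = t :=
            Finj i _ _ (hgs w).1 (by omega) (by rw [(hgs w).2, ← ha])
          have h2 : Classical.choose ((hmem i u.1).mp u.2) = t + 1 :=
            Finj i _ _ (hgs u).1 (by omega) (by rw [(hgs u).2, ← hb])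
          rw [h1, h2]
    · -- proper
      intro u w1 w2 h1 h2 hne
      obtain ⟨t1, ht1, he1⟩ := (hadj' i u w1).mp h1
      obtain ⟨t2, ht2, he2⟩ := (hadj' i u w2).mp h2
      have hgoal : (if s(u, w1) ∈ H.edgeSet then (0 : Fin 2) else 1)
          ≠ (if s(u, w2) ∈ H.edgeSet then (0 : Fin 2) else 1) → True := fun _ => trivial
      show (if s(u, w1) ∈ H.edgeSet then (0 : Fin 2) else 1)
          ≠ (if s(u, w2) ∈ H.edgeSet then (0 : Fin 2) else 1)
      rw [← he1, ← he2, hcval i t1 ht1, hcval i t2 ht2]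
      have hpar : t1 % 2 ≠ t2 % 2 := by
        rw [Sym2.eq_iff] at he1 he2
        rcases he1 with ⟨ha1, hb1⟩ | ⟨ha1, hb1⟩ <;> rcases he2 with ⟨ha2, hb2⟩ | ⟨ha2, hb2⟩
        · have : t1 = t2 := Finj i _ _ (by omega) (by omega) (by rw [ha1, ha2])
          exact absurd (by rw [← hb1, ← hb2, this]) hne
        · have : t1 = t2 + 1 := Finj i _ _ (by omega) (by omega) (by rw [ha1, hb2])
          omega
        · have : t2 = t1 + 1 := Finj i _ _ (by omega) (by omega) (by rw [ha2, hb1])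
          omega
        · have : t1 + 1 = t2 + 1 := Finj i _ _ (by omega) (by omega) (by rw [hb1, hb2])
          have ht12 : t1 = t2 := by omega
          exact absurd (by rw [← ha1, ← ha2, ht12]) hne
      rcases Nat.mod_two_eq_zero_or_one t1 with h | h <;>
        rcases Nat.mod_two_eq_zero_or_one t2 with h' | h' <;>
        simp only [h, h'] at hpar ⊢ <;> first | (exact absurd rfl hpar) | decide | simp
  · intro i j hij
    constructor
    · rw [Set.eq_empty_iff_forall_notMem]
      intro e he
      revert he
      induction e using Sym2.ind with
      | _ x y =>
        rintro ⟨he1, he2⟩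
        rw [Subgraph.mem_edgeSet] at he1 he2
        have hone : (∃ jz, xf i jz = x) ∨ (∃ jz, xf i jz = y) := by
          obtain ⟨t, ht, heq⟩ := (hadj' i x y).mp he1
          rcases Nat.mod_two_eq_zero_or_one t with h2 | h2
          · have hodd : F i (t + 1) = xf i ⟨(t + 1) / 2, by omega⟩ :=
              hFodd i (t + 1) (by omega) (by omega)
            rw [Sym2.eq_iff] at heq
            rcases heq with ⟨ha, hb⟩ | ⟨ha, hb⟩
            · exact Or.inr ⟨_, by rw [← hodd, hb]⟩
            · exact Or.inl ⟨_, by rw [← hodd, hb]⟩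
          · have hodd : F i t = xf i ⟨t / 2, by omega⟩ := hFodd i t ht h2
            rw [Sym2.eq_iff] at heq
            rcases heq with ⟨ha, hb⟩ | ⟨ha, hb⟩
            · exact Or.inl ⟨_, by rw [← hodd, ha]⟩
            · exact Or.inr ⟨_, by rw [← hodd, ha]⟩
        rcases hone with ⟨jz, hjz⟩ | ⟨jz, hjz⟩
        · exact key i j hij jz (hjz ▸ (W j).toSubgraph.edge_vert he2)
        · exact key i j hij jz (hjz ▸ (W j).toSubgraph.edge_vert he2.symm)
    · ext w
      constructor
      · rintro ⟨hwi, hwj⟩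
        rcases hvertS i w hwi with hs | ⟨jz, hjz⟩
        · exact hs
        · exact absurd (hjz ▸ hwj) (key i j hij jz)
      · intro hw
        exact ⟨hSsub i hw, hSsub j hw⟩

open scoped Classical in
/-- Let `H` be a graph on `n` vertices with girth at least `5` and minimum degree at least
`ℓ(k−1)+k`. Color the edges of `H` red (color `0`) and the remaining edges of `K_n` blue
(color `1`). Then every `k`-set `S` of vertices is connected by `ℓ` internally disjoint
properly colored `S`-trees (which, having two colors, are alternating paths). -/
theorem girth_five_coloring_proper_trees (n k ℓ : ℕ) (hk : 3 ≤ k) (hl : 1 ≤ ℓ)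
    (H : SimpleGraph (Fin n)) (hg : (5 : ℕ∞) ≤ H.egirth)
    (hδ : ∀ v, ℓ * (k - 1) + k ≤ (H.neighborSet v).ncard)
    (S : Finset (Fin n)) (hS : S.card = k) :
    ∃ T : Fin ℓ → (⊤ : SimpleGraph (Fin n)).Subgraph,
      (∀ i, IsSTree (⊤ : SimpleGraph (Fin n)) (S : Set (Fin n)) (T i) ∧
        ProperSubgraph (fun e => if e ∈ H.edgeSet then (0 : Fin 2) else 1) (T i)) ∧
      InternallyDisjoint (S : Set (Fin n)) T := by
  classical
  set K := k - 1 with hKdef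
  have hk1 : k = K + 1 := by omega
  have hK : 2 ≤ K := by omega
  have hK0 : 0 < K := by omega
  have hS' : S.card = K + 1 := by rw [hS, hk1]
  set v : Fin (K + 1) → Fin n := fun j => S.orderEmbOfFin hS' j with hv
  have hvinj : Function.Injective v := (S.orderEmbOfFin hS').injective
  have hvrange : (S : Set (Fin n)) = Set.range v := by
    rw [hv]
    exact (Finset.range_orderEmbOfFin S hS').symm
  have hvS : ∀ j, v j ∈ S := fun j => S.orderEmbOfFin_mem hS' j
  have hδ' : ∀ w, ℓ * K + K + 1 ≤ (H.neighborSet w).ncard := by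
    intro w
    have := hδ w
    have heq : ℓ * (k - 1) + k = ℓ * K + K + 1 := by rw [hKdef]; omega
    omega
  obtain ⟨x, hxinj0, hxprop⟩ := greedy hK0 H hg S v hvinj hvS hS' hδ' (ℓ * K) le_rfl
  have hb : ∀ (i : Fin ℓ) (j : Fin K), K * i.val + j.val < ℓ * K := by
    intro i j
    have h1 := i.isLt
    have h2 := j.isLt
    have h3 : K * (i.val + 1) ≤ K * ℓ := Nat.mul_le_mul_left K (by omega)
    have h4 : K * (i.val + 1) = K * i.val + K := by ring
    have h5 : K * ℓ = ℓ * K := by ring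
    omega
  set xf : Fin ℓ → Fin K → Fin n := fun i j => x ⟨K * i.val + j.val, hb i j⟩ with hxf
  have hmodeq : ∀ (i : Fin ℓ) (j : Fin K),
      (⟨(K * i.val + j.val) % K, Nat.mod_lt _ hK0⟩ : Fin K) = j := by
    intro i j
    apply Fin.ext
    simp [Nat.mul_add_mod, Nat.mod_eq_of_lt j.isLt]
  have hxinj : ∀ i j i' j', xf i j = xf i' j' → i = i' ∧ j = j' := by
    intro i j i' j' heq
    rw [hxf] at heq
    have h6 := congrArg Fin.val (hxinj0 heq)
    simp only at h6
    have h2 := j.isLt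
    have h2' := j'.isLt
    have hdiv : ∀ (a b : ℕ), b < K → (K * a + b) / K = a := by
      intro a b hbK
      rw [Nat.mul_add_div hK0, Nat.div_eq_of_lt hbK]
      omega
    have hi : i.val = i'.val := by
      have e1 := hdiv i.val j.val h2
      have e2 := hdiv i'.val j'.val h2'
      rw [← e1, ← e2, h6]
    constructor
    · exact Fin.ext hi
    · apply Fin.ext
      have : K * i.val = K * i'.val := by rw [hi]
      omega
  have hx1 : ∀ i j, xf i j ∈ H.neighborSet (v j.castSucc) := by
    intro i j
    have := (hxprop ⟨K * i.val + j.val, hb i j⟩).1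
    rwa [hmodeq i j] at this
  have hx2 : ∀ i j, xf i j ∉ (S : Set (Fin n)) := by
    intro i j
    exact (hxprop ⟨K * i.val + j.val, hb i j⟩).2.1
  have hx3 : ∀ i j, xf i j ∉ H.neighborSet (v j.succ) := by
    intro i j
    have := (hxprop ⟨K * i.val + j.val, hb i j⟩).2.2
    rwa [hmodeq i j] at this
  exact exists_trees hK H S v hvinj hvrange xf hxinj hx1 hx2 hx3
end
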